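/- arXiv:1306.1433 — 13 statements merged into one kernel-verified Lean document; each statement's English description precedes it below -/
import Mathlib

section
/- Let m be a positive integer and p a real number with 1/m < p ≤ 1. If X is a random variable distributed according to the binomial distribution B(m, p), then P[X ≥ m·p] > 1/4. -/
open Finset

noncomputable def Ft (m k : ℕ) (p : ℝ) : ℝ :=
  ∑ j ∈ Finset.Icc k m, (m.choose j : ℝ) * p ^ j * (1 - p) ^ (m - j)

-- Pascal recursion
theorem Ft_succ (m k : ℕ) (p : ℝ) :
    Ft (m + 1) (k + 1) p = (1 - p) * Ft m (k + 1) p + p * Ft m k p := by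
  have hmap : Finset.Icc (k + 1) (m + 1) = (Finset.Icc k m).map (addRightEmbedding 1) := by
    rw [Finset.map_add_right_Icc]
  rw [Ft, hmap, Finset.sum_map]
  simp only [addRightEmbedding_apply]
  have hsplit : ∀ i ∈ Finset.Icc k m,
      ((m + 1).choose (i + 1) : ℝ) * p ^ (i + 1) * (1 - p) ^ (m + 1 - (i + 1)) =
      (m.choose (i + 1) : ℝ) * p ^ (i + 1) * (1 - p) ^ (m - i)
        + p * ((m.choose i : ℝ) * p ^ i * (1 - p) ^ (m - i)) := by
    intro i hi
    rw [Nat.choose_succ_succ']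
    have : m + 1 - (i + 1) = m - i := by omega
    rw [this]
    push_cast
    ring
  rw [Finset.sum_congr rfl hsplit, Finset.sum_add_distrib]
  have goal2 : ∑ i ∈ Finset.Icc k m, p * ((m.choose i : ℝ) * p ^ i * (1 - p) ^ (m - i))
      = p * Ft m k p := by
    rw [Ft, Finset.mul_sum]
  have goal1 : ∑ i ∈ Finset.Icc k m, (m.choose (i+1) : ℝ) * p ^ (i+1) * (1 - p) ^ (m - i)
      = (1 - p) * Ft m (k + 1) p := by
    rw [Ft]
    have h1 : Finset.Icc (k + 1) m = (Finset.Ico k m).map (addRightEmbedding 1) := by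
      rw [Finset.map_add_right_Ico, Finset.Ico_add_one_right_eq_Icc]
    rw [h1, Finset.sum_map, Finset.mul_sum]
    rw [← Finset.sum_subset (Finset.Ico_subset_Icc_self (a := k) (b := m))]
    · apply Finset.sum_congr rfl
      intro i hi
      have hi' : i < m := (Finset.mem_Ico.mp hi).2
      simp only [addRightEmbedding_apply]
      have e1 : m - i = (m - (i + 1)) + 1 := by omega
      rw [e1]
      ring
    · intro i hi hni
      have : i = m := by
        simp only [Finset.mem_Icc] at hi
        simp only [Finset.mem_Ico] at hni
        omega
      subst this
      simp [Nat.choose_succ_self]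
  rw [goal1, goal2]

theorem nat_id1 (m j : ℕ) (hj : 1 ≤ j) (hm : 1 ≤ m) :
    m * (m-1).choose (j-1) = m.choose j * j := by
  obtain ⟨m, rfl⟩ := Nat.exists_eq_add_of_le hm
  obtain ⟨j, rfl⟩ := Nat.exists_eq_add_of_le hj
  simpa [Nat.add_comm] using Nat.add_one_mul_choose_eq m j

theorem nat_id2 (m j : ℕ) (hm : 1 ≤ m) :
    m.choose j * (m - j) = m * (m-1).choose j := by
  rw [← Nat.choose_succ_right_eq]
  obtain ⟨m, rfl⟩ := Nat.exists_eq_add_of_le hm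
  simpa [Nat.add_comm] using (Nat.add_one_mul_choose_eq m j).symm

theorem Ft_hasDerivAt (m k : ℕ) (hk : 1 ≤ k) (hkm : k ≤ m) (p : ℝ) :
    HasDerivAt (fun x => Ft m k x)
      ((m : ℝ) * ((m-1).choose (k-1) : ℝ) * p ^ (k-1) * (1-p) ^ (m-k)) p := by
  have hm : 1 ≤ m := le_trans hk hkm
  set g : ℕ → ℝ := fun i => (m : ℝ) * ((m-1).choose i : ℝ) * p ^ i * (1-p) ^ (m-1-i) with hg
  have key : ∀ j ∈ Finset.Icc k m,
      HasDerivAt (fun x => (m.choose j : ℝ) * x ^ j * (1 - x) ^ (m - j))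
        (g (j-1) - g j) p := by
    intro j hj
    obtain ⟨hj1, hj2⟩ := Finset.mem_Icc.mp hj
    have hj1' : 1 ≤ j := le_trans hk hj1
    have h1 : HasDerivAt (fun x : ℝ => x ^ j) ((j:ℝ) * p ^ (j-1)) p := hasDerivAt_pow j p
    have h2 : HasDerivAt (fun x : ℝ => (1 - x) ^ (m - j))
        (((m-j:ℕ):ℝ) * (1-p) ^ (m-j-1) * (-1)) p := by
      exact (hasDerivAt_pow (m-j) (1-p)).comp p ((hasDerivAt_id p).const_sub 1)
    have h3 : HasDerivAt (fun y : ℝ => (m.choose j : ℝ) * (y ^ j * (1 - y) ^ (m - j))) ((m.choose j : ℝ) * ((j:ℝ) * p ^ (j-1) * (1-p) ^ (m-j) + p ^ j * (((m-j:ℕ):ℝ) * (1-p) ^ (m-j-1) * (-1)))) p := (h1.mul h2).const_mul ((m.choose j : ℝ))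
    have hfun : (fun x : ℝ => (m.choose j : ℝ) * x ^ j * (1 - x) ^ (m - j))
        = (fun y : ℝ => (m.choose j : ℝ) * (y ^ j * (1 - y) ^ (m - j))) := by
      ext x; ring
    rw [hfun]
    convert h3 using 1
    have e1 : ((m * (m-1).choose (j-1) : ℕ) : ℝ) = ((m.choose j * j : ℕ) : ℝ) := by
      rw [nat_id1 m j hj1' hm]
    have e2 : ((m.choose j * (m - j) : ℕ) : ℝ) = ((m * (m-1).choose j : ℕ) : ℝ) := by
      rw [nat_id2 m j hm]
    push_cast at e1 e2
    obtain ⟨a, rfl⟩ : ∃ a, j = a + 1 := ⟨j - 1, by omega⟩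
    rcases eq_or_lt_of_le hj2 with rfl | hlt
    · simp only [hg, Nat.add_sub_cancel, Nat.sub_self, pow_zero,
        Nat.choose_self, Nat.choose_succ_self, Nat.cast_zero, Nat.cast_one]
      ring
    · obtain ⟨c, rfl⟩ : ∃ c, m = a + 1 + c + 1 := ⟨m - a - 2, by omega⟩
      simp only [hg, Nat.add_sub_cancel]
      rw [show a + 1 + c + 1 - (a + 1) = c + 1 from by omega] at e2 ⊢
      rw [show a + 1 + c - a = c + 1 from by omega,
        show a + 1 + c - (a + 1) = c from by omega,
        show c + 1 - 1 = c from by omega]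
      push_cast at e1 e2 ⊢
      linear_combination p^a * (1-p)^(c+1) * e1 + p^(a+1) * (1-p)^c * e2
  have hsum : HasDerivAt (fun x => Ft m k x) (∑ j ∈ Finset.Icc k m, (g (j-1) - g j)) p := by
    simpa [Ft] using HasDerivAt.fun_sum key
  have htel : ∑ j ∈ Finset.Icc k m, (g (j-1) - g j) = g (k-1) - g m := by
    have hmap : Finset.Icc k m = (Finset.range (m + 1 - k)).map
        ⟨fun i => k + i, add_right_injective k⟩ := by
      ext x
      simp only [Finset.mem_Icc, Finset.mem_map, Finset.mem_range, Function.Embedding.coeFn_mk]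
      constructor
      · rintro ⟨h1, h2⟩; exact ⟨x - k, by omega, by omega⟩
      · rintro ⟨i, hi, rfl⟩; omega
    rw [hmap, Finset.sum_map]
    simp only [Function.Embedding.coeFn_mk]
    have hc : ∀ i, g (k + i - 1) - g (k + i) = (fun i => g (k - 1 + i)) i - (fun i => g (k - 1 + i)) (i+1) := by
      intro i
      have e1 : k + i - 1 = k - 1 + i := by omega
      have e2 : k + i = k - 1 + (i + 1) := by omega
      rw [e1, e2]
    rw [Finset.sum_congr rfl (fun i _ => hc i), Finset.sum_range_sub']
    have h9 : k - 1 + (m + 1 - k) = m := by omega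
    simp only [Nat.add_zero, h9]
  have hgm : g m = 0 := by
    simp [hg, Nat.choose_eq_zero_of_lt (by omega : m - 1 < m)]
  have e5 : m - 1 - (k-1) = m - k := by omega
  rw [htel, hgm, sub_zero, hg] at hsum
  simpa [e5] using hsum

theorem Ft_lt (m k : ℕ) (hk : 1 ≤ k) (hkm : k ≤ m) {a b : ℝ} (ha : 0 ≤ a) (hab : a < b)
    (hb : b ≤ 1) : Ft m k a < Ft m k b := by
  have hsm : StrictMonoOn (fun x => Ft m k x) (Set.Icc a b) := by
    apply strictMonoOn_of_deriv_pos (convex_Icc a b)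
    · exact fun x _ => (Ft_hasDerivAt m k hk hkm x).differentiableAt.continuousAt.continuousWithinAt
    · intro x hx
      rw [interior_Icc] at hx
      rw [(Ft_hasDerivAt m k hk hkm x).deriv]
      have hx0 : 0 < x := lt_of_le_of_lt ha hx.1
      have hx1 : 0 < 1 - x := by have := lt_of_lt_of_le hx.2 hb; linarith
      have hch : 0 < ((m-1).choose (k-1) : ℝ) := by
        exact_mod_cast Nat.choose_pos (by omega : k - 1 ≤ m - 1)
      have hm0 : (0:ℝ) < m := by exact_mod_cast (by omega : 0 < m)
      exact mul_pos (mul_pos (mul_pos hm0 hch) (pow_pos hx0 _)) (pow_pos hx1 _)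
  exact hsm (Set.left_mem_Icc.mpr hab.le) (Set.right_mem_Icc.mpr hab.le) hab

theorem keyalg (b e : ℕ) (A B Cm r x : ℝ) (hPascal : Cm = B + A)
    (hRatio : A * ((b:ℝ)+1) = B * ((e:ℝ)+1))
    (hrm : r * ((b:ℝ)+2+(e:ℝ)) = ((b:ℝ)+1) - x) :
    ((b:ℝ)+1) * (Cm * r^(b+1)*(1-r)^(e+1) - (1-x)*A*r^(b+1)*(1-r)^e - x*B*r^b*(1-r)^(e+1))
      = r^b*(1-r)^e*(r-x)*(B*x) := by
  subst hPascal
  linear_combination (-(r^b*(1-r)^e*(r-x)*r)) * hRatio + (-(r^b*(1-r)^e*(r-x)*B)) * hrm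

theorem Ft_step (b e : ℕ) :
    Ft (b+2+e) (b+2) ((b+1 : ℝ)/(b+2+e)) ≤ Ft (b+2+e+1) (b+2) ((b+1 : ℝ)/(b+2+e+1)) := by
  set m : ℕ := b + 2 + e with hmdef
  have hmR : ((m:ℝ)) = (b:ℝ) + 2 + e := by rw [hmdef]; push_cast; ring
  have hmpos : (0:ℝ) < m := by rw [hmR]; positivity
  set L : ℝ := (b:ℝ) + 1 with hL
  set A : ℝ := ((b+e+1).choose (b+1) : ℝ) with hA
  set B : ℝ := ((b+e+1).choose b : ℝ) with hB
  set Cm : ℝ := (m.choose (b+1) : ℝ) with hCm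
  have hPascal : Cm = B + A := by
    rw [hCm, hA, hB, hmdef, show b+2+e = (b+e+1)+1 from by omega, Nat.choose_succ_succ']
    push_cast; ring
  have hRatio : A * L = B * ((e:ℝ)+1) := by
    rw [hA, hB, hL]
    have h1 := Nat.choose_succ_right_eq (b+e+1) b
    rw [show b + e + 1 - b = e + 1 from by omega] at h1
    exact_mod_cast h1
  have D1 : ∀ x : ℝ, HasDerivAt (fun y => Ft m (b+2) y) ((m:ℝ) * A * x^(b+1) * (1-x)^e) x := by
    intro x
    have h := Ft_hasDerivAt m (b+2) (by omega) (by omega) x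
    rw [show m - 1 = b+e+1 from by omega, show b+2-1 = b+1 from rfl,
      show m - (b+2) = e from by omega] at h
    exact h
  have D2 : ∀ x : ℝ, HasDerivAt (fun y => Ft m (b+1) y) ((m:ℝ) * B * x^b * (1-x)^(e+1)) x := by
    intro x
    have h := Ft_hasDerivAt m (b+1) (by omega) (by omega) x
    rw [show m - 1 = b+e+1 from by omega, show b+1-1 = b from rfl,
      show m - (b+1) = e+1 from by omega] at h
    exact h
  have hsplit : ∀ y : ℝ, Ft m (b+1) y = Cm * y^(b+1) * (1-y)^(e+1) + Ft m (b+2) y := by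
    intro y
    rw [Ft, Ft]
    have hIcc : Finset.Icc (b+1) m = insert (b+1) (Finset.Icc (b+2) m) := by
      ext z
      simp only [Finset.mem_Icc, Finset.mem_insert]
      omega
    rw [hIcc, Finset.sum_insert (by
      intro hmem
      simp only [Finset.mem_Icc] at hmem
      omega)]
    rw [show m - (b+1) = e+1 from by omega, hCm]
  set h : ℝ → ℝ := fun t => (1 - t) * Ft m (b+2) ((L - t)/(m:ℝ)) + t * Ft m (b+1) ((L - t)/(m:ℝ))
    with hh
  have hderiv : ∀ x : ℝ, HasDerivAt h
      ((-1) * Ft m (b+2) ((L-x)/(m:ℝ))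
        + (1-x) * ((m:ℝ) * A * ((L-x)/(m:ℝ))^(b+1) * (1-(L-x)/(m:ℝ))^e * (-1/(m:ℝ)))
        + (1 * Ft m (b+1) ((L-x)/(m:ℝ))
        + x * ((m:ℝ) * B * ((L-x)/(m:ℝ))^b * (1-(L-x)/(m:ℝ))^(e+1) * (-1/(m:ℝ))))) x := by
    intro x
    have hr : HasDerivAt (fun t : ℝ => (L - t)/(m:ℝ)) (-1/(m:ℝ)) x := by
      simpa using (((hasDerivAt_id x).const_sub L).div_const (m:ℝ))
    have hFk : HasDerivAt (fun t : ℝ => Ft m (b+2) ((L-t)/(m:ℝ)))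
        ((m:ℝ) * A * ((L-x)/(m:ℝ))^(b+1) * (1-(L-x)/(m:ℝ))^e * (-1/(m:ℝ))) x :=
      by exact (D1 ((L-x)/(m:ℝ))).comp x hr
    have hFk1 : HasDerivAt (fun t : ℝ => Ft m (b+1) ((L-t)/(m:ℝ)))
        ((m:ℝ) * B * ((L-x)/(m:ℝ))^b * (1-(L-x)/(m:ℝ))^(e+1) * (-1/(m:ℝ))) x :=
      by exact (D2 ((L-x)/(m:ℝ))).comp x hr
    have h1 : HasDerivAt (fun t : ℝ => 1 - t) (-1) x := by
      simpa using (hasDerivAt_id x).const_sub 1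
    exact ((h1.mul hFk).add ((hasDerivAt_id x).mul hFk1))
  set ts : ℝ := L / ((m:ℝ)+1) with hts
  have htspos : 0 < ts := by rw [hts, hL]; positivity
  have hmono : MonotoneOn h (Set.Icc 0 ts) := by
    apply monotoneOn_of_deriv_nonneg (convex_Icc 0 ts)
    · exact fun x _ => (hderiv x).differentiableAt.continuousAt.continuousWithinAt
    · intro x hx
      exact ((hderiv x).differentiableAt).differentiableWithinAt
    · intro x hx
      rw [interior_Icc] at hx
      obtain ⟨hx0, hxts⟩ := hx
      rw [(hderiv x).deriv]
      set r : ℝ := (L - x)/(m:ℝ) with hr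
      have hrm : r * ((b:ℝ)+2+(e:ℝ)) = L - x := by
        rw [hr, hmR]; field_simp
      have hxr : x ≤ r := by
        rw [hr, le_div_iff₀ hmpos]
        rw [hts, lt_div_iff₀ (by positivity : (0:ℝ) < (m:ℝ)+1)] at hxts
        nlinarith
      have hr0 : 0 < r := lt_of_lt_of_le hx0 hxr
      have hr1 : r ≤ 1 := by
        rw [hr, div_le_one hmpos, hmR, hL]
        linarith
      have hEeq : (-1) * Ft m (b+2) r
          + (1-x) * ((m:ℝ) * A * r^(b+1) * (1-r)^e * (-1/(m:ℝ)))
          + (1 * Ft m (b+1) r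
          + x * ((m:ℝ) * B * r^b * (1-r)^(e+1) * (-1/(m:ℝ))))
          = Cm * r^(b+1)*(1-r)^(e+1) - (1-x)*A*r^(b+1)*(1-r)^e - x*B*r^b*(1-r)^(e+1) := by
        rw [hsplit r]
        field_simp
        ring
      rw [hEeq]
      have hkey := keyalg b e A B Cm r x hPascal (by rw [← hL]; exact hRatio) (by rw [← hL]; exact hrm)
      have hrhs : 0 ≤ r^b*(1-r)^e*(r-x)*(B*x) := by
        have h1r : (0:ℝ) ≤ 1 - r := by linarith
        have hrx : (0:ℝ) ≤ r - x := by linarith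
        have hBpos : (0:ℝ) ≤ B := by rw [hB]; positivity
        have hxpos : (0:ℝ) ≤ x := le_of_lt hx0
        positivity
      rw [← hkey] at hrhs
      have hLpos : (0:ℝ) < (b:ℝ)+1 := by positivity
      exact nonneg_of_mul_nonneg_right hrhs hLpos
  have hchain := hmono (Set.left_mem_Icc.mpr (le_of_lt htspos))
    (Set.right_mem_Icc.mpr (le_of_lt htspos)) (le_of_lt htspos)
  have hh0 : h 0 = Ft m (b+2) (L/(m:ℝ)) := by simp [hh]
  have hrts : (L - ts)/(m:ℝ) = ts := by
    rw [hts]; field_simp; ring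
  have hhts : h ts = Ft (m+1) (b+2) ts := by
    rw [hh]
    simp only [hrts]
    rw [show b+2 = (b+1)+1 from rfl, Ft_succ m (b+1) ts]
  rw [hh0, hhts] at hchain
  have e1 : L/(m:ℝ) = L/((b:ℝ)+2+(e:ℝ)) := by rw [hmR]
  have e2 : ts = L/((b:ℝ)+2+(e:ℝ)+1) := by rw [hts, hmR]
  rw [e1, e2] at hchain
  exact hchain

theorem Ft_chain (b e : ℕ) :
    ((b+1:ℝ)/(b+2))^(b+2) ≤ Ft (b+2+e) (b+2) ((b+1:ℝ)/((b:ℝ)+2+(e:ℝ))) := by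
  induction e with
  | zero =>
    have : Ft (b+2) (b+2) ((b+1:ℝ)/((b:ℝ)+2+(0:ℕ))) = ((b+1:ℝ)/(b+2))^(b+2) := by
      rw [Ft, Finset.Icc_self, Finset.sum_singleton]
      simp
    simp only [Nat.add_zero] at this ⊢
    rw [this]
  | succ e ih =>
    refine le_trans ih ?_
    push_cast
    have hs := Ft_step b e
    have : (b:ℝ) + 2 + ((e:ℝ) + 1) = (b:ℝ) + 2 + (e:ℝ) + 1 := by ring
    rw [this, show b + 2 + (e + 1) = b + 2 + e + 1 from rfl]
    exact hs

theorem pow_aux (a n : ℕ) : a^(n+1) + (n+1)*a^n ≤ (a+1)^(n+1) := by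
  induction n with
  | zero => simp
  | succ n ih =>
    have h1 : (a+1)^(n+2) = (a+1)^(n+1) * (a+1) := by ring
    have h2 : (a^(n+1) + (n+1)*a^n) * (a+1) ≤ (a+1)^(n+1) * (a+1) :=
      Nat.mul_le_mul_right _ ih
    have expand : (a^(n+1) + (n+1)*a^n) * (a+1) = a^(n+2) + (n+2)*a^(n+1) + (n+1)*a^n := by
      ring
    calc a^(n+1+1) + (n+1+1)*a^(n+1) = a^(n+2) + (n+2)*a^(n+1) := by ring_nf
      _ ≤ a^(n+2) + (n+2)*a^(n+1) + (n+1)*a^n := Nat.le_add_right _ _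
      _ = (a^(n+1) + (n+1)*a^n) * (a+1) := expand.symm
      _ ≤ (a+1)^(n+1) * (a+1) := h2
      _ = (a+1)^(n+1+1) := by ring
    
theorem nat_quarter (b : ℕ) : (b+2)^(b+2) ≤ 4*(b+1)^(b+2) := by
  induction b with
  | zero => norm_num
  | succ b ih =>
    have hA : ((b+1)*(b+3)+1) = (b+2)^2 := by ring
    have haux := pow_aux ((b+1)*(b+3)) (b+1)
    rw [hA] at haux
    have h1 : (b+3)*((b+1)*(b+3))^(b+2) ≤ (b+2)*((b+2)^2)^(b+2) := by
      have h2 : (b+2)*((b+2)^2)^(b+2) ≥ (b+2)*(((b+1)*(b+3))^(b+2) + (b+2)*((b+1)*(b+3))^(b+1)) :=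
        Nat.mul_le_mul_left _ haux
      have h3 : (b+2)*(b+2)*((b+1)*(b+3))^(b+1) ≥ ((b+1)*(b+3))^(b+2) := by
        have : ((b+1)*(b+3))^(b+2) = ((b+1)*(b+3)) * ((b+1)*(b+3))^(b+1) := by ring
        rw [this]
        exact Nat.mul_le_mul_right _ (by nlinarith)
      nlinarith
    have h4 : (b+3)^(b+3) * (b+1)^(b+2) ≤ (4*(b+2)^(b+3)) * (b+1)^(b+2) := by
      have l1 : (b+3)^(b+3) * (b+1)^(b+2) = (b+3)*((b+1)*(b+3))^(b+2) := by
        rw [mul_pow]; ring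
      have l2 : (b+2)*((b+2)^2)^(b+2) = (b+2)^(b+3) * (b+2)^(b+2) := by
        rw [← pow_mul]; ring
      calc (b+3)^(b+3) * (b+1)^(b+2) = (b+3)*((b+1)*(b+3))^(b+2) := l1
        _ ≤ (b+2)*((b+2)^2)^(b+2) := h1
        _ = (b+2)^(b+3) * (b+2)^(b+2) := l2
        _ ≤ (b+2)^(b+3) * (4*(b+1)^(b+2)) := Nat.mul_le_mul_left _ ih
        _ = (4*(b+2)^(b+3)) * (b+1)^(b+2) := by ring
    have h5 : 0 < (b+1)^(b+2) := Nat.pow_pos (by omega)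
    have := Nat.le_of_mul_le_mul_right h4 h5
    calc (b+1+2)^(b+1+2) = (b+3)^(b+3) := by ring_nf
      _ ≤ 4*(b+2)^(b+3) := this
      _ = 4*(b+1+1)^(b+1+2) := by ring_nf

theorem real_quarter (b : ℕ) : (1:ℝ)/4 ≤ ((b+1:ℝ)/(b+2))^(b+2) := by
  have h := nat_quarter b
  have hcast : ((b+2:ℝ))^(b+2) ≤ 4*((b+1:ℝ))^(b+2) := by exact_mod_cast h
  rw [div_pow, div_le_div_iff₀ (by norm_num) (by positivity), one_mul]
  linarith

/-- For a binomial random variable `X ~ B(m, p)` with `1/m < p ≤ 1`,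
the probability that `X` is at least its expected value `m·p` exceeds `1/4`. -/
theorem binomial_ge_mean_gt_quarter (m : ℕ) (hm : 0 < m) (p : ℝ)
    (hp₁ : 1 / (m : ℝ) < p) (hp₂ : p ≤ 1) :
    (1 : ℝ) / 4 <
      ∑ j ∈ Finset.Icc ⌈(m : ℝ) * p⌉₊ m,
        (m.choose j : ℝ) * p ^ j * (1 - p) ^ (m - j) := by
  have hmR : (0:ℝ) < m := by exact_mod_cast hm
  have hmp1 : (1:ℝ) < (m:ℝ) * p := by
    rw [div_lt_iff₀ hmR] at hp₁
    linarith [mul_comm p (m:ℝ)]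
  set k := ⌈(m:ℝ) * p⌉₊ with hk
  have hk2 : 2 ≤ k := by
    have : 1 < k := Nat.lt_ceil.mpr (by exact_mod_cast hmp1)
    omega
  have hkm : k ≤ m := Nat.ceil_le.mpr (by nlinarith)
  have hceil : ((k:ℝ)) < (m:ℝ) * p + 1 := by
    rw [hk]
    exact Nat.ceil_lt_add_one (by positivity)
  clear_value k
  clear hk
  obtain ⟨b, rfl⟩ : ∃ b, k = b + 2 := ⟨k - 2, by omega⟩
  obtain ⟨e, rfl⟩ : ∃ e, m = b + 2 + e := ⟨m - (b+2), by omega⟩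
  show (1:ℝ)/4 < Ft (b+2+e) (b+2) p
  have hcast : ((b+2+e:ℕ):ℝ) = (b:ℝ)+2+(e:ℝ) := by push_cast; ring
  have hlt : ((b:ℝ)+1)/((b:ℝ)+2+(e:ℝ)) < p := by
    rw [div_lt_iff₀ (by positivity)]
    have h2 : ((b:ℝ)+2) < ((b+2+e:ℕ):ℝ) * p + 1 := by exact_mod_cast hceil
    rw [hcast] at h2
    nlinarith [h2, mul_comm p ((b:ℝ)+2+(e:ℝ))]
  calc (1:ℝ)/4 ≤ ((b+1:ℝ)/(b+2))^(b+2) := real_quarter b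
    _ ≤ Ft (b+2+e) (b+2) ((b+1:ℝ)/((b:ℝ)+2+(e:ℝ))) := Ft_chain b e
    _ < Ft (b+2+e) (b+2) p := by
        apply Ft_lt (b+2+e) (b+2) (by omega) (by omega) (by positivity) hlt hp₂
end

section
/- Let m be a positive integer and p a probability with 0 ≤ p < 1 − 1/m. If X is a random variable distributed according to the binomial distribution B(m, p), then P[X ≤ m·p] > 1/4. -/
open Finset

namespace BinomQ



/-- Lower binomial CDF: `P[B(m,q) ≤ k]` -/
noncomputable def S (m k : ℕ) (q : ℝ) : ℝ :=
  ∑ j ∈ Finset.range (k+1), (m.choose j : ℝ) * q^j * (1-q)^(m-j)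

lemma sum_eq_one (M : ℕ) (q : ℝ) :
    ∑ j ∈ Finset.range (M+1), (M.choose j : ℝ) * q^j * (1-q)^(M-j) = 1 := by
  have h := add_pow q (1-q) M
  have h1 : q + (1-q) = 1 := by ring
  rw [h1, one_pow] at h
  have h2 : ∑ j ∈ Finset.range (M+1), (M.choose j : ℝ) * q^j * (1-q)^(M-j)
      = ∑ j ∈ Finset.range (M+1), q^j * (1-q)^(M-j) * (M.choose j : ℝ) :=
    Finset.sum_congr rfl (fun j _ => by ring)
  rw [h2]; exact h.symm

lemma hasDerivAt_term (m j : ℕ) (q : ℝ) :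
    HasDerivAt (fun x : ℝ => (m.choose j : ℝ) * x^j * (1-x)^(m-j))
      (((j * m.choose j : ℕ) : ℝ) * q^(j-1) * (1-q)^(m-j)
        - (((m-j) * m.choose j : ℕ) : ℝ) * q^j * (1-q)^(m-j-1)) q := by
  have h1 : HasDerivAt (fun x : ℝ => x^j) ((j:ℝ) * q^(j-1)) q := hasDerivAt_pow j q
  have hc : HasDerivAt (fun x : ℝ => 1 - x) (-1) q := (hasDerivAt_id q).const_sub 1
  have h2 : HasDerivAt (fun x : ℝ => (1-x)^(m-j))
      (-((((m-j):ℕ):ℝ) * (1-q)^(m-j-1))) q := by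
    have h := (hasDerivAt_pow (m-j) (1-q)).comp q hc
    exact h.congr_deriv (by ring)
  have h3 := (h1.mul h2).const_mul ((m.choose j : ℝ))
  refine (h3.congr_deriv ?_).congr_of_eventuallyEq (Filter.Eventually.of_forall fun x => ?_)
  · push_cast; ring
  · simp only [Pi.mul_apply]; ring

lemma hasDerivAt_S (m k : ℕ) (q : ℝ) :
    HasDerivAt (S m k)
      (-((((k+1) * m.choose (k+1) : ℕ) : ℝ) * q^k * (1-q)^(m-(k+1)))) q := by
  have h := HasDerivAt.fun_sum (u := Finset.range (k+1))
    (A := fun j => fun x : ℝ => (m.choose j : ℝ) * x^j * (1-x)^(m-j))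
    (A' := fun j => ((j * m.choose j : ℕ) : ℝ) * q^(j-1) * (1-q)^(m-j)
        - (((m-j) * m.choose j : ℕ) : ℝ) * q^j * (1-q)^(m-j-1))
    (fun j _ => hasDerivAt_term m j q)
  have e : ∑ j ∈ Finset.range (k+1),
      (((j * m.choose j : ℕ) : ℝ) * q^(j-1) * (1-q)^(m-j)
        - (((m-j) * m.choose j : ℕ) : ℝ) * q^j * (1-q)^(m-j-1))
      = -((((k+1) * m.choose (k+1) : ℕ) : ℝ) * q^k * (1-q)^(m-(k+1))) := by
    have hw : ∀ j : ℕ, (((m-j) * m.choose j : ℕ) : ℝ) * q^j * (1-q)^(m-j-1)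
        = ((((j+1) * m.choose (j+1) : ℕ)) : ℝ) * q^((j+1)-1) * (1-q)^(m-(j+1)) := by
      intro j
      have hn : (j+1) * m.choose (j+1) = (m-j) * m.choose j := by
        rw [mul_comm, Nat.choose_succ_right_eq, mul_comm]
      rw [hn]
      have e1 : (j+1)-1 = j := by omega
      have e2 : m-(j+1) = m-j-1 := by omega
      rw [e1, e2]
    have : ∑ j ∈ Finset.range (k+1),
        (((j * m.choose j : ℕ) : ℝ) * q^(j-1) * (1-q)^(m-j)
          - (((m-j) * m.choose j : ℕ) : ℝ) * q^j * (1-q)^(m-j-1))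
        = ∑ j ∈ Finset.range (k+1),
          ((fun i => ((i * m.choose i : ℕ) : ℝ) * q^(i-1) * (1-q)^(m-i)) j
            - (fun i => ((i * m.choose i : ℕ) : ℝ) * q^(i-1) * (1-q)^(m-i)) (j+1)) := by
      exact Finset.sum_congr rfl (fun j _ => by rw [hw j])
    rw [this, Finset.sum_range_sub']
    simp
  rw [← e]
  exact h

lemma pascal_S (m k : ℕ) (hk : k ≤ m) (q : ℝ) :
    S (m+1) k q = S m k q - (m.choose k : ℝ) * q^(k+1) * (1-q)^(m-k) := by
  induction k with
  | zero =>
      simp only [S, Finset.sum_range_one]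
      simp [pow_succ]
      ring
  | succ k ih =>
      have hk' : k ≤ m := by omega
      have hS1 : S (m+1) (k+1) q = S (m+1) k q
          + ((m+1).choose (k+1) : ℝ) * q^(k+1) * (1-q)^(m+1-(k+1)) := by
        simp [S, Finset.sum_range_succ]
      have hS2 : S m (k+1) q = S m k q
          + (m.choose (k+1) : ℝ) * q^(k+1) * (1-q)^(m-(k+1)) := by
        simp [S, Finset.sum_range_succ]
      rw [hS1, hS2, ih hk']
      have hpas : ((m+1).choose (k+1) : ℝ) = (m.choose k : ℝ) + (m.choose (k+1) : ℝ) := by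
        rw [Nat.choose_succ_succ]
        push_cast; ring
      have e1 : m+1-(k+1) = m-k := by omega
      have e2 : m-k = (m-(k+1)) + 1 := by omega
      rw [hpas, e1, e2, pow_succ]
      ring




/-- Consecutive step: `(M+1)^(2M+1) ≤ M^M * (M+2)^(M+1)` (Bernoulli). -/
lemma pow_step (M : ℕ) (hM : 1 ≤ M) :
    ((M:ℝ)+1)^(2*M+1) ≤ (M:ℝ)^M * ((M:ℝ)+2)^(M+1) := by
  have hM0 : (0:ℝ) < M := by exact_mod_cast hM
  have h1 : (0:ℝ) < (M:ℝ)+1 := by linarith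
  have hsq : (1:ℝ) ≤ ((M:ℝ)+1)^2 := by nlinarith
  have ha : (-2:ℝ) ≤ -(1/((M:ℝ)+1)^2) := by
    have h2 : 1/((M:ℝ)+1)^2 ≤ 1 := by
      rw [div_le_one (by positivity)]; exact hsq
    linarith
  have hb := one_add_mul_le_pow ha (M+1)
  have hlhs : 1 + ((M:ℕ)+1 : ℕ) * (-(1/((M:ℝ)+1)^2)) = (M:ℝ)/((M:ℝ)+1) := by
    push_cast
    field_simp
    ring
  have hbase : 1 + (-(1/((M:ℝ)+1)^2)) = ((M:ℝ)*((M:ℝ)+2))/((M:ℝ)+1)^2 := by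
    field_simp
    ring
  rw [hbase] at hb
  have hb2 : (M:ℝ)/((M:ℝ)+1) ≤ ((M:ℝ)*((M:ℝ)+2))^(M+1) / (((M:ℝ)+1)^2)^(M+1) := by
    calc (M:ℝ)/((M:ℝ)+1) = 1 + ((M:ℕ)+1 : ℕ) * (-(1/((M:ℝ)+1)^2)) := hlhs.symm
      _ ≤ (((M:ℝ)*((M:ℝ)+2))/((M:ℝ)+1)^2)^(M+1) := by exact_mod_cast hb
      _ = ((M:ℝ)*((M:ℝ)+2))^(M+1) / (((M:ℝ)+1)^2)^(M+1) := by rw [div_pow]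
  rw [div_le_div_iff₀ (by linarith) (by positivity)] at hb2
  -- hb2 : M * ((M+1)^2)^(M+1) ≤ (M*(M+2))^(M+1) * (M+1)
  have key : (M:ℝ) * (((M:ℝ)+1) * ((M:ℝ)+1)^(2*M+1)) ≤ (M:ℝ) * (((M:ℝ)+1) * ((M:ℝ)^M * ((M:ℝ)+2)^(M+1))) := by
    calc (M:ℝ) * (((M:ℝ)+1) * ((M:ℝ)+1)^(2*M+1))
        = (M:ℝ) * (((M:ℝ)+1)^2)^(M+1) := by
          rw [← pow_mul]
          rw [show ((M:ℝ)+1) * ((M:ℝ)+1)^(2*M+1) = ((M:ℝ)+1)^(2*(M+1)) from by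
            rw [show 2*(M+1) = (2*M+1)+1 from by omega, pow_succ]; ring]
      _ ≤ ((M:ℝ)*((M:ℝ)+2))^(M+1) * ((M:ℝ)+1) := hb2
      _ = (M:ℝ) * (((M:ℝ)+1) * ((M:ℝ)^M * ((M:ℝ)+2)^(M+1))) := by
          rw [mul_pow, pow_succ]
          ring
  have k1 := le_of_mul_le_mul_left key hM0
  exact le_of_mul_le_mul_left k1 h1

/-- `(1+1/n)^n` is monotone: cross-multiplied form. -/
lemma L0 (n N : ℕ) (hn : 1 ≤ n) (hnN : n ≤ N) :
    ((n:ℝ)+1)^n * (N:ℝ)^N ≤ ((N:ℝ)+1)^N * (n:ℝ)^n := by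
  induction N, hnN using Nat.le_induction with
  | base => ring_nf; exact le_refl _
  | succ N hN ih =>
      have hN1 : 1 ≤ N := le_trans hn hN
      have hN0 : (0:ℝ) < (N:ℝ)^N := by
        have : (0:ℝ) < N := by exact_mod_cast hN1
        positivity
      have hstep := pow_step N hN1
      have hn0 : (0:ℝ) < ((n:ℝ))^n := by
        have : (0:ℝ) < n := by exact_mod_cast hn
        positivity
      have h2 : ((N:ℝ)+1)^N * ((N:ℝ)+1)^(N+1) = ((N:ℝ)+1)^(2*N+1) := by
        rw [← pow_add]
        congr 1
        omega
      have h4 : (N:ℝ)^N * (((n:ℝ)+1)^n * ((N:ℝ)+1)^(N+1))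
          ≤ (N:ℝ)^N * (((N:ℝ)+2)^(N+1) * (n:ℝ)^n) := by
        calc (N:ℝ)^N * (((n:ℝ)+1)^n * ((N:ℝ)+1)^(N+1))
            = (((n:ℝ)+1)^n * (N:ℝ)^N) * ((N:ℝ)+1)^(N+1) := by ring
          _ ≤ (((N:ℝ)+1)^N * (n:ℝ)^n) * ((N:ℝ)+1)^(N+1) :=
              mul_le_mul_of_nonneg_right ih (by positivity)
          _ = ((N:ℝ)+1)^(2*N+1) * (n:ℝ)^n := by rw [← h2]; ring
          _ ≤ ((N:ℝ)^N * ((N:ℝ)+2)^(N+1)) * (n:ℝ)^n :=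
              mul_le_mul_of_nonneg_right hstep (le_of_lt hn0)
          _ = (N:ℝ)^N * (((N:ℝ)+2)^(N+1) * (n:ℝ)^n) := by ring
      have h5 := le_of_mul_le_mul_left h4 hN0
      push_cast
      calc ((n:ℝ)+1)^n * ((N:ℝ)+1)^(N+1) ≤ ((N:ℝ)+2)^(N+1) * (n:ℝ)^n := h5
        _ = ((N:ℝ)+1+1)^(N+1) * (n:ℝ)^n := by rw [show ((N:ℝ)+2) = (N:ℝ)+1+1 from by ring]

lemma c2 (t : ℕ) : (t+1).choose 2 * 2 = (t+1)*t := by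
  induction t with
  | zero => rfl
  | succ t ih =>
      have h : (t+2).choose 2 = (t+1).choose 1 + (t+1).choose 2 := rfl
      calc (t+2).choose 2 * 2 = (t+1).choose 1 * 2 + (t+1).choose 2 * 2 := by rw [h]; ring
        _ = (t+1)*2 + (t+1)*t := by rw [Nat.choose_one_right, ih]
        _ = (t+1+1)*(t+1) := by ring

lemma c3 (t : ℕ) : (t+2).choose 3 * 6 = (t+2)*(t+1)*t := by
  induction t with
  | zero => rfl
  | succ t ih =>
      have h : (t+3).choose 3 = (t+2).choose 2 + (t+2).choose 3 := rfl
      calc (t+3).choose 3 * 6 = (t+2).choose 2 * 2 * 3 + (t+2).choose 3 * 6 := by rw [h]; ring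
        _ = (t+2)*(t+1)*3 + (t+2)*(t+1)*t := by rw [c2 (t+1), ih]
        _ = (t+1+2)*(t+1+1)*(t+1) := by ring

/-- Key base inequality, generic branch. -/
lemma L1aux (s : ℕ) :
    4*(2*((s:ℝ)+3)+1)*((s:ℝ)+3)^(s+3) ≤ 3*(((s:ℝ)+3)+1)^(s+3+1) := by
  have hcast : ((s:ℝ)+3) = (((s+3:ℕ)):ℝ) := by push_cast; ring
  have hexp : (((s:ℝ)+3)+1)^(s+3)
      = ∑ i ∈ Finset.range (s+4), ((s:ℝ)+3)^i * ((s+3).choose i : ℝ) := by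
    have h := add_pow ((s:ℝ)+3) 1 (s+3)
    simp only [one_pow, mul_one] at h
    rw [hcast] at h ⊢
    exact h
  have hsubset : ({s, s+1, s+2, s+3} : Finset ℕ) ⊆ Finset.range (s+4) := by
    intro x hx
    simp only [Finset.mem_insert, Finset.mem_singleton] at hx
    simp only [Finset.mem_range]
    omega
  have hlb : ∑ i ∈ ({s, s+1, s+2, s+3} : Finset ℕ), ((s:ℝ)+3)^i * ((s+3).choose i : ℝ)
      ≤ (((s:ℝ)+3)+1)^(s+3) := by
    rw [hexp]
    apply Finset.sum_le_sum_of_subset_of_nonneg hsubset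
    intro i _ _
    positivity
  have hset : ∑ i ∈ ({s, s+1, s+2, s+3} : Finset ℕ), ((s:ℝ)+3)^i * ((s+3).choose i : ℝ)
      = ((s:ℝ)+3)^s * ((s+3).choose s : ℝ) + ((s:ℝ)+3)^(s+1) * ((s+3).choose (s+1) : ℝ)
        + ((s:ℝ)+3)^(s+2) * ((s+3).choose (s+2) : ℝ)
        + ((s:ℝ)+3)^(s+3) * ((s+3).choose (s+3) : ℝ) := by
    rw [show ({s, s+1, s+2, s+3} : Finset ℕ)
        = insert s (insert (s+1) (insert (s+2) ({s+3} : Finset ℕ))) from rfl]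
    rw [Finset.sum_insert (by simp only [Finset.mem_insert, Finset.mem_singleton]; omega),
        Finset.sum_insert (by simp only [Finset.mem_insert, Finset.mem_singleton]; omega),
        Finset.sum_insert (by simp only [Finset.mem_singleton]; omega), Finset.sum_singleton]
    ring
  have v3 : ((s+3).choose s : ℝ) = ((s:ℝ)+3)*((s:ℝ)+2)*((s:ℝ)+1)/6 := by
    have hsym : (s+3).choose s = (s+3).choose 3 := by
      rw [← Nat.choose_symm (show 3 ≤ s+3 by omega), Nat.add_sub_cancel]
    have hval : (s+3).choose 3 * 6 = (s+3)*(s+2)*(s+1) := c3 (s+1)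
    have hc : (((s+3).choose 3 : ℕ) : ℝ) * 6 = ((s:ℝ)+3)*((s:ℝ)+2)*((s:ℝ)+1) := by
      exact_mod_cast congrArg (fun x : ℕ => (x:ℝ)) hval
    rw [hsym]
    linarith
  have v2 : ((s+3).choose (s+1) : ℝ) = ((s:ℝ)+3)*((s:ℝ)+2)/2 := by
    have hsym : (s+3).choose (s+1) = (s+3).choose 2 := by
      rw [← Nat.choose_symm (show 2 ≤ s+3 by omega)]
      congr 1
    have hval : (s+3).choose 2 * 2 = (s+3)*(s+2) := c2 (s+2)
    have hc : (((s+3).choose 2 : ℕ) : ℝ) * 2 = ((s:ℝ)+3)*((s:ℝ)+2) := by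
      exact_mod_cast congrArg (fun x : ℕ => (x:ℝ)) hval
    rw [hsym]
    linarith
  have v1 : ((s+3).choose (s+2) : ℝ) = (s:ℝ)+3 := by
    rw [Nat.choose_succ_self_right (s+2)]
    push_cast
    ring
  have v0 : ((s+3).choose (s+3) : ℝ) = 1 := by
    rw [Nat.choose_self]
    norm_num
  have hX : (0:ℝ) ≤ ((s:ℝ)+3)^s := by positivity
  have hmain : 4*(2*((s:ℝ)+3)+1)*((s:ℝ)+3)^(s+3)
      ≤ 3*(((s:ℝ)+3)+1)
        * (∑ i ∈ ({s, s+1, s+2, s+3} : Finset ℕ), ((s:ℝ)+3)^i * ((s+3).choose i : ℝ)) := by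
    rw [hset, v3, v2, v1, v0]
    have e1 : ((s:ℝ)+3)^(s+1) = ((s:ℝ)+3)^s * ((s:ℝ)+3) := by rw [pow_succ]
    have e2 : ((s:ℝ)+3)^(s+2) = ((s:ℝ)+3)^s * ((s:ℝ)+3)^2 := by rw [pow_add]
    have e3 : ((s:ℝ)+3)^(s+3) = ((s:ℝ)+3)^s * ((s:ℝ)+3)^3 := by rw [pow_add]
    rw [e1, e2, e3]
    nlinarith [mul_nonneg hX (sq_nonneg ((s:ℝ)+2)), hX]
  calc 4*(2*((s:ℝ)+3)+1)*((s:ℝ)+3)^(s+3)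
      ≤ 3*(((s:ℝ)+3)+1)
        * (∑ i ∈ ({s, s+1, s+2, s+3} : Finset ℕ), ((s:ℝ)+3)^i * ((s+3).choose i : ℝ)) := hmain
    _ ≤ 3*(((s:ℝ)+3)+1) * ((((s:ℝ)+3)+1)^(s+3)) :=
        mul_le_mul_of_nonneg_left hlb (by positivity)
    _ = 3*(((s:ℝ)+3)+1)^(s+3+1) := by rw [pow_succ]; ring

/-- Key base inequality: `4(2r+1) r^r ≤ 3 (r+1)^(r+1)`. -/
lemma L1 (r : ℕ) (hr : 1 ≤ r) :
    4*(2*(r:ℝ)+1)*(r:ℝ)^r ≤ 3*((r:ℝ)+1)^(r+1) := by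
  match r, hr with
  | 1, _ => norm_num
  | 2, _ => norm_num
  | (s+3), _ =>
    have h := L1aux s
    have hc : (((s+3:ℕ)):ℝ) = (s:ℝ)+3 := by push_cast; ring
    rw [hc]
    exact h



/-- Log-concavity style bound: on `[a,b] ⊆ [0,1]`, the function `x^s (1-x)^t`
is at least the min of its endpoint values. -/
lemma gmin (sn tn : ℕ) (a b x : ℝ) (ha : 0 ≤ a) (hax : a ≤ x) (hxb : x ≤ b) (hb1 : b ≤ 1) :
    min (a^sn * (1-a)^tn) (b^sn * (1-b)^tn) ≤ x^sn * (1-x)^tn := by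
  have hx0 : 0 ≤ x := le_trans ha hax
  have hx1 : x ≤ 1 := le_trans hxb hb1
  have hb0 : 0 ≤ b := le_trans hx0 hxb
  have h1a : (0:ℝ) ≤ 1 - a := by linarith
  have h1b : (0:ℝ) ≤ 1 - b := by linarith
  have h1x : (0:ℝ) ≤ 1 - x := by linarith
  rcases le_or_gt (min (a^sn * (1-a)^tn) (b^sn * (1-b)^tn)) 0 with h0 | h0
  · exact le_trans h0 (by positivity)
  rcases eq_or_lt_of_le (le_trans hax hxb) with heq | hlt
  · -- a = b, so x = a
    have hxa : x = a := le_antisymm (heq ▸ hxb) hax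
    rw [hxa]
    exact min_le_left _ _
  -- a < b
  set l := (b - x)/(b - a) with hl
  have hab : 0 < b - a := sub_pos.2 hlt
  have hl0 : 0 ≤ l := div_nonneg (by linarith) hab.le
  have hl1' : 0 ≤ 1 - l := by
    rw [hl]
    rw [sub_nonneg, div_le_one hab]
    linarith
  have hsum : l + (1 - l) = 1 := by ring
  have hxeq : x = l*a + (1-l)*b := by
    rw [hl]
    field_simp
    ring
  have h1xeq : 1-x = l*(1-a) + (1-l)*(1-b) := by
    rw [hxeq]; ring
  have g1 : a^l * b^(1-l) ≤ x := by
    rw [hxeq]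
    exact Real.geom_mean_le_arith_mean2_weighted hl0 hl1' ha hb0 hsum
  have g2 : (1-a)^l * (1-b)^(1-l) ≤ 1-x := by
    rw [h1xeq]
    exact Real.geom_mean_le_arith_mean2_weighted hl0 hl1' h1a h1b hsum
  have k1 : (a^l * b^(1-l))^sn ≤ x^sn :=
    pow_le_pow_left₀ (by positivity) g1 sn
  have k2 : ((1-a)^l * (1-b)^(1-l))^tn ≤ (1-x)^tn :=
    pow_le_pow_left₀ (by positivity) g2 tn
  have prodle : ((a^l * b^(1-l))^sn) * (((1-a)^l * (1-b)^(1-l))^tn) ≤ x^sn * (1-x)^tn :=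
    mul_le_mul k1 k2 (by positivity) (by positivity)
  -- rewrite LHS as A^l * B^(1-l)
  have rw1 : ((a^l * b^(1-l))^sn) * (((1-a)^l * (1-b)^(1-l))^tn)
      = (a^sn * (1-a)^tn)^l * (b^sn * (1-b)^tn)^(1-l) := by
    rw [← Real.rpow_natCast (a^l * b^(1-l)) sn, ← Real.rpow_natCast ((1-a)^l * (1-b)^(1-l)) tn,
        Real.mul_rpow (Real.rpow_nonneg ha _) (Real.rpow_nonneg hb0 _),
        Real.mul_rpow (Real.rpow_nonneg h1a _) (Real.rpow_nonneg h1b _),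
        ← Real.rpow_mul ha, ← Real.rpow_mul hb0, ← Real.rpow_mul h1a, ← Real.rpow_mul h1b,
        Real.mul_rpow (by positivity) (by positivity),
        Real.mul_rpow (by positivity) (by positivity),
        ← Real.rpow_natCast a sn, ← Real.rpow_natCast b sn,
        ← Real.rpow_natCast (1-a) tn, ← Real.rpow_natCast (1-b) tn,
        ← Real.rpow_mul ha, ← Real.rpow_mul hb0, ← Real.rpow_mul h1a, ← Real.rpow_mul h1b]
    rw [mul_comm l (sn:ℝ), mul_comm l (tn:ℝ), mul_comm (1-l) (sn:ℝ), mul_comm (1-l) (tn:ℝ)]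
    ring
  have hA : 0 < a^sn * (1-a)^tn := lt_of_lt_of_le h0 (min_le_left _ _)
  have hB : 0 < b^sn * (1-b)^tn := lt_of_lt_of_le h0 (min_le_right _ _)
  have minle : min (a^sn * (1-a)^tn) (b^sn * (1-b)^tn)
      ≤ (a^sn * (1-a)^tn)^l * (b^sn * (1-b)^tn)^(1-l) := by
    have m1 : (min (a^sn * (1-a)^tn) (b^sn * (1-b)^tn))^l ≤ (a^sn * (1-a)^tn)^l :=
      Real.rpow_le_rpow h0.le (min_le_left _ _) hl0
    have m2 : (min (a^sn * (1-a)^tn) (b^sn * (1-b)^tn))^(1-l) ≤ (b^sn * (1-b)^tn)^(1-l) :=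
      Real.rpow_le_rpow h0.le (min_le_right _ _) hl1'
    calc min (a^sn * (1-a)^tn) (b^sn * (1-b)^tn)
        = (min (a^sn * (1-a)^tn) (b^sn * (1-b)^tn))^(l + (1-l)) := by
          rw [hsum, Real.rpow_one]
      _ = (min (a^sn * (1-a)^tn) (b^sn * (1-b)^tn))^l
          * (min (a^sn * (1-a)^tn) (b^sn * (1-b)^tn))^(1-l) := Real.rpow_add h0 _ _
      _ ≤ (a^sn * (1-a)^tn)^l * (b^sn * (1-b)^tn)^(1-l) :=
          mul_le_mul m1 m2 (Real.rpow_nonneg h0.le _) (Real.rpow_nonneg hA.le _)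
  calc min (a^sn * (1-a)^tn) (b^sn * (1-b)^tn)
      ≤ (a^sn * (1-a)^tn)^l * (b^sn * (1-b)^tn)^(1-l) := minle
    _ = ((a^l * b^(1-l))^sn) * (((1-a)^l * (1-b)^(1-l))^tn) := rw1.symm
    _ ≤ x^sn * (1-x)^tn := prodle


set_option maxHeartbeats 1000000 in
/-- Monotonicity step in `m` for the CDF at integer-mean pivot. -/
lemma mono_step (k n : ℕ) (hn : 1 ≤ n) :
    S (k+1+n) k (((k:ℝ)+1)/((k:ℝ)+1+(n:ℝ))) ≤ S (k+1+n+1) k (((k:ℝ)+1)/((k:ℝ)+1+(n:ℝ)+1)) := by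
  have hn0 : (1:ℝ) ≤ (n:ℝ) := by exact_mod_cast hn
  obtain ⟨Mr, hMrdef⟩ : ∃ x:ℝ, x = (k:ℝ)+1+(n:ℝ) := ⟨_, rfl⟩
  obtain ⟨R, hRdef⟩ : ∃ x:ℝ, x = (k:ℝ)+1 := ⟨_, rfl⟩
  obtain ⟨C, hCdef⟩ : ∃ x:ℝ, x = ((k+1+n).choose k : ℝ) := ⟨_, rfl⟩
  have hR : (0:ℝ) < R := by rw [hRdef]; positivity
  have hMr : (0:ℝ) < Mr := by rw [hMrdef]; positivity
  have hMr1 : (0:ℝ) < Mr + 1 := by linarith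
  have hRMr : R ≤ Mr := by rw [hRdef, hMrdef]; linarith
  rw [show ((k:ℝ)+1+(n:ℝ)+1) = Mr + 1 from by rw [hMrdef], ← hMrdef, ← hRdef]
  have hp'p : R/(Mr+1) < R/Mr := by
    apply div_lt_div_of_pos_left hR hMr
    linarith
  have hp'0 : 0 < R/(Mr+1) := by positivity
  have hp1 : R/Mr ≤ 1 := by
    rw [div_le_one hMr]
    exact hRMr
  -- MVT
  obtain ⟨ξ, hξ, hsl⟩ := exists_hasDerivAt_eq_slope (S (k+1+n) k)
    (fun x => -((((k+1) * (k+1+n).choose (k+1) : ℕ):ℝ) * x^k * (1-x)^((k+1+n)-(k+1)))) hp'p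
    (fun x _ => (hasDerivAt_S (k+1+n) k x).continuousAt.continuousWithinAt)
    (fun x _ => hasDerivAt_S (k+1+n) k x)
  have hsub : (k+1+n)-(k+1) = n := by omega
  rw [hsub] at hsl
  have hne : R/Mr - R/(Mr+1) ≠ 0 := ne_of_gt (sub_pos.2 hp'p)
  rw [eq_div_iff hne] at hsl
  have hpas := pascal_S (k+1+n) k (by omega) (R/(Mr+1))
  have hsub2 : (k+1+n)-k = n+1 := by omega
  rw [hsub2, ← hCdef] at hpas
  -- identities
  have hcc : (((k+1) * (k+1+n).choose (k+1) : ℕ):ℝ) = C * ((n:ℝ)+1) := by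
    have hnat : (k+1) * (k+1+n).choose (k+1) = (k+1+n).choose k * (n+1) := by
      have h := Nat.choose_succ_right_eq (k+1+n) k
      have h2 : (k+1+n) - k = n+1 := by omega
      rw [h2] at h
      rw [mul_comm (k+1) ((k+1+n).choose (k+1))]
      exact h
    rw [hnat, hCdef]
    push_cast
    ring
  rw [hcc] at hsl
  have hC0 : (0:ℝ) ≤ C := by rw [hCdef]; positivity
  have hv1 : 1 - R/(Mr+1) = ((n:ℝ)+1)/(Mr+1) := by
    rw [show ((n:ℝ)+1) = (Mr+1) - R from by rw [hMrdef, hRdef]; ring]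
    rw [sub_div, div_self (ne_of_gt hMr1)]
  have hv2 : 1 - R/Mr = (n:ℝ)/Mr := by
    rw [show ((n:ℝ)) = Mr - R from by rw [hMrdef, hRdef]; ring]
    rw [sub_div, div_self (ne_of_gt hMr)]
  have hv3 : R/Mr - R/(Mr+1) = R/(Mr*(Mr+1)) := by
    rw [div_sub_div _ _ (ne_of_gt hMr) (ne_of_gt hMr1)]
    congr 1
    ring
  have hg := gmin k n (R/(Mr+1)) (R/Mr) ξ hp'0.le hξ.1.le hξ.2.le hp1
  have hkey : C * (R/(Mr+1))^(k+1) * (1-R/(Mr+1))^(n+1)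
      ≤ (R/Mr - R/(Mr+1)) * (C * ((n:ℝ)+1) * ξ^k * (1-ξ)^n) := by
    rcases min_cases ((R/(Mr+1))^k * (1-R/(Mr+1))^n) ((R/Mr)^k * (1-R/Mr)^n) with
      ⟨hmeq, _⟩ | ⟨hmeq, _⟩
    · -- min attained at p'
      have hgg : (R/(Mr+1))^k * (1-R/(Mr+1))^n ≤ ξ^k * (1-ξ)^n := by
        rw [← hmeq]; exact hg
      have hstep : (R/(Mr+1)) * (1-R/(Mr+1)) ≤ (R/Mr - R/(Mr+1)) * ((n:ℝ)+1) := by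
        rw [hv1, hv3]
        rw [div_mul_div_comm, div_mul_eq_mul_div, div_le_div_iff₀ (by positivity) (by positivity)]
        nlinarith [mul_pos (mul_pos hR (show (0:ℝ) < (n:ℝ)+1 by linarith))
          (show (0:ℝ) < Mr+1 by linarith), hMr, hR, hn0]
      have hA0 : (0:ℝ) ≤ (R/(Mr+1))^k * (1-R/(Mr+1))^n := by
        have h2 : (0:ℝ) ≤ 1-R/(Mr+1) := by rw [hv1]; positivity
        positivity
      calc C * (R/(Mr+1))^(k+1) * (1-R/(Mr+1))^(n+1)
          = (C * ((R/(Mr+1))^k * (1-R/(Mr+1))^n))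
              * ((R/(Mr+1)) * (1-R/(Mr+1))) := by
            rw [pow_succ, pow_succ]; ring
        _ ≤ (C * ((R/(Mr+1))^k * (1-R/(Mr+1))^n))
              * ((R/Mr - R/(Mr+1)) * ((n:ℝ)+1)) :=
            mul_le_mul_of_nonneg_left hstep (mul_nonneg hC0 hA0)
        _ = (R/Mr - R/(Mr+1)) * ((C * ((n:ℝ)+1)) * ((R/(Mr+1))^k * (1-R/(Mr+1))^n)) := by ring
        _ ≤ (R/Mr - R/(Mr+1)) * ((C * ((n:ℝ)+1)) * (ξ^k * (1-ξ)^n)) := by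
            apply mul_le_mul_of_nonneg_left
            · apply mul_le_mul_of_nonneg_left hgg
              positivity
            · linarith [hp'p]
        _ = (R/Mr - R/(Mr+1)) * (C * ((n:ℝ)+1) * ξ^k * (1-ξ)^n) := by ring
    · -- min attained at p
      have hgg : (R/Mr)^k * (1-R/Mr)^n ≤ ξ^k * (1-ξ)^n := by
        rw [← hmeq]; exact hg
      have hL0 : ((n:ℝ)+1)^n * Mr^(k+1+n) ≤ (Mr+1)^(k+1+n) * (n:ℝ)^n := by
        have h := L0 n (k+1+n) hn (by omega)
        have hc1 : ((k+1+n : ℕ):ℝ) = Mr := by rw [hMrdef]; push_cast; ring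
        rw [hc1] at h
        exact h
      have hstep : (R/(Mr+1))^(k+1) * (1-R/(Mr+1))^(n+1)
          ≤ (R/Mr - R/(Mr+1)) * ((n:ℝ)+1) * ((R/Mr)^k * (1-R/Mr)^n) := by
        have eL : (R/(Mr+1))^(k+1) * (((n:ℝ)+1)/(Mr+1))^(n+1)
            = (R^(k+1) * ((n:ℝ)+1)^(n+1)) / ((Mr+1)^(k+1) * (Mr+1)^(n+1)) := by
          rw [div_pow, div_pow, div_mul_div_comm]
        have eR : R/(Mr*(Mr+1)) * ((n:ℝ)+1) * ((R/Mr)^k * ((n:ℝ)/Mr)^n)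
            = (R * ((n:ℝ)+1) * (R^k * (n:ℝ)^n)) / (Mr*(Mr+1) * (Mr^k * Mr^n)) := by
          rw [div_pow, div_pow, div_mul_div_comm, div_mul_eq_mul_div, div_mul_div_comm]
        rw [hv1, hv2, hv3, eL, eR, div_le_div_iff₀ (by positivity) (by positivity)]
        calc R^(k+1) * ((n:ℝ)+1)^(n+1) * (Mr*(Mr+1) * (Mr^k * Mr^n))
            = (R^(k+1) * ((n:ℝ)+1) * (Mr+1)) * (((n:ℝ)+1)^n * Mr^(k+1+n)) := by
              rw [pow_succ ((n:ℝ)+1) n, pow_add Mr (k+1) n, pow_succ Mr k]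
              ring
          _ ≤ (R^(k+1) * ((n:ℝ)+1) * (Mr+1)) * ((Mr+1)^(k+1+n) * (n:ℝ)^n) := by
              apply mul_le_mul_of_nonneg_left hL0
              positivity
          _ = R * ((n:ℝ)+1) * (R^k * (n:ℝ)^n) * ((Mr+1)^(k+1) * (Mr+1)^(n+1)) := by
              rw [pow_add (Mr+1) (k+1) n, pow_succ (Mr+1) k, pow_succ (Mr+1) n, pow_succ R k]
              ring
      calc C * (R/(Mr+1))^(k+1) * (1-R/(Mr+1))^(n+1)
          = C * ((R/(Mr+1))^(k+1) * (1-R/(Mr+1))^(n+1)) := by ring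
        _ ≤ C * ((R/Mr - R/(Mr+1)) * ((n:ℝ)+1) * ((R/Mr)^k * (1-R/Mr)^n)) :=
            mul_le_mul_of_nonneg_left hstep hC0
        _ = (R/Mr - R/(Mr+1)) * ((C * ((n:ℝ)+1)) * ((R/Mr)^k * (1-R/Mr)^n)) := by ring
        _ ≤ (R/Mr - R/(Mr+1)) * ((C * ((n:ℝ)+1)) * (ξ^k * (1-ξ)^n)) := by
            apply mul_le_mul_of_nonneg_left
            · apply mul_le_mul_of_nonneg_left hgg
              positivity
            · linarith [hp'p]
        _ = (R/Mr - R/(Mr+1)) * (C * ((n:ℝ)+1) * ξ^k * (1-ξ)^n) := by ring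
  -- combine
  have hz : S (k+1+n) k (R/Mr) - S (k+1+n) k (R/(Mr+1))
      = -((R/Mr - R/(Mr+1)) * (C * ((n:ℝ)+1) * ξ^k * (1-ξ)^n)) := by
    linear_combination -hsl
  rw [hpas]
  linarith [hkey, hz]

/-- Base case: at `m = r+1` the value is at least 1/4. -/
lemma base_case (k : ℕ) : (1:ℝ)/4 ≤ S (k+2) k (((k:ℝ)+1)/((k:ℝ)+2)) := by
  have hk2 : (0:ℝ) < (k:ℝ)+2 := by positivity
  set q : ℝ := ((k:ℝ)+1)/((k:ℝ)+2) with hq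
  have hone := sum_eq_one (k+2) q
  rw [Finset.sum_range_succ, Finset.sum_range_succ] at hone
  have hch1 : (k+2).choose (k+2) = 1 := Nat.choose_self _
  have hch2 : (k+2).choose (k+1) = k+2 := Nat.choose_succ_self_right (k+1)
  have he1 : (k+2)-(k+2) = 0 := by omega
  have he2 : (k+2)-(k+1) = 1 := by omega
  rw [hch1, hch2, he1, he2, pow_zero, pow_one] at hone
  -- hone : S (k+2) k q + (k+2) * q^(k+1) * (1-q) + 1 * q^(k+2) * 1 = 1
  push_cast at hone
  have hSval : S (k+2) k q = 1 - ((k:ℝ)+2) * q^(k+1) * (1-q) - q^(k+2) := by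
    unfold S
    push_cast
    linarith [hone]
  have h1q : 1 - q = 1/((k:ℝ)+2) := by
    rw [hq]
    field_simp
    try norm_num
  have hterm : ((k:ℝ)+2) * q^(k+1) * (1-q) = q^(k+1) := by
    rw [h1q]
    field_simp
  rw [hSval, hterm]
  -- need q^(k+1) + q^(k+2) ≤ 3/4
  have hL := L1 (k+1) (by omega)
  push_cast at hL
  -- hL : 4*(2*((k:ℝ)+1)+1)*((k:ℝ)+1)^(k+1) ≤ 3*((k:ℝ)+1+1)^(k+1+1)
  rw [show ((k:ℝ)+1+1) = (k:ℝ)+2 from by ring, show k+1+1 = k+2 from rfl] at hL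
  have hqsum : q^(k+1) + q^(k+2) = (((k:ℝ)+1)^(k+1)*(2*(k:ℝ)+3)) / ((k:ℝ)+2)^(k+2) := by
    rw [hq, div_pow, div_pow]
    rw [div_add_div _ _ (by positivity) (by positivity), div_eq_div_iff (by positivity) (by positivity)]
    rw [show k+2 = (k+1)+1 from rfl, pow_succ ((k:ℝ)+1), pow_succ ((k:ℝ)+2)]
    ring
  have hfrac : (((k:ℝ)+1)^(k+1)*(2*(k:ℝ)+3)) / ((k:ℝ)+2)^(k+2) ≤ 3/4 := by
    rw [div_le_div_iff₀ (by positivity) (by norm_num)]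
    nlinarith [hL]
  have hs : q^(k+1) + q^(k+2) ≤ 3/4 := by rw [hqsum]; exact hfrac
  linarith [hs]

/-- Chain: for all `m ≥ k+2`, the CDF at pivot `(k+1)/m` is at least 1/4. -/
lemma chain (k m : ℕ) (hm : k+2 ≤ m) : (1:ℝ)/4 ≤ S m k (((k:ℝ)+1)/(m:ℝ)) := by
  induction m, hm using Nat.le_induction with
  | base =>
      have h := base_case k
      have hc : ((k+2:ℕ):ℝ) = (k:ℝ)+2 := by push_cast; ring
      rw [hc]
      exact h
  | succ m hm ih =>
      obtain ⟨n, hn1, rfl⟩ : ∃ n, 1 ≤ n ∧ m = k+1+n := ⟨m-(k+1), by omega, by omega⟩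
      have hmono := mono_step k n hn1
      have e1 : ((k+1+n:ℕ):ℝ) = (k:ℝ)+1+(n:ℝ) := by push_cast; ring
      have e2 : ((k+1+n+1:ℕ):ℝ) = (k:ℝ)+1+(n:ℝ)+1 := by push_cast; ring
      rw [e1] at ih
      rw [e2]
      exact le_trans ih hmono

set_option maxHeartbeats 1000000 in
theorem main_aux (m : ℕ) (hm : 0 < m) (p : ℝ)
    (hp₁ : 0 ≤ p) (hp₂ : p < 1 - 1 / (m : ℝ)) :
    (1 : ℝ) / 4 <
      ∑ j ∈ Finset.Iic ⌊(m : ℝ) * p⌋₊,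
        (m.choose j : ℝ) * p ^ j * (1 - p) ^ (m - j) := by
  have hm0 : (0:ℝ) < m := by exact_mod_cast hm
  have hmp0 : (0:ℝ) ≤ (m:ℝ)*p := by positivity
  set k := ⌊(m:ℝ)*p⌋₊ with hkdef
  have hk1 : ((k:ℝ)) ≤ (m:ℝ)*p := Nat.floor_le hmp0
  have hk2 : (m:ℝ)*p < (k:ℝ)+1 := Nat.lt_floor_add_one _
  have hmlt : (m:ℝ)*p < (m:ℝ)-1 := by
    have h := mul_lt_mul_of_pos_left hp₂ hm0
    have h2 : (m:ℝ)*(1-1/(m:ℝ)) = (m:ℝ)-1 := by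
      field_simp
    linarith
  have hkm : k+2 ≤ m := by
    have h2 : (k:ℝ)+1 < (m:ℝ) := by linarith
    have h3 : k+1 < m := by exact_mod_cast h2
    omega
  have hIic : Finset.Iic k = Finset.range (k+1) := by
    ext x
    simp [Nat.lt_succ_iff]
  rw [hIic]
  show (1:ℝ)/4 < S m k p
  have hchain := chain k m hkm
  have hplt : p < ((k:ℝ)+1)/(m:ℝ) := by
    rw [lt_div_iff₀ hm0]
    linarith [hk2]
  obtain ⟨ξ, hξ, hsl⟩ := exists_hasDerivAt_eq_slope (S m k)
    (fun x => -((((k+1) * m.choose (k+1) : ℕ):ℝ) * x^k * (1-x)^(m-(k+1)))) hplt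
    (fun x _ => (hasDerivAt_S m k x).continuousAt.continuousWithinAt)
    (fun x _ => hasDerivAt_S m k x)
  have hξ0 : 0 < ξ := lt_of_le_of_lt hp₁ hξ.1
  have hq1le : ((k:ℝ)+1)/(m:ℝ) ≤ 1 := by
    rw [div_le_one hm0]
    have : (k:ℝ)+2 ≤ (m:ℝ) := by exact_mod_cast hkm
    linarith
  have hξ1 : ξ < 1 := lt_of_lt_of_le hξ.2 hq1le
  have hCpos : (0:ℝ) < (((k+1) * m.choose (k+1) : ℕ):ℝ) := by
    have h1 : 0 < m.choose (k+1) := Nat.choose_pos (by omega)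
    have h2 : 0 < (k+1) * m.choose (k+1) := Nat.mul_pos (by omega) h1
    exact_mod_cast h2
  have hder_neg : -((((k+1) * m.choose (k+1) : ℕ):ℝ) * ξ^k * (1-ξ)^(m-(k+1))) < 0 := by
    have hp1 : (0:ℝ) < ξ^k := pow_pos hξ0 k
    have hp2 : (0:ℝ) < (1-ξ)^(m-(k+1)) := pow_pos (by linarith) _
    have : (0:ℝ) < (((k+1) * m.choose (k+1) : ℕ):ℝ) * ξ^k * (1-ξ)^(m-(k+1)) := by positivity
    linarith
  have hq1p : (0:ℝ) < ((k:ℝ)+1)/(m:ℝ) - p := sub_pos.2 hplt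
  have hnum : S m k (((k:ℝ)+1)/(m:ℝ)) - S m k p < 0 := by
    by_contra hcon
    push_neg at hcon
    have hdiv : (0:ℝ) ≤ (S m k (((k:ℝ)+1)/(m:ℝ)) - S m k p) / (((k:ℝ)+1)/(m:ℝ) - p) :=
      div_nonneg hcon hq1p.le
    rw [← hsl] at hdiv
    linarith [hder_neg]
  linarith [hchain, hnum]

end BinomQ

/-- For a binomial random variable `X ~ B(m, p)` with `0 ≤ p < 1 - 1/m`,
the probability that `X` is at most its expected value `m·p` exceeds `1/4`. -/
theorem binomial_le_mean_gt_quarter (m : ℕ) (hm : 0 < m) (p : ℝ)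
    (hp₁ : 0 ≤ p) (hp₂ : p < 1 - 1 / (m : ℝ)) :
    (1 : ℝ) / 4 <
      ∑ j ∈ Finset.Iic ⌊(m : ℝ) * p⌋₊,
        (m.choose j : ℝ) * p ^ j * (1 - p) ^ (m - j) := by
  exact BinomQ.main_aux m hm p hp₁ hp₂
end

section
/- Let m be a positive integer and k an integer with 1 ≤ k ≤ m − 1. For every real p with k/m < p ≤ (k+1)/m, the probability that a B(m, p)-distributed random variable X satisfies X ≥ m·p is at least the probability that a B(m, k/m)-distributed random variable Y satisfies Y ≥ k + 1. Equivalently, the sum over j from ⌈m·p⌉ to m of C(m, j)·p^j·(1−p)^(m−j) is at least the sum over j from k+1 to m of C(m, j)·(k/m)^j·(1−k/m)^(m−j). -/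
/-- Monotonicity of `x ↦ x^j * (1-x)^(m-j)` up to `j/m`. -/
lemma mono_term (m j : ℕ) (hj1 : 1 ≤ j) (hjm : j ≤ m) (q p : ℝ) (h0 : 0 ≤ q)
    (hqp : q ≤ p) (hpj : (m : ℝ) * p ≤ j) :
    q ^ j * (1 - q) ^ (m - j) ≤ p ^ j * (1 - p) ^ (m - j) := by
  rcases eq_or_lt_of_le hjm with rfl | hjm
  · simp only [Nat.sub_self, pow_zero, mul_one]
    exact pow_le_pow_left₀ h0 hqp _
  · have hm0 : (0 : ℝ) < m := by
      have : 0 < m := by omega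
      exact_mod_cast this
    have hp1 : p < 1 := by
      have : (m : ℝ) * p ≤ j := hpj
      have hjm' : (j : ℝ) < m := by exact_mod_cast hjm
      nlinarith
    set f : ℝ → ℝ := fun x => x ^ j * (1 - x) ^ (m - j) with hf
    have key : MonotoneOn f (Set.Icc q p) := by
      rcases eq_or_lt_of_le hqp with rfl | hqp'
      · intro a ha b hb hab
        have : a = b := le_antisymm hab (le_trans hb.2 ha.1)
        rw [this]
      apply monotoneOn_of_deriv_nonneg (convex_Icc q p)
      · exact (Continuous.continuousOn (by continuity))
      · intro x hx
        apply DifferentiableAt.differentiableWithinAt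
        exact ((differentiable_pow j).differentiableAt).mul
          (((differentiable_pow (m - j)).comp (by fun_prop)).differentiableAt)
      · intro x hx
        rw [interior_Icc] at hx
        have hx0 : 0 < x := lt_of_le_of_lt h0 hx.1
        have hx1 : x < 1 := lt_of_lt_of_le hx.2 hp1.le
        have hd : HasDerivAt f ((j : ℝ) * x ^ (j - 1) * (1 - x) ^ (m - j)
            + x ^ j * (((m - j : ℕ) : ℝ) * (1 - x) ^ (m - j - 1) * (-1))) x := by
          have h1 : HasDerivAt (fun x : ℝ => x ^ j) ((j : ℝ) * x ^ (j - 1)) x :=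
            hasDerivAt_pow j x
          have h2 : HasDerivAt (fun x : ℝ => (1 - x) ^ (m - j))
              (((m - j : ℕ) : ℝ) * (1 - x) ^ (m - j - 1) * (-1)) x := by
            have h3 : HasDerivAt (fun x : ℝ => 1 - x) (-1) x := by
              simpa using (hasDerivAt_id x).const_sub 1
            exact (hasDerivAt_pow (m - j) (1 - x)).comp x h3
          exact h1.mul h2
        rw [hd.deriv]
        have hmj1 : 1 ≤ m - j := by omega
        have e1 : x ^ j = x * x ^ (j - 1) := by
          rw [← pow_succ']; congr 1; omega
        have e2 : (1 - x) ^ (m - j) = (1 - x) * (1 - x) ^ (m - j - 1) := by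
          rw [← pow_succ']; congr 1; omega
        have hmx : (m : ℝ) * x ≤ j := by
          have := hx.2.le
          nlinarith
        have hmjr : ((m - j : ℕ) : ℝ) = (m : ℝ) - j := Nat.cast_sub hjm.le
        have ha : (0:ℝ) ≤ x ^ (j - 1) := by positivity
        have hb : (0:ℝ) ≤ (1 - x) ^ (m - j - 1) := pow_nonneg (by linarith) _
        rw [e1, e2, hmjr]
        have expand : (j : ℝ) * x ^ (j - 1) * ((1 - x) * (1 - x) ^ (m - j - 1))
            + x * x ^ (j - 1) * (((m : ℝ) - j) * (1 - x) ^ (m - j - 1) * (-1))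
            = x ^ (j - 1) * (1 - x) ^ (m - j - 1) * ((j : ℝ) - m * x) := by ring
        rw [expand]
        have : (0:ℝ) ≤ (j : ℝ) - m * x := by linarith
        positivity
    exact key ⟨le_refl q, hqp⟩ ⟨hqp, le_refl p⟩ hqp

/-- Lemma 1: for `1 ≤ k ≤ m - 1` and `k/m < p ≤ (k+1)/m`,
`P_{X ~ B(m,p)}[X ≥ m·p] ≥ P_{Y ~ B(m, k/m)}[Y ≥ k + 1]`. -/
theorem binomial_ge_mean_lower_bound (m k : ℕ) (hm : 0 < m) (hk₁ : 1 ≤ k)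
    (hk₂ : k ≤ m - 1) (p : ℝ) (hp₁ : (k : ℝ) / m < p) (hp₂ : p ≤ ((k : ℝ) + 1) / m) :
    ∑ j ∈ Finset.Icc (k + 1) m,
        (m.choose j : ℝ) * ((k : ℝ) / m) ^ j * (1 - (k : ℝ) / m) ^ (m - j) ≤
      ∑ j ∈ Finset.Icc ⌈(m : ℝ) * p⌉₊ m,
        (m.choose j : ℝ) * p ^ j * (1 - p) ^ (m - j) := by
  have hm0 : (0 : ℝ) < m := by positivity
  have hmp_le : (m : ℝ) * p ≤ (k : ℝ) + 1 := by
    rw [le_div_iff₀ hm0] at hp₂; nlinarith [hp₂]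
  have hmp_gt : (k : ℝ) < (m : ℝ) * p := by
    rw [div_lt_iff₀ hm0] at hp₁; linarith [hp₁]
  have hceil : ⌈(m : ℝ) * p⌉₊ = k + 1 := by
    apply le_antisymm
    · exact Nat.ceil_le.mpr (by push_cast; linarith)
    · exact Nat.lt_ceil.mpr (by push_cast; linarith)
  rw [hceil]
  apply Finset.sum_le_sum
  intro j hj
  simp only [Finset.mem_Icc] at hj
  have hq0 : (0 : ℝ) ≤ (k : ℝ) / m := by positivity
  have hjm : j ≤ m := hj.2
  have hj1 : 1 ≤ j := by omega
  have hpj : (m : ℝ) * p ≤ j := by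
    have : (k : ℝ) + 1 ≤ j := by exact_mod_cast hj.1
    linarith
  have := mono_term m j hj1 hjm ((k : ℝ) / m) p hq0 hp₁.le hpj
  calc (m.choose j : ℝ) * ((k : ℝ) / m) ^ j * (1 - (k : ℝ) / m) ^ (m - j)
      = (m.choose j : ℝ) * (((k : ℝ) / m) ^ j * (1 - (k : ℝ) / m) ^ (m - j)) := by ring
    _ ≤ (m.choose j : ℝ) * (p ^ j * (1 - p) ^ (m - j)) := by
        apply mul_le_mul_of_nonneg_left this (by positivity)
    _ = (m.choose j : ℝ) * p ^ j * (1 - p) ^ (m - j) := by ring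
end

section
/- Let m ≥ 2 be an integer. For every real p with 1/m < p < 1, the probability that a B(m, p)-distributed random variable X satisfies X ≥ m·p is at least 1 minus the maximum, over integers k with 1 ≤ k ≤ m − 1, of the probability that a B(m, k/m)-distributed random variable Y satisfies Y ≤ k. -/
lemma binom_cdf_hasDeriv (m k : ℕ) (hk : k < m) (q : ℝ) :
    HasDerivAt (fun x : ℝ => ∑ j ∈ Finset.Iic k, (m.choose j : ℝ) * x ^ j * (1 - x) ^ (m - j))
      (-((m : ℝ) * ((m-1).choose k) * q ^ k * (1 - q) ^ (m - 1 - k))) q := by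
  have hterm : ∀ j ∈ Finset.Iic k,
      HasDerivAt (fun x : ℝ => (m.choose j : ℝ) * x ^ j * (1 - x) ^ (m - j))
        (((m.choose j : ℝ) * ((j:ℝ) * q ^ (j-1))) * (1-q)^(m-j)
          + ((m.choose j : ℝ) * q ^ j) * (((m-j:ℕ):ℝ) * (1-q)^(m-j-1) * (-1))) q := by
    intro j _
    have h1 : HasDerivAt (fun x : ℝ => (m.choose j : ℝ) * x ^ j)
        ((m.choose j : ℝ) * ((j:ℝ) * q ^ (j-1))) q := (hasDerivAt_pow j q).const_mul _
    have hsub : HasDerivAt (fun x : ℝ => 1 - x) (-1) q := (hasDerivAt_id q).const_sub 1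
    have h2 : HasDerivAt (fun x : ℝ => (1 - x)^(m-j))
        (((m-j:ℕ):ℝ) * (1-q)^(m-j-1) * (-1)) q :=
      (hasDerivAt_pow (m-j) (1-q)).comp q hsub
    exact h1.mul h2
  have hsum : HasDerivAt (fun x : ℝ => ∑ j ∈ Finset.Iic k, (m.choose j : ℝ) * x ^ j * (1 - x) ^ (m - j))
      (∑ j ∈ Finset.Iic k, (((m.choose j : ℝ) * ((j:ℝ) * q ^ (j-1))) * (1-q)^(m-j)
        + ((m.choose j : ℝ) * q ^ j) * (((m-j:ℕ):ℝ) * (1-q)^(m-j-1) * (-1)))) q :=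
    HasDerivAt.fun_sum hterm
  convert hsum using 1
  -- telescoping
  set t : ℕ → ℝ := fun i => (m : ℝ) * ((m-1).choose i) * q ^ i * (1 - q) ^ (m - 1 - i) with ht
  set T : ℕ → ℝ := fun i => match i with | 0 => 0 | (i+1) => t i with hT
  have hper : ∀ j ∈ Finset.Iic k,
      ((m.choose j : ℝ) * ((j:ℝ) * q ^ (j-1))) * (1-q)^(m-j)
        + ((m.choose j : ℝ) * q ^ j) * (((m-j:ℕ):ℝ) * (1-q)^(m-j-1) * (-1))
      = T j - T (j+1) := by
    intro j hj
    have hjm : j < m := lt_of_le_of_lt (Finset.mem_Iic.mp hj) hk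
    match j with
    | 0 =>
      simp only [hT, ht]
      have e1 : m - 0 - 1 = m - 1 := by omega
      simp [e1]
    | (i+1) =>
      have c1 : (m : ℕ) * ((m-1).choose i) = m.choose (i+1) * (i+1) := by
        have := Nat.add_one_mul_choose_eq (m-1) i
        have hm1 : m - 1 + 1 = m := by omega
        simpa [Nat.succ_eq_add_one, hm1] using this
      have c2 : ((m-1).choose (i+1)) * m = m.choose (i+1) * (m - (i+1)) := by
        have := Nat.choose_mul_succ_eq (m-1) (i+1)
        have hm1 : m - 1 + 1 = m := by omega
        rwa [hm1] at this
      have e1 : m - (i+1) = m - 1 - i := by omega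
      have e2 : m - (i+1) - 1 = m - 1 - (i+1) := by omega
      have c1' : ((m.choose (i+1) : ℝ)) * ((i+1 : ℕ) : ℝ) = (m : ℝ) * ((m-1).choose i) := by
        exact_mod_cast congrArg (Nat.cast (R := ℝ)) c1.symm
      have c2' : ((m-1).choose (i+1) : ℝ) * m = (m.choose (i+1) : ℝ) * ((m - (i+1) : ℕ) : ℝ) := by
        exact_mod_cast congrArg (Nat.cast (R := ℝ)) c2
      simp only [hT, ht]
      rw [e1, e2] at *
      push_cast at c1' c2' ⊢
      linear_combination (q^i*(1-q)^(m-1-i)) * c1' + (q^(i+1)*(1-q)^(m-1-(i+1))) * c2'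
  rw [Finset.sum_congr rfl hper]
  have : Finset.Iic k = Finset.range (k+1) := by
    ext x; simp [Nat.lt_succ_iff]
  rw [this, Finset.sum_range_sub' T (k+1)]
  simp [hT, ht]

lemma binom_cdf_anti (m k : ℕ) (hk : k < m) :
    AntitoneOn (fun x : ℝ => ∑ j ∈ Finset.Iic k, (m.choose j : ℝ) * x ^ j * (1 - x) ^ (m - j))
      (Set.Icc (0:ℝ) 1) := by
  apply antitoneOn_of_deriv_nonpos (convex_Icc 0 1)
  · exact (Continuous.continuousOn (by
      exact continuous_finset_sum _ (fun j _ => by continuity)))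
  · exact Differentiable.differentiableOn
      (fun y => (binom_cdf_hasDeriv m k hk y).differentiableAt)
  · intro x hx
    rw [interior_Icc] at hx
    rw [(binom_cdf_hasDeriv m k hk x).deriv]
    have h1 : (0:ℝ) ≤ x ^ k := pow_nonneg (le_of_lt hx.1) _
    have h2 : (0:ℝ) ≤ (1 - x) ^ (m - 1 - k) := pow_nonneg (by linarith [hx.2]) _
    have h3 : (0:ℝ) ≤ (m:ℝ) * ((m-1).choose k) := by positivity
    have := mul_nonneg (mul_nonneg h3 h1) h2
    linarith

/-- Corollary 1: for `m ≥ 2` and `1/m < p < 1`,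
`P_{X ~ B(m,p)}[X ≥ m·p] ≥ 1 - max_{1 ≤ k ≤ m-1} P_{Y ~ B(m, k/m)}[Y ≤ k]`. -/
theorem binomial_ge_mean_ge_one_sub_max (m : ℕ) (hm : 2 ≤ m) (p : ℝ)
    (hp₁ : 1 / (m : ℝ) < p) (hp₂ : p < 1) :
    1 - (Finset.Icc 1 (m - 1)).sup'
        (Finset.nonempty_Icc.mpr (by omega))
        (fun k => ∑ j ∈ Finset.Iic k,
          (m.choose j : ℝ) * ((k : ℝ) / m) ^ j * (1 - (k : ℝ) / m) ^ (m - j)) ≤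
      ∑ j ∈ Finset.Icc ⌈(m : ℝ) * p⌉₊ m,
        (m.choose j : ℝ) * p ^ j * (1 - p) ^ (m - j) := by
  have hm0 : (0:ℝ) < m := by positivity
  have hp0 : 0 < p := lt_trans (by positivity) hp₁
  have hmp1 : 1 < (m:ℝ) * p := by
    rw [div_lt_iff₀ hm0] at hp₁; linarith
  have hceil2 : 2 ≤ ⌈(m : ℝ) * p⌉₊ := by
    have : (1:ℕ) < ⌈(m : ℝ) * p⌉₊ := Nat.lt_ceil.mpr (by exact_mod_cast hmp1)
    omega
  have hceilm : ⌈(m : ℝ) * p⌉₊ ≤ m := Nat.ceil_le.mpr (by nlinarith)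
  set k₀ : ℕ := ⌈(m : ℝ) * p⌉₊ - 1 with hk₀
  have hk₀1 : 1 ≤ k₀ := by omega
  have hk₀m : k₀ < m := by omega
  have hk₀lt : (k₀ : ℝ) < (m:ℝ) * p := Nat.lt_ceil.mp (by omega)
  have hq₀le : (k₀ : ℝ) / m ≤ p := by rw [div_le_iff₀ hm0]; nlinarith
  have hq₀mem : (k₀ : ℝ) / m ∈ Set.Icc (0:ℝ) 1 := by
    constructor
    · positivity
    · rw [div_le_one hm0]; exact_mod_cast le_of_lt hk₀m
  have hpmem : p ∈ Set.Icc (0:ℝ) 1 := ⟨le_of_lt hp0, le_of_lt hp₂⟩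
  have hmono := binom_cdf_anti m k₀ hk₀m hq₀mem hpmem hq₀le
  have hsup : (∑ j ∈ Finset.Iic k₀,
        (m.choose j : ℝ) * ((k₀ : ℝ) / m) ^ j * (1 - (k₀ : ℝ) / m) ^ (m - j)) ≤
      (Finset.Icc 1 (m - 1)).sup'
        (Finset.nonempty_Icc.mpr (by omega))
        (fun k => ∑ j ∈ Finset.Iic k,
          (m.choose j : ℝ) * ((k : ℝ) / m) ^ j * (1 - (k : ℝ) / m) ^ (m - j)) := by
    have hmem : k₀ ∈ Finset.Icc 1 (m-1) := Finset.mem_Icc.mpr ⟨hk₀1, by omega⟩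
    exact Finset.le_sup' (fun k => ∑ j ∈ Finset.Iic k,
      (m.choose j : ℝ) * ((k : ℝ) / m) ^ j * (1 - (k : ℝ) / m) ^ (m - j)) hmem
  -- total probability is 1
  have htotal : ∑ j ∈ Finset.range (m+1), (m.choose j : ℝ) * p ^ j * (1 - p) ^ (m - j) = 1 := by
    have := add_pow p (1-p) m
    simp only [add_sub_cancel, one_pow] at this
    rw [show ∑ j ∈ Finset.range (m+1), (m.choose j : ℝ) * p ^ j * (1 - p) ^ (m - j)
        = ∑ j ∈ Finset.range (m+1), p ^ j * (1 - p) ^ (m - j) * (m.choose j : ℝ) from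
      Finset.sum_congr rfl (fun j _ => by ring), ← this]
  -- split
  have hsplit : ∑ j ∈ Finset.range (m+1), (m.choose j : ℝ) * p ^ j * (1 - p) ^ (m - j)
      = (∑ j ∈ Finset.Iic k₀, (m.choose j : ℝ) * p ^ j * (1 - p) ^ (m - j))
        + ∑ j ∈ Finset.Icc ⌈(m : ℝ) * p⌉₊ m, (m.choose j : ℝ) * p ^ j * (1 - p) ^ (m - j) := by
    rw [show Finset.range (m+1) = Finset.Iic m from by ext x; simp [Nat.lt_succ_iff]]
    rw [← Finset.sum_union]
    · congr 1
      rw [show ⌈(m : ℝ) * p⌉₊ = k₀ + 1 from by omega, Finset.Icc_add_one_left_eq_Ioc]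
      ext x
      simp only [Finset.mem_Iic, Finset.mem_union, Finset.mem_Ioc]
      omega
    · rw [show ⌈(m : ℝ) * p⌉₊ = k₀ + 1 from by omega]
      simp only [Finset.disjoint_left, Finset.mem_Iic, Finset.mem_Icc]
      omega
  linarith
end

section
/- Let m ≥ 2 be an integer and k an integer with 1 ≤ k ≤ m − 1. With β_k = (1/(1+k))·(1 + 1/k)^(2/3), γ_{m,k} = 1/(m − k), and θ = 17/(3·2^(1/3)) − 3·2^(1/3), the following inequality holds: Φ[(β_k·θ + (1/3)·γ_{m,k}) / √(β_k + γ_{m,k})] ≤ Φ[(β_k·θ + 1/3) / √(β_k + 1)]. -/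
set_option maxHeartbeats 1000000


/-- The cumulative distribution function of the standard normal distribution. -/
noncomputable def stdNormalCDF (x : ℝ) : ℝ :=
  ∫ s in Set.Iic x, (1 / Real.sqrt (2 * Real.pi)) * Real.exp (-s ^ 2 / 2)

lemma stdNormal_integrable :
    MeasureTheory.Integrable (fun s : ℝ => (1 / Real.sqrt (2 * Real.pi)) * Real.exp (-s ^ 2 / 2)) := by
  have h : MeasureTheory.Integrable (fun s : ℝ => Real.exp (-(1/2 : ℝ) * s ^ 2)) :=
    integrable_exp_neg_mul_sq (by norm_num)
  have h2 := h.const_mul (1 / Real.sqrt (2 * Real.pi))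
  convert h2 using 2 with s
  ring_nf

lemma stdNormalCDF_mono : Monotone stdNormalCDF := by
  intro x y hxy
  unfold stdNormalCDF
  apply MeasureTheory.setIntegral_mono_set stdNormal_integrable.integrableOn
  · filter_upwards with s
    positivity
  · exact (Set.Iic_subset_Iic.mpr hxy).eventuallyLE

lemma cbrt2_bounds : 1.25 < (2:ℝ) ^ ((1:ℝ)/3) ∧ (2:ℝ) ^ ((1:ℝ)/3) < 1.27 := by
  have hc3 : ((2:ℝ) ^ ((1:ℝ)/3)) ^ (3:ℕ) = 2 := by
    rw [← Real.rpow_natCast ((2:ℝ) ^ ((1:ℝ)/3)) 3, ← Real.rpow_mul (by norm_num)]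
    norm_num
  have hcpos : (0:ℝ) < (2:ℝ) ^ ((1:ℝ)/3) := Real.rpow_pos_of_pos (by norm_num) _
  constructor
  · nlinarith [hc3, hcpos, sq_nonneg ((2:ℝ) ^ ((1:ℝ)/3) - 1.25), sq_nonneg ((2:ℝ) ^ ((1:ℝ)/3) + 1.25)]
  · nlinarith [hc3, hcpos, sq_nonneg ((2:ℝ) ^ ((1:ℝ)/3) - 1.27), sq_nonneg ((2:ℝ) ^ ((1:ℝ)/3) + 1.27)]

lemma poly_ineq (β γ θ : ℝ) (hβ : 0 < β) (hγ : 0 < γ) (hγ1 : γ ≤ 1)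
    (key : β * θ * (θ - 2/3) ≤ 1/9) :
    (β * θ + (1/3) * γ) ^ 2 * (β + 1) ≤ (β * θ + 1/3) ^ 2 * (β + γ) := by
  nlinarith [key, mul_nonneg (sub_nonneg.2 hγ1) hγ.le,
    mul_nonneg (sub_nonneg.2 hγ1) (mul_pos hβ hγ).le,
    mul_nonneg (mul_nonneg (sub_nonneg.2 hγ1) hβ.le) hγ.le,
    mul_pos hβ hγ, sq_nonneg (β*θ), hβ.le]


/-- Lemma 3: with `β_k = (1/(1+k))·(1+1/k)^(2/3)`, `γ_{m,k} = 1/(m-k)` and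
`θ = 17/(3·2^(1/3)) − 3·2^(1/3)`, one has
`Φ[(β_k θ + γ_{m,k}/3)/√(β_k + γ_{m,k})] ≤ Φ[(β_k θ + 1/3)/√(β_k + 1)]`. -/
theorem campPaulson_gamma_bound (m k : ℕ) (hm : 2 ≤ m) (hk₁ : 1 ≤ k)
    (hk₂ : k ≤ m - 1) :
    stdNormalCDF
        (((1 / (1 + (k : ℝ)) * (1 + 1 / (k : ℝ)) ^ ((2 : ℝ) / 3)) *
            (17 / (3 * (2 : ℝ) ^ ((1 : ℝ) / 3)) - 3 * (2 : ℝ) ^ ((1 : ℝ) / 3)) +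
          (1 / 3) * (1 / ((m : ℝ) - k))) /
          Real.sqrt (1 / (1 + (k : ℝ)) * (1 + 1 / (k : ℝ)) ^ ((2 : ℝ) / 3) +
            1 / ((m : ℝ) - k))) ≤
      stdNormalCDF
        (((1 / (1 + (k : ℝ)) * (1 + 1 / (k : ℝ)) ^ ((2 : ℝ) / 3)) *
            (17 / (3 * (2 : ℝ) ^ ((1 : ℝ) / 3)) - 3 * (2 : ℝ) ^ ((1 : ℝ) / 3)) +
          1 / 3) /
          Real.sqrt (1 / (1 + (k : ℝ)) * (1 + 1 / (k : ℝ)) ^ ((2 : ℝ) / 3) + 1)) := by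
  apply stdNormalCDF_mono
  set c : ℝ := (2:ℝ) ^ ((1:ℝ)/3) with hc
  obtain ⟨hc1, hc2⟩ := cbrt2_bounds
  have hcpos : (0:ℝ) < c := by linarith
  set θ : ℝ := 17 / (3 * c) - 3 * c with hθ
  set β : ℝ := 1 / (1 + (k : ℝ)) * (1 + 1 / (k : ℝ)) ^ ((2 : ℝ) / 3) with hβ
  set γ : ℝ := 1 / ((m : ℝ) - k) with hγ
  -- θ bounds
  have hθu : θ ≤ 0.79 := by
    have h1 : 17 / (3 * c) ≤ 68 / 15 := by
      rw [div_le_div_iff₀ (by positivity) (by norm_num)]; nlinarith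
    rw [hθ]; nlinarith
  have hθl : 0.65 ≤ θ := by
    have h1 : (1700 : ℝ) / 381 ≤ 17 / (3 * c) := by
      rw [div_le_div_iff₀ (by norm_num) (by positivity)]; nlinarith
    rw [hθ]; nlinarith
  -- k facts
  have hk : (1:ℝ) ≤ (k:ℝ) := by exact_mod_cast hk₁
  have hk0 : (0:ℝ) < (k:ℝ) := by linarith
  -- β bounds
  have hβpos : 0 < β := by
    rw [hβ]
    have : (0:ℝ) < (1 + 1 / (k : ℝ)) ^ ((2 : ℝ) / 3) := Real.rpow_pos_of_pos (by positivity) _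
    positivity
  have hβle : β ≤ 0.81 := by
    have h1 : (1 + 1 / (k : ℝ)) ^ ((2 : ℝ) / 3) ≤ (2:ℝ) ^ ((2 : ℝ) / 3) := by
      apply Real.rpow_le_rpow (by positivity) _ (by norm_num)
      have : 1 / (k:ℝ) ≤ 1 := by
        rw [div_le_one hk0]; exact hk
      linarith
    have h2 : (2:ℝ) ^ ((2 : ℝ) / 3) = c ^ (2:ℕ) := by
      rw [hc, ← Real.rpow_natCast ((2:ℝ) ^ ((1:ℝ)/3)) 2, ← Real.rpow_mul (by norm_num)]
      norm_num
    have h3 : c ^ (2:ℕ) ≤ 1.62 := by nlinarith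
    have h4 : 1 / (1 + (k : ℝ)) ≤ 1 / 2 := by
      rw [div_le_div_iff₀ (by linarith) (by norm_num)]; linarith
    have h5 : (0:ℝ) ≤ (1 + 1 / (k : ℝ)) ^ ((2 : ℝ) / 3) := by positivity
    rw [hβ]
    calc 1 / (1 + (k : ℝ)) * (1 + 1 / (k : ℝ)) ^ ((2 : ℝ) / 3)
        ≤ (1/2) * (1 + 1 / (k : ℝ)) ^ ((2 : ℝ) / 3) := by
          apply mul_le_mul_of_nonneg_right h4 h5
      _ ≤ (1/2) * 1.62 := by nlinarith
      _ = 0.81 := by norm_num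
  -- γ facts
  have hmk : (k:ℝ) + 1 ≤ (m:ℝ) := by
    have : k + 1 ≤ m := by omega
    exact_mod_cast this
  have hd1 : (1:ℝ) ≤ (m:ℝ) - k := by linarith
  have hγpos : 0 < γ := by rw [hγ]; positivity
  have hγ1 : γ ≤ 1 := by rw [hγ]; rw [div_le_one (by linarith)]; linarith
  clear_value c θ β γ
  -- key inequality
  have key : β * θ * (θ - 2/3) ≤ 1/9 := by
    have h0 : θ * (θ - 2/3) ≤ 39/400 := by
      nlinarith [mul_nonneg (sub_nonneg.2 hθl) (sub_nonneg.2 hθu)]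
    have h1 : β * (θ * (θ - 2/3)) ≤ β * (39/400) := mul_le_mul_of_nonneg_left h0 hβpos.le
    have h2 : β * (39/400) ≤ (81/100) * (39/400) :=
      mul_le_mul_of_nonneg_right (by linarith) (by norm_num)
    nlinarith [h1, h2]
  -- main argument inequality
  have hden1 : 0 < Real.sqrt (β + γ) := Real.sqrt_pos.2 (by linarith)
  have hden2 : 0 < Real.sqrt (β + 1) := Real.sqrt_pos.2 (by linarith)
  have hApos : 0 < β * θ := by nlinarith
  rw [div_le_div_iff₀ hden1 hden2]
  have hrw : ∀ a b : ℝ, 0 ≤ a → 0 ≤ b → a * Real.sqrt b = Real.sqrt (a ^ 2 * b) := by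
    intro a b ha hb
    rw [Real.sqrt_mul (sq_nonneg a), Real.sqrt_sq ha]
  rw [hrw _ _ (by nlinarith) (by linarith), hrw _ _ (by nlinarith) (by linarith)]
  exact Real.sqrt_le_sqrt (poly_ineq β γ θ hβpos hγpos hγ1 key)
end

section
/- Let m ≥ 2 be an integer and k an integer with 2 ≤ k ≤ m − 1. Then the probability that a B(m, k/m)-distributed random variable X satisfies X ≤ k is at most 0.7152. -/
open Finset

/-- CDF of a binomial `B(n,t)` at `k`, as a finite sum. -/
noncomputable def Sb (n k : ℕ) (t : ℝ) : ℝ :=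
  ∑ j ∈ Finset.range (k+1), (n.choose j : ℝ) * t^j * (1-t)^(n-j)

/-- One-more-trial recurrence for the binomial CDF. -/
lemma Sb_succ (m k : ℕ) (hk : k ≤ m) (t : ℝ) :
    Sb (m+1) k t = Sb m k t - (m.choose k : ℝ) * t^(k+1) * (1-t)^(m-k) := by
  unfold Sb
  rw [Finset.sum_range_succ' (fun j => ((m+1).choose j : ℝ) * t^j * (1-t)^(m+1-j)) k]
  have h1 : ∀ i ∈ Finset.range k,
      ((m+1).choose (i+1) : ℝ) * t^(i+1) * (1-t)^(m+1-(i+1))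
        = (m.choose i : ℝ) * t^(i+1) * (1-t)^(m-i)
          + ((m.choose (i+1) : ℝ) * t^(i+1) * (1-t)^(m-(i+1))) * (1-t) := by
    intro i hi
    simp only [Finset.mem_range] at hi
    have hie : m + 1 - (i+1) = m - i := by omega
    have hie2 : m - i = (m - (i+1)) + 1 := by omega
    rw [hie, Nat.choose_succ_succ, hie2]
    push_cast
    ring
  rw [Finset.sum_congr rfl h1, Finset.sum_add_distrib]
  have h2 : ∑ i ∈ Finset.range k, (m.choose i : ℝ) * t^(i+1) * (1-t)^(m-i)
      = t * ∑ i ∈ Finset.range k, (m.choose i : ℝ) * t^i * (1-t)^(m-i) := by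
    rw [Finset.mul_sum]; apply Finset.sum_congr rfl; intro i _; ring
  have h3 : ∑ i ∈ Finset.range k, ((m.choose (i+1) : ℝ) * t^(i+1) * (1-t)^(m-(i+1))) * (1-t)
      = (1-t) * (∑ j ∈ Finset.range (k+1), (m.choose j : ℝ) * t^j * (1-t)^(m-j)
          - (1-t)^m) := by
    rw [Finset.sum_range_succ' (fun j => (m.choose j : ℝ) * t^j * (1-t)^(m-j)) k]
    simp only [Nat.choose_zero_right, Nat.cast_one, pow_zero, Nat.sub_zero, one_mul, mul_one]
    rw [add_sub_cancel_right, Finset.mul_sum]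
    apply Finset.sum_congr rfl; intro i _; ring
  rw [h2, h3]
  have h4 : ∑ i ∈ Finset.range k, (m.choose i : ℝ) * t^i * (1-t)^(m-i)
      = (∑ j ∈ Finset.range (k+1), (m.choose j : ℝ) * t^j * (1-t)^(m-j))
        - (m.choose k : ℝ) * t^k * (1-t)^(m-k) := by
    rw [Finset.sum_range_succ]; ring
  rw [h4]
  simp only [Nat.choose_zero_right, Nat.cast_one, pow_zero, Nat.sub_zero, one_mul, mul_one]
  ring

/-- Derivative of the binomial CDF in the success probability. -/
lemma Sb_hasDerivAt (m k : ℕ) (hk : k ≤ m) (t : ℝ) :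
    HasDerivAt (Sb (m+1) k)
      (-(((m:ℝ)+1) * (m.choose k : ℝ) * t^k * (1-t)^(m-k))) t := by
  have key : ∀ j ∈ Finset.range (k+1),
      HasDerivAt (fun x : ℝ => ((m+1).choose j : ℝ) * x^j * (1-x)^(m+1-j))
        ((fun j => match j with
          | 0 => (0:ℝ)
          | (i+1) => ((m:ℝ)+1) * (m.choose i : ℝ) * t^i * (1-t)^(m-i)) j
         - (fun j => match j with
          | 0 => (0:ℝ)
          | (i+1) => ((m:ℝ)+1) * (m.choose i : ℝ) * t^i * (1-t)^(m-i)) (j+1)) t := by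
    intro j hj
    simp only [Finset.mem_range, Nat.lt_succ_iff] at hj
    have h1 : HasDerivAt (fun x : ℝ => x^j) ((j:ℝ) * t^(j-1)) t := hasDerivAt_pow j t
    have h2 : HasDerivAt (fun x : ℝ => (1-x)^(m+1-j))
        (((m+1-j : ℕ) : ℝ) * (1-t)^(m+1-j-1) * (0-1)) t := by
      exact (hasDerivAt_pow (m+1-j) (1-t)).comp t
        ((hasDerivAt_const t (1:ℝ)).sub (hasDerivAt_id t))
    have h3 : HasDerivAt (fun x : ℝ => ((m+1).choose j : ℝ) * (x^j * (1-x)^(m+1-j))) _ t :=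
      (h1.mul h2).const_mul (((m+1).choose j : ℝ))
    have heq : (fun x : ℝ => ((m+1).choose j : ℝ) * (x^j * (1-x)^(m+1-j)))
        = (fun x : ℝ => ((m+1).choose j : ℝ) * x^j * (1-x)^(m+1-j)) := by
      funext x; ring
    rw [heq] at h3
    convert h3 using 1
    match j with
    | 0 =>
      simp
    | (i+1) =>
      show ((m:ℝ)+1) * (m.choose i : ℝ) * t^i * (1-t)^(m-i)
          - ((m:ℝ)+1) * (m.choose (i+1) : ℝ) * t^(i+1) * (1-t)^(m-(i+1)) = _
      have e1 : m + 1 - (i+1) = m - i := by omega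
      have e2 : m - i - 1 = m - (i+1) := by omega
      have e3 : (i+1) - 1 = i := by omega
      rw [e1, e2, e3]
      have c1 : (((m+1).choose (i+1) : ℝ)) * ((i:ℝ)+1) = ((m:ℝ)+1) * (m.choose i : ℝ) := by
        have h := Nat.add_one_mul_choose_eq m i
        have h2 : ((m+1) * m.choose i : ℕ) = ((m+1).choose (i+1) * (i+1) : ℕ) := by
          simpa [Nat.succ_eq_add_one] using h
        have h3 := congrArg (fun n : ℕ => (n : ℝ)) h2
        push_cast at h3
        linarith
      have c2 : (((m+1).choose (i+1) : ℝ)) * ((m:ℝ) - i) = ((m:ℝ)+1) * (m.choose (i+1) : ℝ) := by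
        have h := Nat.choose_mul_succ_eq m (i+1)
        have h' := congrArg (fun n : ℕ => (n : ℝ)) h
        push_cast at h'
        have e4 : ((m - i : ℕ) : ℝ) = (m:ℝ) - i := Nat.cast_sub (by omega : i ≤ m)
        rw [e4] at h'
        linarith
      have e5 : ((m - i : ℕ) : ℝ) = (m:ℝ) - i := Nat.cast_sub (by omega : i ≤ m)
      have e6 : m - i = (m - (i+1)) + 1 := by omega
      rw [e5, e6]
      push_cast
      linear_combination (-(t^i * (1-t)^(m-(i+1)+1))) * c1 + (t^(i+1) * (1-t)^(m-(i+1))) * c2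
  have hsum := HasDerivAt.fun_sum key
  rw [Finset.sum_range_sub'] at hsum
  have hfun : Sb (m+1) k
      = fun y => ∑ i ∈ Finset.range (k+1), ((m+1).choose i : ℝ) * y^i * (1-y)^(m+1-i) := rfl
  rw [hfun]
  simpa [zero_sub] using hsum

/-- The function `t^k (1-t)^(m-k)` on `[0,1]` is maximized at `t = k/m`. -/
lemma pow_mul_pow_le_max (m k : ℕ) (hk : 1 ≤ k) (hkm : k + 1 ≤ m) {t : ℝ}
    (ht0 : 0 ≤ t) (ht1 : t ≤ 1) :
    t^k * (1-t)^(m-k) ≤ ((k:ℝ)/m)^k * (1 - (k:ℝ)/m)^(m-k) := by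
  have hmk : k < m := by omega
  have hm0 : (0:ℝ) < m := by exact_mod_cast (by omega : 0 < m)
  have hk0 : (0:ℝ) < (k:ℝ) := by exact_mod_cast hk
  have hkm' : (k:ℝ) < (m:ℝ) := by exact_mod_cast hmk
  set p : ℝ := (k:ℝ)/m with hp
  have hp0 : 0 < p := by positivity
  have hq0 : 0 < 1 - p := by
    rw [hp, sub_pos]
    exact (div_lt_one hm0).mpr hkm'
  have htp : (0:ℝ) ≤ t / p := div_nonneg ht0 hp0.le
  have htq : (0:ℝ) ≤ (1-t) / (1-p) := div_nonneg (by linarith) hq0.le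
  -- weighted AM-GM
  have hgm := Real.geom_mean_le_arith_mean2_weighted
    (le_of_lt hp0) (le_of_lt hq0)
    htp htq
    (by ring : p + (1-p) = 1)
  have harith : p * (t/p) + (1-p) * ((1-t)/(1-p)) = 1 := by
    field_simp
    ring
  rw [harith] at hgm
  -- raise to the m-th power
  have hbase : (0:ℝ) ≤ (t/p) ^ p * ((1-t)/(1-p)) ^ (1-p) := by
    have h1 : (0:ℝ) ≤ (t/p) ^ p := Real.rpow_nonneg htp _
    have h2 : (0:ℝ) ≤ ((1-t)/(1-p)) ^ (1-p) := Real.rpow_nonneg htq _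
    exact mul_nonneg h1 h2
  have hpow := pow_le_one₀ hbase hgm (n := m)
  have hexp : ((t/p) ^ p * ((1-t)/(1-p)) ^ (1-p)) ^ m
      = (t/p)^k * ((1-t)/(1-p))^(m-k) := by
    rw [mul_pow]
    rw [← Real.rpow_natCast ((t/p) ^ p) m, ← Real.rpow_natCast (((1-t)/(1-p)) ^ (1-p)) m]
    rw [← Real.rpow_natCast (t/p) k, ← Real.rpow_natCast ((1-t)/(1-p)) (m-k)]
    rw [← Real.rpow_mul htp, ← Real.rpow_mul htq]
    congr 1
    · congr 1
      rw [hp]; field_simp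
    · congr 1
      have : ((m - k : ℕ):ℝ) = (m:ℝ) - k := Nat.cast_sub (by omega : k ≤ m)
      rw [this, hp]
      field_simp
  rw [hexp] at hpow
  have key := hpow
  have expand : t^k * (1-t)^(m-k)
      = ((t/p)^k * ((1-t)/(1-p))^(m-k)) * (p^k * (1-p)^(m-k)) := by
    rw [mul_mul_mul_comm, ← mul_pow, ← mul_pow, div_mul_cancel₀ _ hp0.ne',
      div_mul_cancel₀ _ hq0.ne']
  rw [expand]
  have hpq : (0:ℝ) ≤ p^k * (1-p)^(m-k) := by positivity
  calc ((t/p)^k * ((1-t)/(1-p))^(m-k)) * (p^k * (1-p)^(m-k))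
      ≤ 1 * (p^k * (1-p)^(m-k)) := mul_le_mul_of_nonneg_right key hpq
    _ = p^k * (1-p)^(m-k) := one_mul _

/-- Key monotonicity step: the binomial CDF at the (integer) mean decreases with `m`. -/
lemma Sb_step (m k : ℕ) (hk : 1 ≤ k) (hkm : k + 1 ≤ m) :
    Sb (m+1) k ((k:ℝ)/(m+1)) ≤ Sb m k ((k:ℝ)/m) := by
  have hm0 : (0:ℝ) < m := by exact_mod_cast (by omega : 0 < m)
  have hm1 : (0:ℝ) < (m:ℝ) + 1 := by linarith
  have hk0 : (0:ℝ) < (k:ℝ) := by exact_mod_cast hk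
  have hkm' : (k:ℝ) < (m:ℝ) := by exact_mod_cast (by omega : k < m)
  set p : ℝ := (k:ℝ)/m with hp
  set p' : ℝ := (k:ℝ)/(m+1) with hp'
  have hpp' : p' ≤ p := by
    apply div_le_div_of_nonneg_left hk0.le hm0; linarith
  have hp'0 : 0 ≤ p' := by positivity
  have hp1 : p ≤ 1 := by
    rw [hp, div_le_one hm0]; linarith
  set C : ℝ := ((m:ℝ)+1) * (m.choose k : ℝ) * (p^k * (1-p)^(m-k)) with hC
  have bound : ∀ x ∈ Set.Ico p' p,
      ‖-(((m:ℝ)+1) * (m.choose k : ℝ) * x^k * (1-x)^(m-k))‖ ≤ C := by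
    intro x hx
    obtain ⟨hx1, hx2⟩ := hx
    have hx0 : 0 ≤ x := le_trans hp'0 hx1
    have hx1' : x ≤ 1 := le_trans hx2.le hp1
    rw [norm_neg]
    have hnn : 0 ≤ ((m:ℝ)+1) * (m.choose k : ℝ) * x^k * (1-x)^(m-k) := by
      have : (0:ℝ) ≤ 1 - x := by linarith
      positivity
    rw [Real.norm_eq_abs, abs_of_nonneg hnn]
    have hmax := pow_mul_pow_le_max m k hk hkm hx0 hx1'
    rw [hC]
    calc ((m:ℝ)+1) * (m.choose k : ℝ) * x^k * (1-x)^(m-k)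
        = ((m:ℝ)+1) * (m.choose k : ℝ) * (x^k * (1-x)^(m-k)) := by ring
      _ ≤ ((m:ℝ)+1) * (m.choose k : ℝ) * (p^k * (1-p)^(m-k)) := by
          apply mul_le_mul_of_nonneg_left hmax
          positivity
  have hderiv : ∀ x ∈ Set.Icc p' p,
      HasDerivWithinAt (Sb (m+1) k)
        (-(((m:ℝ)+1) * (m.choose k : ℝ) * x^k * (1-x)^(m-k))) (Set.Icc p' p) x :=
    fun x _ => (Sb_hasDerivAt m k (by omega) x).hasDerivWithinAt
  have hmvt := norm_image_sub_le_of_norm_deriv_le_segment' hderiv bound p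
    (Set.right_mem_Icc.mpr hpp')
  rw [Real.norm_eq_abs] at hmvt
  have habs : Sb (m+1) k p' - Sb (m+1) k p ≤ C * (p - p') := by
    have h := abs_le.mp hmvt
    linarith [h.1]
  have hrec := Sb_succ m k (by omega) p
  have hCpp' : C * (p - p') = (m.choose k : ℝ) * p^(k+1) * (1-p)^(m-k) := by
    have h1 : ((m:ℝ)+1) * (p - p') = p := by
      rw [hp, hp']
      field_simp
      ring
    calc C * (p - p') = (m.choose k : ℝ) * (p^k * (1-p)^(m-k)) * (((m:ℝ)+1) * (p - p')) := by
          rw [hC]; ring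
      _ = (m.choose k : ℝ) * (p^k * (1-p)^(m-k)) * p := by rw [h1]
      _ = (m.choose k : ℝ) * p^(k+1) * (1-p)^(m-k) := by ring
  -- combine
  have : Sb (m+1) k p' ≤ Sb (m+1) k p + C * (p - p') := by linarith
  rw [hrec, hCpp'] at this
  linarith

/-- Base case: with `m = k+1` trials, the CDF at `k` is `1 - t^(k+1)`. -/
lemma Sb_base (k : ℕ) (t : ℝ) : Sb (k+1) k t = 1 - t^(k+1) := by
  have hbin := add_pow t (1-t) (k+1)
  have h1 : (t + (1-t))^(k+1) = 1 := by norm_num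
  rw [h1] at hbin
  rw [Finset.sum_range_succ] at hbin
  simp only [Nat.choose_self, Nat.cast_one, Nat.sub_self, pow_zero, mul_one] at hbin
  unfold Sb
  have : ∑ j ∈ Finset.range (k+1), ((k+1).choose j : ℝ) * t^j * (1-t)^(k+1-j)
      = ∑ j ∈ Finset.range (k+1), t^j * (1-t)^(k+1-j) * ((k+1).choose j : ℝ) := by
    apply Finset.sum_congr rfl; intro i _; ring
  rw [this]
  linarith

/-- Monotone bound: for all `m ≥ k+1`, the CDF at the mean is at most its value at `m = k+1`. -/
lemma Sb_mono (k : ℕ) (hk : 1 ≤ k) :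
    ∀ m, k + 1 ≤ m → Sb m k ((k:ℝ)/m) ≤ 1 - ((k:ℝ)/(k+1))^(k+1) := by
  intro m hm
  induction m, hm using Nat.le_induction with
  | base =>
    rw [Sb_base k]
    push_cast
    exact le_rfl
  | succ n hn ih =>
    have hcast : ((n+1 : ℕ):ℝ) = (n:ℝ)+1 := by push_cast; ring
    rw [hcast]
    calc Sb (n+1) k ((k:ℝ)/((n:ℝ)+1)) ≤ Sb n k ((k:ℝ)/n) := by
          have := Sb_step n k hk hn
          push_cast at this ⊢
          exact this
      _ ≤ 1 - ((k:ℝ)/(k+1))^(k+1) := ih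

/-- `exp (5/4) ≤ 3.5112`. -/
lemma exp_five_quarters_le : Real.exp (5/4 : ℝ) ≤ 3.5112 := by
  have h4 : Real.exp (5/4 : ℝ) ^ (4:ℕ) = Real.exp 5 := by
    rw [← Real.exp_nat_mul]; norm_num
  have h5 : Real.exp (5:ℝ) = Real.exp 1 ^ (5:ℕ) := by
    rw [← Real.exp_nat_mul]; norm_num
  have h6 : Real.exp 1 ^ (5:ℕ) ≤ (2.7182818286:ℝ) ^ (5:ℕ) :=
    pow_le_pow_left₀ (Real.exp_pos 1).le Real.exp_one_lt_d9.le 5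
  have h7 : Real.exp (5/4 : ℝ) ^ (4:ℕ) ≤ (3.5112:ℝ) ^ (4:ℕ) := by
    rw [h4, h5]
    calc Real.exp 1 ^ (5:ℕ) ≤ (2.7182818286:ℝ) ^ (5:ℕ) := h6
      _ ≤ (3.5112:ℝ) ^ (4:ℕ) := by norm_num
  exact le_of_pow_le_pow_left₀ (by norm_num) (by norm_num) h7

/-- The sequence `(k/(k+1))^(k+1)` is at least `0.2848` for `k ≥ 2`. -/
lemma const_bound (k : ℕ) (hk : 2 ≤ k) : (0.2848 : ℝ) ≤ ((k:ℝ)/(k+1))^(k+1) := by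
  have hk0 : (0:ℝ) < (k:ℝ) := by exact_mod_cast (by omega : 0 < k)
  have hk1 : (0:ℝ) < (k:ℝ) + 1 := by linarith
  by_cases hk4 : k < 4
  · interval_cases k <;> norm_num
  · push_neg at hk4
    have hk4' : (4:ℝ) ≤ (k:ℝ) := by exact_mod_cast hk4
    have h1 : (1 + 1/(k:ℝ))^(k+1) ≤ Real.exp (((k:ℕ)+1 : ℕ) * (1/(k:ℝ))) := by
      have ha : 1 + 1/(k:ℝ) ≤ Real.exp (1/(k:ℝ)) := by
        have := Real.add_one_le_exp (1/(k:ℝ)); linarith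
      calc (1 + 1/(k:ℝ))^(k+1)
          ≤ (Real.exp (1/(k:ℝ)))^(k+1) := pow_le_pow_left₀ (by positivity) ha (k+1)
        _ = Real.exp (((k:ℕ)+1 : ℕ) * (1/(k:ℝ))) := by rw [← Real.exp_nat_mul]
    have h2 : (((k:ℕ)+1 : ℕ) : ℝ) * (1/(k:ℝ)) ≤ 5/4 := by
      push_cast
      rw [mul_one_div, div_le_div_iff₀ hk0 (by norm_num : (0:ℝ) < 4)]
      linarith
    have h3 : (1 + 1/(k:ℝ))^(k+1) ≤ 3.5112 := by
      calc (1 + 1/(k:ℝ))^(k+1) ≤ Real.exp (((k:ℕ)+1 : ℕ) * (1/(k:ℝ))) := h1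
        _ ≤ Real.exp (5/4) := Real.exp_le_exp.mpr h2
        _ ≤ 3.5112 := exp_five_quarters_le
    have heq : ((k:ℝ)/(k+1))^(k+1) = ((1 + 1/(k:ℝ))^(k+1))⁻¹ := by
      rw [← inv_pow]
      congr 1
      have hof : (1 + 1/(k:ℝ)) = ((k:ℝ)+1)/k := by field_simp
      rw [hof, inv_div]
    rw [heq]
    have hpos : (0:ℝ) < (1 + 1/(k:ℝ))^(k+1) := by positivity
    have : ((3.5112:ℝ))⁻¹ ≤ ((1 + 1/(k:ℝ))^(k+1))⁻¹ :=
      inv_anti₀ hpos h3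
    calc (0.2848:ℝ) ≤ ((3.5112:ℝ))⁻¹ := by norm_num
      _ ≤ ((1 + 1/(k:ℝ))^(k+1))⁻¹ := this

/-- Corollary 2: for `m ≥ 2` and `2 ≤ k ≤ m - 1`,
`P_{X ~ B(m, k/m)}[X ≤ k] ≤ 0.7152`. -/
theorem binomial_le_bound (m k : ℕ) (hm : 2 ≤ m) (hk₁ : 2 ≤ k) (hk₂ : k ≤ m - 1) :
    ∑ j ∈ Finset.Iic k,
        (m.choose j : ℝ) * ((k : ℝ) / m) ^ j * (1 - (k : ℝ) / m) ^ (m - j) ≤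
      0.7152 := by
  have hkm : k + 1 ≤ m := by omega
  have hIic : Finset.Iic k = Finset.range (k+1) := by
    ext x; simp [Nat.lt_succ_iff]
  rw [hIic]
  have hsum : (∑ j ∈ Finset.range (k+1),
      (m.choose j : ℝ) * ((k : ℝ) / m) ^ j * (1 - (k : ℝ) / m) ^ (m - j))
      = Sb m k ((k:ℝ)/m) := rfl
  rw [hsum]
  have hmain := Sb_mono k (by omega) m hkm
  have hconst := const_bound k hk₁
  calc Sb m k ((k:ℝ)/m) ≤ 1 - ((k:ℝ)/(k+1))^(k+1) := hmain
    _ ≤ 1 - 0.2848 := by linarith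
    _ ≤ 0.7152 := by norm_num
end

section
/- Let m ≥ 2 be an integer and let X be a random variable distributed according to B(m, 1/m). Then P[X ≤ 1] ≤ 3/4; equivalently, (1 − 1/m)^m + (1 − 1/m)^(m−1) ≤ 3/4. -/
lemma cubic_le_pow (y : ℝ) (hy : 0 ≤ y) : ∀ n : ℕ,
    1 + n*y + n*(n-1)/2*y^2 + n*(n-1)*(n-2)/6*y^3 ≤ (1+y)^n := by
  intro n
  induction n with
  | zero => norm_num
  | succ n ih =>
    have h1 : (0:ℝ) ≤ 1 + y := by linarith
    have hcoef : (0:ℝ) ≤ (n:ℝ)*((n:ℝ)-1)*((n:ℝ)-2) := by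
      rcases Nat.lt_or_ge n 1 with h | h
      · interval_cases n <;> norm_num
      rcases Nat.lt_or_ge n 2 with h2 | h2
      · interval_cases n <;> norm_num
      have h3 : (2:ℝ) ≤ (n:ℝ) := by exact_mod_cast h2
      have := mul_nonneg (mul_nonneg (by linarith : (0:ℝ) ≤ (n:ℝ)) (by linarith : (0:ℝ) ≤ (n:ℝ)-1)) (by linarith : (0:ℝ) ≤ (n:ℝ)-2)
      linarith
    have key : (1+y) * (1 + n*y + n*(n-1)/2*y^2 + n*(n-1)*(n-2)/6*y^3)
        ≤ (1+y)^(n+1) := by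
      rw [pow_succ]
      calc (1+y) * (1 + n*y + n*(n-1)/2*y^2 + n*(n-1)*(n-2)/6*y^3)
          ≤ (1+y) * (1+y)^n := by
            apply mul_le_mul_of_nonneg_left ih h1
        _ = (1+y)^n * (1+y) := by ring
    push_cast
    nlinarith [pow_nonneg hy 4, mul_nonneg hcoef (pow_nonneg hy 4)]

/-- Lemma 4: for `m ≥ 2` and `X ~ B(m, 1/m)`, `P[X ≤ 1] ≤ 3/4`; equivalently,
`(1 - 1/m)^m + (1 - 1/m)^(m-1) ≤ 3/4`. -/
theorem binomial_le_one_le_three_quarters (m : ℕ) (hm : 2 ≤ m) :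
    (∑ j ∈ Finset.Iic 1,
        (m.choose j : ℝ) * (1 / (m : ℝ)) ^ j * (1 - 1 / (m : ℝ)) ^ (m - j) ≤ 3 / 4) ∧
      (1 - 1 / (m : ℝ)) ^ m + (1 - 1 / (m : ℝ)) ^ (m - 1) ≤ 3 / 4 := by
  have hm2 : (2:ℝ) ≤ (m:ℝ) := by exact_mod_cast hm
  set t : ℝ := (m:ℝ) with ht
  have hm0 : (0:ℝ) < t := by linarith
  have ht0 : t ≠ 0 := ne_of_gt hm0
  -- the key inequality
  have key : (1 - 1/t) ^ m + (1 - 1/t) ^ (m-1) ≤ 3/4 := by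
    rcases eq_or_lt_of_le hm with h2 | h3
    · -- m = 2
      have hm' : m = 2 := h2.symm
      subst hm'
      norm_num [ht]
    · have hm3 : 3 ≤ m := h3
      have ht3 : (3:ℝ) ≤ t := by rw [ht]; exact_mod_cast hm3
      have ht1 : (0:ℝ) < t - 1 := by linarith
      have ht1' : t - 1 ≠ 0 := ne_of_gt ht1
      set y : ℝ := 1/(t-1) with hy
      have hy0 : 0 ≤ y := by positivity
      have hcast : ((m-1 : ℕ) : ℝ) = t - 1 := by
        push_cast [Nat.cast_sub (le_trans one_le_two hm)]; ring
      have hP := cubic_le_pow y hy0 (m-1)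
      rw [hcast] at hP
      set P : ℝ := 1 + (t-1)*y + (t-1)*((t-1)-1)/2*y^2 + (t-1)*((t-1)-1)*((t-1)-2)/6*y^3 with hPdef
      have ediff : 3*P - 4*(2 - 1/t) = (t-2)^2/(t*(t-1)^2) := by
        rw [hPdef, hy]; field_simp; ring
      have hdiffpos : (0:ℝ) ≤ (t-2)^2/(t*(t-1)^2) := by positivity
      clear_value P
      clear hPdef
      have hPpos : (0:ℝ) < P := by
        have h1t : 1/t ≤ 1 := by rw [div_le_one hm0]; linarith
        linarith
      have hinv : (1 - 1/t) = (1+y)⁻¹ := by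
        rw [hy]; rw [show (1:ℝ) + 1/(t-1) = t/(t-1) by field_simp; ring]
        field_simp
      have hA : (1 - 1/t)^(m-1) ≤ P⁻¹ := by
        rw [hinv, inv_pow]
        exact inv_anti₀ hPpos hP
      have hA0 : (0:ℝ) ≤ (1 - 1/t)^(m-1) := by
        apply pow_nonneg
        have : 1/t ≤ 1 := by rw [div_le_one hm0]; linarith
        linarith
      have hmsplit : m = (m-1) + 1 := (Nat.succ_pred_eq_of_pos (by omega)).symm
      have hexp : (1 - 1/t) ^ m = (1 - 1/t)^(m-1) * (1 - 1/t) := by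
        conv_lhs => rw [hmsplit]
        rw [pow_succ]
      rw [hexp]
      have hfac : (1 - 1/t)^(m-1) * (1 - 1/t) + (1 - 1/t)^(m-1)
          = (1 - 1/t)^(m-1) * (2 - 1/t) := by ring
      rw [hfac]
      have h2t : (0:ℝ) ≤ 2 - 1/t := by
        have : 1/t ≤ 1 := by rw [div_le_one hm0]; linarith
        linarith
      calc (1 - 1/t)^(m-1) * (2 - 1/t) ≤ P⁻¹ * (2 - 1/t) :=
            mul_le_mul_of_nonneg_right hA h2t
        _ ≤ 3/4 := by
            rw [inv_mul_le_iff₀ hPpos]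
            linarith
  constructor
  · have hIic : Finset.Iic 1 = ({0,1} : Finset ℕ) := rfl
    rw [hIic, Finset.sum_pair (by norm_num : (0:ℕ) ≠ 1)]
    have e0 : (m.choose 0 : ℝ) * (1/t)^0 * (1-1/t)^(m-0) = (1-1/t)^m := by simp
    have e1 : (m.choose 1 : ℝ) * (1/t)^1 * (1-1/t)^(m-1) = (1-1/t)^(m-1) := by
      rw [Nat.choose_one_right, pow_one, ← ht]
      field_simp
    rw [e0, e1]
    exact key
  · exact key
end

section
/- Let m be a positive integer and k an integer with 1 ≤ k ≤ m, and define F(m, p) = Σ_{j=k}^{m} C(m, j)·p^j·(1−p)^(m−j). Then the function p ↦ F(m, p) is strictly increasing on the open interval ((k−1)/m, k/m) ∩ (0, 1); consequently, for p in ((k−1)/m, k/m] ∩ (0, 1), the probability that a B(m, p)-distributed random variable is at least m·p, which equals Σ_{j=⌈m·p⌉}^{m} C(m, j)·p^j·(1−p)^(m−j), is strictly increasing in p on that interval. -/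
private lemma tele (a : ℕ → ℝ) : ∀ m k : ℕ, k ≤ m →
    ∑ j ∈ Finset.Icc k m, (a j - a (j+1)) = a k - a (m+1) := by
  intro m
  induction m with
  | zero => intro k hk; interval_cases k; simp
  | succ n ih =>
    intro k hk
    rcases Nat.lt_or_ge k (n+1) with h | h
    · rw [← Finset.insert_Icc_right_eq_Icc_add_one (by omega), Finset.sum_insert (by simp), ih k (by omega)]
      ring
    · have : k = n + 1 := by omega
      subst this; simp

private lemma F_mono (m k : ℕ) (hm : 0 < m) (hk₁ : 1 ≤ k) (hk₂ : k ≤ m) :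
    StrictMonoOn
      (fun p : ℝ => ∑ j ∈ Finset.Icc k m,
        (m.choose j : ℝ) * p ^ j * (1 - p) ^ (m - j)) (Set.Icc 0 1) := by
  apply StrictMonoOn.mono (s := Set.Icc (0:ℝ) 1) ?_ le_rfl
  apply strictMonoOn_of_deriv_pos (convex_Icc 0 1)
  · apply Continuous.continuousOn; fun_prop
  · intro p hp
    rw [interior_Icc] at hp
    obtain ⟨hp0, hp1⟩ := hp
    have hder : HasDerivAt
        (fun p : ℝ => ∑ j ∈ Finset.Icc k m,
          (m.choose j : ℝ) * p ^ j * (1 - p) ^ (m - j))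
        ((m : ℝ) * ((m-1).choose (k-1) : ℝ) * p ^ (k-1) * (1-p) ^ (m-k)) p := by
      have hterm : ∀ j ∈ Finset.Icc k m, HasDerivAt
          (fun p : ℝ => (m.choose j : ℝ) * p ^ j * (1 - p) ^ (m - j))
          ((m.choose j : ℝ) * ((j : ℝ) * p ^ (j-1) * (1-p) ^ (m-j)
            + p ^ j * (((m-j : ℕ) : ℝ) * (1-p) ^ (m-j-1) * (-1)))) p := by
        intro j hj
        have h1 : HasDerivAt (fun p : ℝ => (1 - p) ^ (m - j))
            (((m-j : ℕ) : ℝ) * (1-p) ^ (m-j-1) * (-1)) p := by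
          have hin : HasDerivAt (fun p : ℝ => 1 - p) (-1) p := by
            simpa using (hasDerivAt_id p).const_sub 1
          exact (hasDerivAt_pow (m-j) (1-p)).comp p hin
        have h2 := ((hasDerivAt_pow j p).mul h1).const_mul ((m.choose j : ℝ))
        simpa [mul_assoc, mul_comm, mul_left_comm, mul_add] using h2
      have := HasDerivAt.fun_sum hterm
      refine this.congr_deriv ?_
      -- sum of derivatives telescopes
      set a : ℕ → ℝ := fun j => (m : ℝ) * ((m-1).choose (j-1) : ℝ) * p ^ (j-1) * (1-p) ^ (m-j)
        with ha
      have hsum : ∀ j ∈ Finset.Icc k m,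
          (m.choose j : ℝ) * ((j : ℝ) * p ^ (j-1) * (1-p) ^ (m-j)
            + p ^ j * (((m-j : ℕ) : ℝ) * (1-p) ^ (m-j-1) * (-1))) = a j - a (j+1) := by
        intro j hj
        simp only [Finset.mem_Icc] at hj
        obtain ⟨J, rfl⟩ : ∃ J, j = J + 1 := ⟨j - 1, by omega⟩
        obtain ⟨M, rfl⟩ : ∃ M, m = M + 1 := ⟨m - 1, by omega⟩
        have c1 : ((M+1) * M.choose J : ℝ) = ((M+1).choose (J+1) * (J+1) : ℕ) := by
          exact_mod_cast congrArg (Nat.cast (R := ℝ)) (Nat.add_one_mul_choose_eq M J)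
        have c2 : ((M+1) * M.choose (J+1) : ℝ) = ((M+1).choose (J+1) * ((M+1) - (J+1)) : ℕ) := by
          have := (Nat.add_one_mul_choose_eq M (J+1)).trans (Nat.choose_succ_right_eq (M+1) (J+1))
          exact_mod_cast congrArg (Nat.cast (R := ℝ)) this
        have e1 : M + 1 - (J + 1) = M - J := by omega
        have e2 : M + 1 - (J + 1 + 1) = M - J - 1 := by omega
        simp only [ha, Nat.add_sub_cancel, e1, e2]
        push_cast [e1, e2] at c1 c2 ⊢
        linear_combination p ^ (J + 1) * (1 - p) ^ (M - J - 1) * c2 - p ^ J * (1 - p) ^ (M - J) * c1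
      rw [Finset.sum_congr rfl hsum, tele a m k hk₂]
      have hz : a (m+1) = 0 := by
        simp only [ha, Nat.add_sub_cancel]
        rw [Nat.choose_eq_zero_of_lt (by omega)]
        simp
      rw [hz, sub_zero, ha]
    rw [hder.deriv]
    have hcp : 0 < ((m-1).choose (k-1) : ℝ) := by
      exact_mod_cast Nat.choose_pos (by omega)
    have h1p : 0 < 1 - p := by linarith
    positivity


/-- For `1 ≤ k ≤ m`, the function `p ↦ ∑_{j=k}^m C(m,j) p^j (1-p)^(m-j)` is strictly
increasing on `((k-1)/m, k/m) ∩ (0, 1)`; consequently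
`p ↦ ∑_{j=⌈mp⌉}^m C(m,j) p^j (1-p)^(m-j)` is strictly increasing on
`((k-1)/m, k/m] ∩ (0, 1)`. -/
theorem binomial_tail_strictMonoOn (m k : ℕ) (hm : 0 < m) (hk₁ : 1 ≤ k) (hk₂ : k ≤ m) :
    StrictMonoOn
        (fun p : ℝ => ∑ j ∈ Finset.Icc k m,
          (m.choose j : ℝ) * p ^ j * (1 - p) ^ (m - j))
        (Set.Ioo (((k : ℝ) - 1) / m) ((k : ℝ) / m) ∩ Set.Ioo 0 1) ∧
      StrictMonoOn
        (fun p : ℝ => ∑ j ∈ Finset.Icc ⌈(m : ℝ) * p⌉₊ m,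
          (m.choose j : ℝ) * p ^ j * (1 - p) ^ (m - j))
        (Set.Ioc (((k : ℝ) - 1) / m) ((k : ℝ) / m) ∩ Set.Ioo 0 1) := by
  have key := F_mono m k hm hk₁ hk₂
  constructor
  · exact key.mono fun x hx => ⟨hx.2.1.le, hx.2.2.le⟩
  · have hceil : ∀ p : ℝ, p ∈ Set.Ioc (((k : ℝ) - 1) / m) ((k : ℝ) / m) ∩ Set.Ioo 0 1 →
        ⌈(m : ℝ) * p⌉₊ = k := by
      intro p ⟨⟨hl, hr⟩, hp0, hp1⟩
      have hm' : (0:ℝ) < m := by exact_mod_cast hm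
      rw [Nat.ceil_eq_iff (by omega)]
      constructor
      · have : ((k:ℝ) - 1) < m * p := by
          rw [div_lt_iff₀ hm'] at hl; linarith
        calc ((k - 1 : ℕ) : ℝ) = (k:ℝ) - 1 := by
              push_cast [Nat.cast_sub hk₁]; ring
          _ < m * p := this
      · rw [← le_div_iff₀' hm']; exact hr
    intro a ha b hb hab
    simp only [hceil a ha, hceil b hb]
    exact key ⟨ha.2.1.le, ha.2.2.le⟩ ⟨hb.2.1.le, hb.2.2.le⟩ hab
end

section
/- For every integer k ≥ 1, with α_k = (1 + 1/k)^(1/3)·(3 − 1/(3·(1+k))) − 3, β_k = (1/(1+k))·(1 + 1/k)^(2/3), and θ = 17/(3·2^(1/3)) − 3·2^(1/3), the inequality α_k ≤ θ·β_k holds, i.e. the ratio α_k/β_k is at most θ. -/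
lemma key_poly (t c : ℝ) (h1 : 1 ≤ t) (h2 : t ≤ c) (hc : c ^ 3 = 2) :
    t * (3 - (t ^ 3 - 1) / (3 * t ^ 3)) - 3 ≤
      (17 / (3 * c) - 3 * c) * ((t ^ 3 - 1) / t ^ 3 * t ^ 2) := by
  have ht0 : (0:ℝ) < t := lt_of_lt_of_le one_pos h1
  have hc1 : (1:ℝ) ≤ c := le_trans h1 h2
  have hc0 : (0:ℝ) < c := lt_of_lt_of_le one_pos hc1
  have hA : 0 ≤ 17 - 9 * c ^ 2 := by nlinarith [sq_nonneg (c - 1.3), sq_nonneg c]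
  have hR1 : 0 ≤ 18 * c ^ 2 - 9 * c - 15 := by nlinarith [sq_nonneg (c - 1.25), sq_nonneg c]
  have hR2 : 0 ≤ 19 * c + 19 - 26 * c ^ 2 := by nlinarith [sq_nonneg (c - 1.26), sq_nonneg c]
  have hR : 0 ≤ (9 * c ^ 2 - 17) * t ^ 2 + (1 + 9 * c ^ 2 - 9 * c) * t + 1 := by
    nlinarith [mul_nonneg (mul_nonneg (sub_nonneg.2 h1) (sub_nonneg.2 h2)) hA,
      mul_nonneg (sub_nonneg.2 h2) hR1, mul_nonneg (sub_nonneg.2 h1) hR2]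
  have hP : 0 ≤ (t - 1) * (c - t) *
      ((9 * c ^ 2 - 17) * t ^ 2 + (1 + 9 * c ^ 2 - 9 * c) * t + 1) :=
    mul_nonneg (mul_nonneg (sub_nonneg.2 h1) (sub_nonneg.2 h2)) hR
  have hid : (17 / (3 * c) - 3 * c) * ((t ^ 3 - 1) / t ^ 3 * t ^ 2) -
      (t * (3 - (t ^ 3 - 1) / (3 * t ^ 3)) - 3) =
      (t - 1) * (c - t) *
      ((9 * c ^ 2 - 17) * t ^ 2 + (1 + 9 * c ^ 2 - 9 * c) * t + 1) / (3 * c * t ^ 2) := by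
    have ht3 : t ^ 3 ≠ 0 := by positivity
    field_simp
    linear_combination (9 * t - 9 * t ^ 3) * hc
  have hq : 0 ≤ (t - 1) * (c - t) *
      ((9 * c ^ 2 - 17) * t ^ 2 + (1 + 9 * c ^ 2 - 9 * c) * t + 1) / (3 * c * t ^ 2) := by
    apply div_nonneg hP; positivity
  linarith [hid ▸ hq]

/-- For every integer `k ≥ 1`, with
`α_k = (1 + 1/k)^(1/3)·(3 − 1/(3(1+k))) − 3`,
`β_k = (1/(1+k))·(1 + 1/k)^(2/3)` and `θ = 17/(3·2^(1/3)) − 3·2^(1/3)`,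
one has `α_k ≤ θ·β_k`. -/
theorem alpha_le_theta_beta (k : ℕ) (hk : 1 ≤ k) :
    (1 + 1 / (k : ℝ)) ^ ((1 : ℝ) / 3) * (3 - 1 / (3 * (1 + (k : ℝ)))) - 3 ≤
      (17 / (3 * (2 : ℝ) ^ ((1 : ℝ) / 3)) - 3 * (2 : ℝ) ^ ((1 : ℝ) / 3)) *
        (1 / (1 + (k : ℝ)) * (1 + 1 / (k : ℝ)) ^ ((2 : ℝ) / 3)) := by
  have hk0 : (0:ℝ) < (k : ℝ) := by exact_mod_cast Nat.lt_of_lt_of_le Nat.zero_lt_one hk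
  have hk1 : (1:ℝ) ≤ (k : ℝ) := by exact_mod_cast hk
  set x : ℝ := 1 + 1 / (k : ℝ) with hxdef
  have hx0 : (0:ℝ) ≤ x := by positivity
  have hx1 : (1:ℝ) ≤ x := by
    have : (0:ℝ) ≤ 1 / (k:ℝ) := by positivity
    rw [hxdef]; linarith
  have hx2 : x ≤ 2 := by
    have : 1 / (k:ℝ) ≤ 1 := by
      rw [div_le_one hk0]; exact hk1
    rw [hxdef]; linarith
  set t : ℝ := x ^ ((1:ℝ)/3) with htdef
  set c : ℝ := (2:ℝ) ^ ((1:ℝ)/3) with hcdef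
  have ht3 : t ^ 3 = x := by
    rw [htdef, ← Real.rpow_natCast (x ^ ((1:ℝ)/3)) 3, ← Real.rpow_mul hx0]
    norm_num
  have hc3 : c ^ 3 = 2 := by
    rw [hcdef, ← Real.rpow_natCast ((2:ℝ) ^ ((1:ℝ)/3)) 3, ← Real.rpow_mul (by norm_num : (0:ℝ) ≤ 2)]
    norm_num
  have ht23 : x ^ ((2:ℝ)/3) = t ^ 2 := by
    rw [htdef, ← Real.rpow_natCast (x ^ ((1:ℝ)/3)) 2, ← Real.rpow_mul hx0]
    norm_num
  have h1 : (1:ℝ) ≤ t := by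
    have h := Real.rpow_le_rpow zero_le_one hx1 (by norm_num : (0:ℝ) ≤ 1/3)
    rwa [Real.one_rpow] at h
  have h2 : t ≤ c := by
    rw [htdef, hcdef]
    exact Real.rpow_le_rpow hx0 hx2 (by norm_num)
  have hfrac : 1 / (1 + (k:ℝ)) = (t ^ 3 - 1) / t ^ 3 := by
    rw [ht3, hxdef]
    have h1k : (1:ℝ) + (k:ℝ) ≠ 0 := by positivity
    field_simp
    ring
  have hfrac3 : 1 / (3 * (1 + (k:ℝ))) = (t ^ 3 - 1) / (3 * t ^ 3) := by
    rw [ht3, hxdef]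
    have h1k : (1:ℝ) + (k:ℝ) ≠ 0 := by positivity
    field_simp
    ring
  rw [hfrac, hfrac3, ht23]
  exact key_poly t c h1 h2 hc3
end

section
/- Let θ = 17/(3·2^(1/3)) − 3·2^(1/3) and let β be a real number with 0 < β ≤ 1/(θ·(9θ − 6)). Then for every γ in [0, 1], the inequality (β·θ + γ/3)/√(β + γ) ≤ (β·θ + 1/3)/√(β + 1) holds; in particular, the function γ ↦ (β·θ + γ/3)/√(β + γ) on [0, 1] attains its maximum at one of the endpoints γ = 0 or γ = 1, and √β·θ ≤ (β·θ + 1/3)/√(β + 1). -/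
private lemma gamma_aux (θ β γ : ℝ) (hθ : 2/3 < θ) (hβ₀ : 0 < β)
    (hβ : β * (θ * (9*θ - 6)) ≤ 1) (hγ0 : 0 ≤ γ) (hγ1 : γ ≤ 1) :
    (β * θ + γ / 3) / Real.sqrt (β + γ) ≤ (β * θ + 1 / 3) / Real.sqrt (β + 1) := by
  have hs : 0 < Real.sqrt (β + γ) := Real.sqrt_pos.2 (by linarith)
  have ht : 0 < Real.sqrt (β + 1) := Real.sqrt_pos.2 (by linarith)
  have hs2 : (Real.sqrt (β + γ)) ^ 2 = β + γ := Real.sq_sqrt (by linarith)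
  have ht2 : (Real.sqrt (β + 1)) ^ 2 = β + 1 := Real.sq_sqrt (by linarith)
  rw [div_le_div_iff₀ hs ht]
  have hnum : 0 ≤ β * θ + γ / 3 := by nlinarith
  have hnum1 : 0 ≤ β * θ + 1 / 3 := by nlinarith
  have hlhs : 0 ≤ (β * θ + γ / 3) * Real.sqrt (β + 1) := mul_nonneg hnum ht.le
  have hrhs : 0 ≤ (β * θ + 1 / 3) * Real.sqrt (β + γ) := mul_nonneg hnum1 hs.le
  have h1 : 0 ≤ (1 - γ) * (β * (1 - 9 * (β * θ * (θ - 2/3)))) := by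
    apply mul_nonneg (by linarith)
    nlinarith [mul_le_mul_of_nonneg_left hβ hβ₀.le]
  have h2 : 0 ≤ γ * (1 - γ) * (β + 1) := by
    apply mul_nonneg (mul_nonneg hγ0 (by linarith)) (by linarith)
  have hkey : ((β * θ + γ / 3) * Real.sqrt (β + 1)) ^ 2 ≤
      ((β * θ + 1 / 3) * Real.sqrt (β + γ)) ^ 2 := by
    rw [mul_pow, mul_pow, hs2, ht2]
    nlinarith [h1, h2]
  calc (β * θ + γ / 3) * Real.sqrt (β + 1)
      = Real.sqrt (((β * θ + γ / 3) * Real.sqrt (β + 1)) ^ 2) := (Real.sqrt_sq hlhs).symm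
    _ ≤ Real.sqrt (((β * θ + 1 / 3) * Real.sqrt (β + γ)) ^ 2) := Real.sqrt_le_sqrt hkey
    _ = (β * θ + 1 / 3) * Real.sqrt (β + γ) := Real.sqrt_sq hrhs


private lemma gamma_aux2 (θ β : ℝ) (hθ : 2/3 < θ) (hβ₀ : 0 < β)
    (hβ₁ : β ≤ 1 / (θ * (9 * θ - 6))) :
    (∀ γ ∈ Set.Icc (0 : ℝ) 1,
        (β * θ + γ / 3) / Real.sqrt (β + γ) ≤ (β * θ + 1 / 3) / Real.sqrt (β + 1)) ∧
      (∀ γ ∈ Set.Icc (0 : ℝ) 1,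
        (β * θ + γ / 3) / Real.sqrt (β + γ) ≤
          max ((β * θ + 0 / 3) / Real.sqrt (β + 0)) ((β * θ + 1 / 3) / Real.sqrt (β + 1))) ∧
      Real.sqrt β * θ ≤ (β * θ + 1 / 3) / Real.sqrt (β + 1) := by
  have hpos : 0 < θ * (9 * θ - 6) := mul_pos (by linarith) (by linarith)
  have hβ : β * (θ * (9 * θ - 6)) ≤ 1 := (le_div_iff₀ hpos).mp hβ₁
  have main : ∀ γ ∈ Set.Icc (0:ℝ) 1,
      (β * θ + γ / 3) / Real.sqrt (β + γ) ≤ (β * θ + 1 / 3) / Real.sqrt (β + 1) :=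
    fun γ hγ => gamma_aux θ β γ hθ hβ₀ hβ hγ.1 hγ.2
  refine ⟨main, fun γ hγ => (main γ hγ).trans (le_max_right _ _), ?_⟩
  have h0 := main 0 ⟨le_rfl, zero_le_one⟩
  have e : (β * θ + 0 / 3) / Real.sqrt (β + 0) = Real.sqrt β * θ := by
    rw [zero_div, add_zero, add_zero, mul_comm β θ, mul_div_assoc, Real.div_sqrt, mul_comm]
  rwa [e] at h0

/-- Let `θ = 17/(3·2^(1/3)) − 3·2^(1/3)` and `0 < β ≤ 1/(θ(9θ − 6))`. Then for every
`γ ∈ [0, 1]`, `(βθ + γ/3)/√(β + γ) ≤ (βθ + 1/3)/√(β + 1)`; in particular the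
function attains its maximum on `[0, 1]` at one of the endpoints, and
`√β·θ ≤ (βθ + 1/3)/√(β + 1)`. -/
theorem gamma_endpoint_max (β : ℝ)
    (hβ₀ : 0 < β)
    (hβ₁ : β ≤ 1 / ((17 / (3 * (2 : ℝ) ^ ((1 : ℝ) / 3)) - 3 * (2 : ℝ) ^ ((1 : ℝ) / 3)) *
      (9 * (17 / (3 * (2 : ℝ) ^ ((1 : ℝ) / 3)) - 3 * (2 : ℝ) ^ ((1 : ℝ) / 3)) - 6))) :
    (∀ γ ∈ Set.Icc (0 : ℝ) 1,
        (β * (17 / (3 * (2 : ℝ) ^ ((1 : ℝ) / 3)) - 3 * (2 : ℝ) ^ ((1 : ℝ) / 3)) + γ / 3) /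
            Real.sqrt (β + γ) ≤
          (β * (17 / (3 * (2 : ℝ) ^ ((1 : ℝ) / 3)) - 3 * (2 : ℝ) ^ ((1 : ℝ) / 3)) + 1 / 3) /
            Real.sqrt (β + 1)) ∧
      (∀ γ ∈ Set.Icc (0 : ℝ) 1,
        (β * (17 / (3 * (2 : ℝ) ^ ((1 : ℝ) / 3)) - 3 * (2 : ℝ) ^ ((1 : ℝ) / 3)) + γ / 3) /
            Real.sqrt (β + γ) ≤
          max
            ((β * (17 / (3 * (2 : ℝ) ^ ((1 : ℝ) / 3)) - 3 * (2 : ℝ) ^ ((1 : ℝ) / 3)) + 0 / 3) /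
              Real.sqrt (β + 0))
            ((β * (17 / (3 * (2 : ℝ) ^ ((1 : ℝ) / 3)) - 3 * (2 : ℝ) ^ ((1 : ℝ) / 3)) + 1 / 3) /
              Real.sqrt (β + 1))) ∧
      Real.sqrt β * (17 / (3 * (2 : ℝ) ^ ((1 : ℝ) / 3)) - 3 * (2 : ℝ) ^ ((1 : ℝ) / 3)) ≤
        (β * (17 / (3 * (2 : ℝ) ^ ((1 : ℝ) / 3)) - 3 * (2 : ℝ) ^ ((1 : ℝ) / 3)) + 1 / 3) /
          Real.sqrt (β + 1) := by
  set c : ℝ := (2 : ℝ) ^ ((1 : ℝ) / 3) with hc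
  have hc0 : 0 < c := Real.rpow_pos_of_pos (by norm_num) _
  have hc3 : c ^ 3 = 2 := by
    rw [hc, ← Real.rpow_natCast ((2:ℝ) ^ ((1:ℝ)/3)) 3, ← Real.rpow_mul (by norm_num)]
    norm_num
  clear hc
  clear_value c
  have hcu : c < 1.26 := by
    by_contra h
    push_neg at h
    have : (1.26 : ℝ) ^ 3 ≤ c ^ 3 := pow_le_pow_left₀ (by norm_num) h 3
    rw [hc3] at this; norm_num at this
  have hcl : (1.25 : ℝ) < c := by
    by_contra h
    push_neg at h
    have : c ^ 3 ≤ (1.25 : ℝ) ^ 3 := pow_le_pow_left₀ hc0.le h 3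
    rw [hc3] at this; norm_num at this
  have hθ : 2/3 < 17 / (3 * c) - 3 * c := by
    rw [lt_sub_iff_add_lt, lt_div_iff₀ (by positivity : (0:ℝ) < 3 * c)]
    nlinarith
  exact gamma_aux2 _ β hθ hβ₀ hβ₁
end

section
/- Let θ = 17/(3·2^(1/3)) − 3·2^(1/3). The function g(β) = (β·θ + 1/3)/√(β + 1) is nondecreasing on [0, ∞), and for β_2 = 1/(2^(2/3)·3^(1/3)) one has g(β) ≤ g(β_2) < 0.53968 for all β in [0, β_2]. -/
lemma g_mono (θ : ℝ) (hθ : 1/6 < θ) :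
    MonotoneOn (fun β : ℝ => (β * θ + 1 / 3) / Real.sqrt (β + 1)) (Set.Ici 0) := by
  intro a ha b hb hab
  simp only [Set.mem_Ici] at ha hb
  have hspos : 0 < Real.sqrt (a + 1) := Real.sqrt_pos.mpr (by linarith)
  have htpos : 0 < Real.sqrt (b + 1) := Real.sqrt_pos.mpr (by linarith)
  have hs : Real.sqrt (a + 1) ^ 2 = a + 1 := Real.sq_sqrt (by linarith)
  have ht : Real.sqrt (b + 1) ^ 2 = b + 1 := Real.sq_sqrt (by linarith)
  set s := Real.sqrt (a + 1)
  set t := Real.sqrt (b + 1)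
  simp only
  rw [div_le_div_iff₀ hspos htpos]
  have hX0 : 0 ≤ (a * θ + 1 / 3) * t :=
    mul_nonneg (by nlinarith) htpos.le
  have hY0 : 0 ≤ (b * θ + 1 / 3) * s :=
    mul_nonneg (by nlinarith) hspos.le
  have hsq : ((a * θ + 1 / 3) * t) ^ 2 ≤ ((b * θ + 1 / 3) * s) ^ 2 := by
    have h1 : ((a * θ + 1 / 3) * t) ^ 2 = (a * θ + 1 / 3) ^ 2 * (b + 1) := by
      rw [mul_pow, ht]
    have h2 : ((b * θ + 1 / 3) * s) ^ 2 = (b * θ + 1 / 3) ^ 2 * (a + 1) := by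
      rw [mul_pow, hs]
    rw [h1, h2]
    nlinarith [sq_nonneg θ, mul_nonneg ha hb,
      mul_nonneg (sub_nonneg.2 hab) (mul_nonneg (mul_nonneg ha hb) (sq_nonneg θ)),
      mul_nonneg (sub_nonneg.2 hab) (mul_nonneg ha (sq_nonneg θ)),
      mul_nonneg (sub_nonneg.2 hab) (mul_nonneg hb (sq_nonneg θ))]
  nlinarith [hsq, hX0, hY0]

lemma g_num (x y : ℝ) (hxpos : 0 < x) (hypos : 0 < y) (hx3 : x ^ 3 = 2)
    (hxlo : 1.2599210498 < x) (hxhi : x < 1.2599210499)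
    (hylo : 1.4422495703 < y) (hyhi : y < 1.4422495704) :
    ((1 / (x ^ 2 * y)) * (17 / (3 * x) - 3 * x) + 1 / 3) / Real.sqrt (1 / (x ^ 2 * y) + 1)
      < 0.53968 := by
  have hx0 : x ≠ 0 := ne_of_gt hxpos
  have hy0 : y ≠ 0 := ne_of_gt hypos
  have hkey : (1 / (x ^ 2 * y)) * (17 / (3 * x) - 3 * x) + 1 / 3
      = (17 - 9 * x ^ 2 + 2 * y) / (6 * y) := by
    field_simp
    linear_combination (27 * x ^ 2 - 51) * hx3
  rw [hkey]
  have hn : (17 - 9 * x ^ 2 + 2 * y) / (6 * y) < 0.64689332 := by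
    rw [div_lt_iff₀ (by positivity)]
    nlinarith
  have hnpos : (0:ℝ) < (17 - 9 * x ^ 2 + 2 * y) / (6 * y) := by
    apply div_pos _ (by positivity)
    nlinarith
  have hd : (1.19866185 : ℝ) ≤ Real.sqrt (1 / (x ^ 2 * y) + 1) := by
    rw [show (1.19866185 : ℝ) = Real.sqrt (1.19866185 ^ 2) by
      rw [Real.sqrt_sq (by norm_num)]]
    apply Real.sqrt_le_sqrt
    have h1 : (0.4367902306454225 : ℝ) ≤ 1 / (x ^ 2 * y) := by
      rw [le_div_iff₀ (by positivity)]
      nlinarith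
    nlinarith
  calc (17 - 9 * x ^ 2 + 2 * y) / (6 * y) / Real.sqrt (1 / (x ^ 2 * y) + 1)
      ≤ (17 - 9 * x ^ 2 + 2 * y) / (6 * y) / 1.19866185 := by gcongr
    _ < 0.64689332 / 1.19866185 := by gcongr
    _ < 0.53968 := by norm_num

/-- With `θ = 17/(3·2^(1/3)) − 3·2^(1/3)`, the function
`g(β) = (βθ + 1/3)/√(β + 1)` is nondecreasing on `[0, ∞)`, and for
`β₂ = 1/(2^(2/3)·3^(1/3))`, `g(β) ≤ g(β₂) < 0.53968` for all `β ∈ [0, β₂]`. -/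
theorem g_monotone_and_bound :
    MonotoneOn
        (fun β : ℝ =>
          (β * (17 / (3 * (2 : ℝ) ^ ((1 : ℝ) / 3)) - 3 * (2 : ℝ) ^ ((1 : ℝ) / 3)) + 1 / 3) /
            Real.sqrt (β + 1))
        (Set.Ici 0) ∧
      (∀ β ∈ Set.Icc (0 : ℝ) (1 / ((2 : ℝ) ^ ((2 : ℝ) / 3) * (3 : ℝ) ^ ((1 : ℝ) / 3))),
        (β * (17 / (3 * (2 : ℝ) ^ ((1 : ℝ) / 3)) - 3 * (2 : ℝ) ^ ((1 : ℝ) / 3)) + 1 / 3) /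
            Real.sqrt (β + 1) ≤
          ((1 / ((2 : ℝ) ^ ((2 : ℝ) / 3) * (3 : ℝ) ^ ((1 : ℝ) / 3))) *
              (17 / (3 * (2 : ℝ) ^ ((1 : ℝ) / 3)) - 3 * (2 : ℝ) ^ ((1 : ℝ) / 3)) + 1 / 3) /
            Real.sqrt (1 / ((2 : ℝ) ^ ((2 : ℝ) / 3) * (3 : ℝ) ^ ((1 : ℝ) / 3)) + 1)) ∧
      ((1 / ((2 : ℝ) ^ ((2 : ℝ) / 3) * (3 : ℝ) ^ ((1 : ℝ) / 3))) *
          (17 / (3 * (2 : ℝ) ^ ((1 : ℝ) / 3)) - 3 * (2 : ℝ) ^ ((1 : ℝ) / 3)) + 1 / 3) /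
        Real.sqrt (1 / ((2 : ℝ) ^ ((2 : ℝ) / 3) * (3 : ℝ) ^ ((1 : ℝ) / 3)) + 1) < 0.53968 := by
  have h23 : (2:ℝ) ^ ((2:ℝ)/3) = ((2:ℝ) ^ ((1:ℝ)/3)) ^ 2 := by
    rw [← Real.rpow_natCast ((2:ℝ) ^ ((1:ℝ)/3)) 2,
      ← Real.rpow_mul (by norm_num : (0:ℝ) ≤ 2)]
    norm_num
  rw [h23]
  set x : ℝ := (2:ℝ) ^ ((1:ℝ)/3) with hxdef
  set y : ℝ := (3:ℝ) ^ ((1:ℝ)/3) with hydef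
  have hxpos : 0 < x := Real.rpow_pos_of_pos (by norm_num) _
  have hypos : 0 < y := Real.rpow_pos_of_pos (by norm_num) _
  have hx3 : x ^ 3 = 2 := by
    rw [hxdef, ← Real.rpow_natCast ((2:ℝ) ^ ((1:ℝ)/3)) 3,
      ← Real.rpow_mul (by norm_num : (0:ℝ) ≤ 2)]
    norm_num
  have hy3 : y ^ 3 = 3 := by
    rw [hydef, ← Real.rpow_natCast ((3:ℝ) ^ ((1:ℝ)/3)) 3,
      ← Real.rpow_mul (by norm_num : (0:ℝ) ≤ 3)]
    norm_num
  have hxlo : (1.2599210498:ℝ) < x := by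
    nlinarith [hx3, hxpos, sq_nonneg (x - 1.2599210498), sq_nonneg (x + 1.2599210498)]
  have hxhi : x < 1.2599210499 := by
    nlinarith [hx3, hxpos, sq_nonneg (x - 1.2599210499), sq_nonneg (x + 1.2599210499)]
  have hylo : (1.4422495703:ℝ) < y := by
    nlinarith [hy3, hypos, sq_nonneg (y - 1.4422495703), sq_nonneg (y + 1.4422495703)]
  have hyhi : y < 1.4422495704 := by
    nlinarith [hy3, hypos, sq_nonneg (y - 1.4422495704), sq_nonneg (y + 1.4422495704)]
  have hθx : (17 / (3 * x) - 3 * x) * (3 * x) = 17 - 9 * x ^ 2 := by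
    field_simp
    ring
  have hθ : (1:ℝ)/6 < 17 / (3 * x) - 3 * x := by
    nlinarith [hθx, hxlo, hxhi, hxpos]
  have hmono := g_mono (17 / (3 * x) - 3 * x) hθ
  refine ⟨hmono, fun β hβ => ?_, g_num x y hxpos hypos hx3 hxlo hxhi hylo hyhi⟩
  have hb2 : (0:ℝ) ≤ 1 / (x ^ 2 * y) := by positivity
  exact hmono (Set.mem_Ici.mpr hβ.1) (Set.mem_Ici.mpr hb2) hβ.2
end

section
/- The function ρ defined on real numbers m ≥ 2 by ρ(m) = (1 − 1/m)^m + (1 − 1/m)^(m−1) is non-increasing on [2, ∞); consequently ρ(m) ≤ ρ(2) = 3/4 for all real m ≥ 2. -/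
open Set Real

/-- Key inequality: for `0 < t ≤ 1`, `log t ≤ 2(t-1)/(t+1)`. -/
lemma key_log {t : ℝ} (ht0 : 0 < t) (ht1 : t ≤ 1) :
    Real.log t ≤ 2 * (t - 1) / (t + 1) := by
  have hder : ∀ x ∈ interior (Set.Ioi (0:ℝ)),
      HasDerivAt (fun t : ℝ => 2 * (t - 1) / (t + 1) - Real.log t)
        ((2 * (x + 1) - 2 * (x - 1) * 1) / (x + 1) ^ 2 - x⁻¹) x := by
    intro x hx
    rw [interior_Ioi, Set.mem_Ioi] at hx
    have hx1 : (0:ℝ) < x + 1 := by linarith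
    have h1 : HasDerivAt (fun t : ℝ => 2 * (t - 1)) 2 x := by
      simpa using ((hasDerivAt_id x).sub_const 1).const_mul 2
    have h2 : HasDerivAt (fun t : ℝ => t + 1) 1 x := (hasDerivAt_id x).add_const 1
    exact (h1.div h2 (ne_of_gt hx1)).sub (Real.hasDerivAt_log (ne_of_gt hx))
  have hA : AntitoneOn (fun t : ℝ => 2 * (t - 1) / (t + 1) - Real.log t) (Set.Ioi 0) := by
    apply antitoneOn_of_deriv_nonpos (convex_Ioi 0)
    · apply ContinuousOn.sub
      · exact (continuousOn_const.mul (continuousOn_id.sub continuousOn_const)).div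
          (continuousOn_id.add continuousOn_const)
          (fun x hx => by
            have := Set.mem_Ioi.mp hx
            intro h; linarith)
      · exact Real.continuousOn_log.mono (fun x hx => ne_of_gt hx)
    · exact fun x hx => (hder x hx).differentiableAt.differentiableWithinAt
    · intro x hx
      rw [(hder x hx).deriv]
      rw [interior_Ioi, Set.mem_Ioi] at hx
      have hx1 : (0:ℝ) < x + 1 := by linarith
      have hnum : (2 * (x + 1) - 2 * (x - 1) * 1) / (x + 1) ^ 2 = 4 / (x + 1) ^ 2 := by
        ring_nf
      rw [hnum]
      have : 4 / (x + 1) ^ 2 ≤ x⁻¹ := by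
        rw [div_le_iff₀ (by positivity), inv_mul_eq_div, le_div_iff₀ hx]
        nlinarith [sq_nonneg (x - 1)]
      linarith
  have := hA (Set.mem_Ioi.mpr ht0) (Set.mem_Ioi.mpr one_pos) ht1
  simp only [Real.log_one] at this
  linarith

/-- The function `ρ(m) = (1 − 1/m)^m + (1 − 1/m)^(m−1)` (real powers) is
non-increasing on `[2, ∞)`; consequently `ρ(m) ≤ ρ(2) = 3/4` for all real `m ≥ 2`. -/
theorem rho_antitone_and_bound :
    AntitoneOn (fun m : ℝ => (1 - 1 / m) ^ m + (1 - 1 / m) ^ (m - 1)) (Set.Ici 2) ∧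
      (∀ m : ℝ, 2 ≤ m → (1 - 1 / m) ^ m + (1 - 1 / m) ^ (m - 1) ≤ 3 / 4) ∧
      (1 - 1 / (2 : ℝ)) ^ (2 : ℝ) + (1 - 1 / (2 : ℝ)) ^ ((2 : ℝ) - 1) = 3 / 4 := by
  have hval : (1 - 1 / (2 : ℝ)) ^ (2 : ℝ) + (1 - 1 / (2 : ℝ)) ^ ((2 : ℝ) - 1) = 3 / 4 := by
    rw [show ((2:ℝ) - 1) = 1 by norm_num, Real.rpow_one,
      show (2:ℝ) = ((2:ℕ):ℝ) by norm_num, Real.rpow_natCast]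
    norm_num
  have hder : ∀ x ∈ interior (Set.Ici (2:ℝ)),
      HasDerivAt (fun m : ℝ => (1 - 1 / m) ^ m + (1 - 1 / m) ^ (m - 1))
        (1 / x ^ 2 * x * (1 - 1/x) ^ (x - 1) + 1 * (1 - 1/x) ^ x * Real.log (1 - 1/x) +
          (1 / x ^ 2 * (x - 1) * (1 - 1/x) ^ (x - 1 - 1) +
            1 * (1 - 1/x) ^ (x - 1) * Real.log (1 - 1/x))) x := by
    intro x hx
    rw [interior_Ici, Set.mem_Ioi] at hx
    have hx0 : (0:ℝ) < x := by linarith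
    have hb0 : (0:ℝ) < 1 - 1/x := by
      have : 1/x < 1 := by rw [div_lt_one hx0]; linarith
      linarith
    have hbase : HasDerivAt (fun m : ℝ => 1 - 1 / m) (1 / x ^ 2) x := by
      have h := (hasDerivAt_inv (ne_of_gt hx0)).const_sub 1
      simpa [one_div] using h
    exact (hbase.rpow (hasDerivAt_id x) hb0).add
      (hbase.rpow ((hasDerivAt_id x).sub_const 1) hb0)
  have hanti : AntitoneOn (fun m : ℝ => (1 - 1 / m) ^ m + (1 - 1 / m) ^ (m - 1)) (Set.Ici 2) := by
    apply antitoneOn_of_deriv_nonpos (convex_Ici 2)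
    · -- continuity
      have hbase : ContinuousOn (fun m : ℝ => 1 - 1 / m) (Set.Ici 2) :=
        continuousOn_const.sub (continuousOn_const.div continuousOn_id
          (fun x hx => by
            have := Set.mem_Ici.mp hx
            intro h; linarith))
      have hbne : ∀ x ∈ Set.Ici (2:ℝ), (1 - 1/x) ≠ 0 := by
        intro x hx
        have hx2 := Set.mem_Ici.mp hx
        have hx0 : (0:ℝ) < x := by linarith
        have : 1/x < 1 := by rw [div_lt_one hx0]; linarith
        intro h; rw [sub_eq_zero] at h; rw [← h] at this; norm_num at this
      apply ContinuousOn.add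
      · exact hbase.rpow continuousOn_id (fun x hx => Or.inl (hbne x hx))
      · exact hbase.rpow (continuousOn_id.sub continuousOn_const)
          (fun x hx => Or.inl (hbne x hx))
    · exact fun x hx => (hder x hx).differentiableAt.differentiableWithinAt
    · intro x hx
      rw [(hder x hx).deriv]
      rw [interior_Ici, Set.mem_Ioi] at hx
      have hx0 : (0:ℝ) < x := by linarith
      set b : ℝ := 1 - 1 / x with hb_def
      have hb_eq : b = (x - 1) / x := by rw [hb_def]; field_simp
      have hb0 : 0 < b := by rw [hb_eq]; exact div_pos (by linarith) hx0
      have hb1 : b ≤ 1 := by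
        rw [hb_def]
        have : 0 < 1 / x := by positivity
        linarith
      set P : ℝ := b ^ (x - 1) with hP_def
      have hP0 : 0 < P := Real.rpow_pos_of_pos hb0 _
      have hxne : x ≠ 0 := ne_of_gt hx0
      have hx1ne : x - 1 ≠ 0 := by intro h; rw [sub_eq_zero] at h; linarith
      have hPx : b ^ x = P * b := by
        rw [hP_def, ← Real.rpow_add_one hb0.ne']
        norm_num
      have hPm : b ^ (x - 1 - 1) = P / b := by
        rw [hP_def, Real.rpow_sub hb0, Real.rpow_one]
      rw [hPx, hPm]
      set L : ℝ := Real.log b with hL_def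
      have hkey : L ≤ 2 * (b - 1) / (b + 1) := key_log hb0 hb1
      have hb1' : (0:ℝ) < b + 1 := by linarith
      have hkey' : (b + 1) * L ≤ 2 * (b - 1) := by
        have h := (le_div_iff₀ hb1').mp hkey
        nlinarith
      have hbm1 : b - 1 = -(1 / x) := by rw [hb_def]; ring
      clear_value L P b
      have h3 : 1 / x ^ 2 * (x - 1) * (P / b) = P / x := by
        rw [hb_eq]
        field_simp
      have h1 : 1 / x ^ 2 * x * P = P / x := by
        field_simp
      calc 1 / x ^ 2 * x * P + 1 * (P * b) * L + (1 / x ^ 2 * (x - 1) * (P / b) + 1 * P * L)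
          = P / x + P * (b * L + L) + P / x := by rw [h1, h3]; ring
        _ = 2 * (P / x) + P * ((b + 1) * L) := by ring
        _ ≤ 2 * (P / x) + P * (2 * (b - 1)) :=
            add_le_add_right (mul_le_mul_of_nonneg_left hkey' hP0.le) _
        _ = 2 * (P / x) + P * (2 * (-(1 / x))) := by rw [hbm1]
        _ = 0 := by ring
  refine ⟨hanti, fun m hm => ?_, hval⟩
  have := hanti (Set.self_mem_Ici) (Set.mem_Ici.mpr hm) hm
  calc (1 - 1 / m) ^ m + (1 - 1 / m) ^ (m - 1)
      ≤ (1 - 1 / (2:ℝ)) ^ (2:ℝ) + (1 - 1 / (2:ℝ)) ^ ((2:ℝ) - 1) := this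
    _ = 3 / 4 := hval
end

section
/- The constant 1/4 in the lower bound is tight: for m = 2 and every real p with 1/2 < p ≤ 1, the probability that a B(2, p)-distributed random variable X satisfies X ≥ 2p equals p², and hence the infimum over all pairs (m, p) with m a positive integer and 1/m < p ≤ 1 of the probability P[X ≥ m·p] for X distributed as B(m, p) equals 1/4, and this infimum is not attained. -/
open Finset

noncomputable def tl (n k : ℕ) (p : ℝ) : ℝ :=
  ∑ j ∈ Finset.Icc k n, (n.choose j : ℝ) * p ^ j * (1 - p) ^ (n - j)

lemma tl_hasDerivAt (n k : ℕ) (hkn : k ≤ n) (t : ℝ) :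
    HasDerivAt (tl n k)
      ((k : ℝ) * (n.choose k : ℝ) * (t ^ (k - 1) * (1 - t) ^ (n - k))) t := by
  classical
  set A : ℕ → ℝ := fun j => (j : ℝ) * (n.choose j : ℝ) * (t ^ (j - 1) * (1 - t) ^ (n - j))
    with hA
  have key : HasDerivAt (tl n k) (∑ j ∈ Finset.Icc k n, (A j - A (j + 1))) t := by
    apply HasDerivAt.fun_sum
    intro j hj
    rw [Finset.mem_Icc] at hj
    have h1 : HasDerivAt (fun p : ℝ => 1 - p) (-1 : ℝ) t := by
      simpa using (hasDerivAt_id t).const_sub (1 : ℝ)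
    have h2 : HasDerivAt (fun p : ℝ => (1 - p) ^ (n - j))
        ((((n - j : ℕ) : ℝ) * (1 - t) ^ (n - j - 1)) * (-1)) t :=
      (hasDerivAt_pow (n - j) (1 - t)).comp t h1
    have h3 : HasDerivAt (fun p : ℝ => (n.choose j : ℝ) * p ^ j)
        ((n.choose j : ℝ) * ((j : ℝ) * t ^ (j - 1))) t :=
      (hasDerivAt_pow j t).const_mul _
    have h4 := h3.mul h2
    convert h4 using 1
    · rfl
    · rfl
    have hAj1 : A (j + 1)
        = (n.choose j : ℝ) * ((n - j : ℕ) : ℝ) * (t ^ j * (1 - t) ^ (n - j - 1)) := by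
      have hnat : (j + 1) * n.choose (j + 1) = n.choose j * (n - j) := by
        rw [mul_comm, Nat.choose_succ_right_eq]
      simp only [hA, Nat.add_sub_cancel, ← Nat.sub_sub]
      rw [← Nat.cast_mul, hnat, Nat.cast_mul]
    rw [hAj1]
    simp only [hA]
    ring
  have tel : ∑ j ∈ Finset.Icc k n, (A j - A (j + 1)) = A k - A (n + 1) := by
    rw [← Finset.Ico_add_one_right_eq_Icc, Finset.sum_Ico_eq_sum_range]
    simp only [add_assoc]
    rw [Finset.sum_range_sub' (fun i => A (k + i))]
    congr 2
    omega
  have hAn1 : A (n + 1) = 0 := by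
    simp [hA, Nat.choose_eq_zero_of_lt (Nat.lt_succ_self n)]
  have : ∑ j ∈ Finset.Icc k n, (A j - A (j + 1)) = A k := by rw [tel, hAn1, sub_zero]
  rw [this] at key
  simpa only [hA, mul_assoc] using key

lemma tl_diff (n k : ℕ) (hkn : k ≤ n) {a b : ℝ} (hab : a < b) :
    ∃ ξ, a < ξ ∧ ξ < b ∧
      tl n k b - tl n k a
        = (k : ℝ) * (n.choose k : ℝ) * (ξ ^ (k - 1) * (1 - ξ) ^ (n - k)) * (b - a) := by
  obtain ⟨c, hc, hceq⟩ := exists_hasDerivAt_eq_slope (tl n k)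
    (fun t => (k : ℝ) * (n.choose k : ℝ) * (t ^ (k - 1) * (1 - t) ^ (n - k))) hab
    (HasDerivAt.continuousOn fun x _ => tl_hasDerivAt n k hkn x)
    (fun x _ => tl_hasDerivAt n k hkn x)
  refine ⟨c, hc.1, hc.2, ?_⟩
  rw [hceq, div_mul_cancel₀ _ (by linarith : b - a ≠ 0)]

lemma tl_strict_mono (n k : ℕ) (hk : 1 ≤ k) (hkn : k ≤ n) {a b : ℝ}
    (ha : 0 ≤ a) (hab : a < b) (hb : b ≤ 1) : tl n k a < tl n k b := by
  obtain ⟨ξ, h1, h2, heq⟩ := tl_diff n k hkn hab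
  have hξ0 : 0 < ξ := lt_of_le_of_lt ha h1
  have hξ1 : ξ < 1 := lt_of_lt_of_le h2 hb
  have : 0 < tl n k b - tl n k a := by
    rw [heq]
    have hch : 0 < (n.choose k : ℝ) := by
      exact_mod_cast Nat.choose_pos hkn
    have hk0 : (0 : ℝ) < (k : ℝ) := by exact_mod_cast hk
    exact mul_pos (mul_pos (mul_pos hk0 hch)
      (mul_pos (pow_pos hξ0 _) (pow_pos (by linarith) _))) (by linarith)
  linarith

lemma tl_pascal (c e : ℕ) (t : ℝ) :
    tl (c + e + 2) (c + 1) t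
      = tl (c + e + 1) (c + 1) t
        + ((c + e + 1).choose c : ℝ) * t ^ (c + 1) * (1 - t) ^ (e + 1) := by
  set n := c + e + 1 with hn
  have h1 : Finset.Icc (c + 1) (c + e + 2) =
      Finset.map (addRightEmbedding 1) (Finset.Icc c n) := by
    rw [Finset.map_add_right_Icc]
  have step1 : tl (c + e + 2) (c + 1) t
      = t * tl n c t + (1 - t) * tl n (c + 1) t := by
    rw [tl, h1, Finset.sum_map]
    have hterm : ∀ i ∈ Finset.Icc c n,
        ((c + e + 2).choose (addRightEmbedding 1 i) : ℝ) * t ^ (addRightEmbedding 1 i)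
          * (1 - t) ^ (c + e + 2 - addRightEmbedding 1 i)
        = t * ((n.choose i : ℝ) * t ^ i * (1 - t) ^ (n - i))
          + (1 - t) * ((n.choose (i + 1) : ℝ) * t ^ (i + 1) * (1 - t) ^ (n - (i + 1))) := by
      intro i hi
      rw [Finset.mem_Icc] at hi
      have hemb : addRightEmbedding 1 i = i + 1 := rfl
      rw [hemb]
      have hch : ((c + e + 2).choose (i + 1) : ℝ)
          = (n.choose i : ℝ) + (n.choose (i + 1) : ℝ) := by
        have : c + e + 2 = n + 1 := rfl
        rw [this, Nat.choose_succ_succ]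
        push_cast; ring
      have hexp : c + e + 2 - (i + 1) = n - i := by omega
      rw [hch, hexp]
      rcases Nat.lt_or_ge i n with hin | hin
      · have h3 : n - i = (n - (i + 1)) + 1 := by omega
        rw [h3, pow_succ, pow_succ]
        ring
      · have h5 : n - i = 0 := by omega
        have h6 : n.choose (i + 1) = 0 := Nat.choose_eq_zero_of_lt (by omega)
        rw [h5, h6]
        push_cast
        ring
    rw [Finset.sum_congr rfl hterm, Finset.sum_add_distrib, ← Finset.mul_sum, ← Finset.mul_sum]
    have hsum2 : ∑ i ∈ Finset.Icc c n, (n.choose (i + 1) : ℝ) * t ^ (i + 1) * (1 - t) ^ (n - (i + 1))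
        = ∑ j ∈ Finset.Icc (c + 1) (n + 1), (n.choose j : ℝ) * t ^ j * (1 - t) ^ (n - j) := by
      rw [← Finset.map_add_right_Icc c n 1, Finset.sum_map]
      rfl
    rw [hsum2, Finset.sum_Icc_succ_top (by omega : c + 1 ≤ n + 1)]
    have hz : n.choose (n + 1) = 0 := Nat.choose_eq_zero_of_lt (by omega)
    rw [hz]
    rw [tl, tl]
    push_cast
    ring
  have peel : tl n c t = (n.choose c : ℝ) * t ^ c * (1 - t) ^ (n - c) + tl n (c + 1) t := by
    rw [tl, tl, ← Finset.Ico_add_one_right_eq_Icc, ← Finset.Ico_add_one_right_eq_Icc,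
      Finset.sum_eq_sum_Ico_succ_bot (by omega : c < n + 1)]
  rw [step1, peel]
  have : n - c = e + 1 := by omega
  rw [this]
  ring

lemma tl_total (n : ℕ) (p : ℝ) : tl n 0 p = 1 := by
  rw [tl, ← Finset.Ico_add_one_right_eq_Icc, Nat.Ico_zero_eq_range]
  have h := add_pow p (1 - p) n
  simp only [add_sub_cancel, one_pow] at h
  have h2 : ∑ j ∈ Finset.range (n + 1), (n.choose j : ℝ) * p ^ j * (1 - p) ^ (n - j)
      = ∑ m ∈ Finset.range (n + 1), p ^ m * (1 - p) ^ (n - m) * (n.choose m : ℝ) :=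
    Finset.sum_congr rfl fun j _ => by ring
  rw [h2, ← h]

lemma tl_symm (n k : ℕ) (hk : 1 ≤ k) (hkn : k ≤ n) (q : ℝ) :
    tl n k q = 1 - tl n (n - k + 1) (1 - q) := by
  have hsplit : tl n (n - k + 1) (1 - q) + tl n k q = tl n 0 q := by
    have hre : tl n (n - k + 1) (1 - q)
        = ∑ j ∈ Finset.Ico 0 k, (n.choose j : ℝ) * q ^ j * (1 - q) ^ (n - j) := by
      rw [tl]
      refine Finset.sum_nbij' (fun a => n - a) (fun a => n - a) ?_ ?_ ?_ ?_ ?_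
      · intro a ha
        simp only [Finset.mem_Icc, Finset.mem_Ico] at *
        omega
      · intro a ha
        simp only [Finset.mem_Icc, Finset.mem_Ico] at *
        omega
      · intro a ha
        simp only [Finset.mem_Icc, Finset.mem_Ico] at *
        omega
      · intro a ha
        simp only [Finset.mem_Icc, Finset.mem_Ico] at *
        omega
      · intro a ha
        simp only [Finset.mem_Icc] at ha
        have h1 : n.choose (n - a) = n.choose a := Nat.choose_symm (by omega)
        have h2 : n - (n - a) = a := by omega
        have h3 : (1 - (1 - q)) = q := by ring
        rw [h1, h2, h3]
        ring
    rw [hre, tl, tl, ← Finset.Ico_add_one_right_eq_Icc, ← Finset.Ico_add_one_right_eq_Icc,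
      Finset.sum_Ico_consecutive _ (by omega : 0 ≤ k) (by omega : k ≤ n + 1)]
  have := tl_total n q
  linarith

lemma ratio_step (a : ℕ) (ha : 1 ≤ a) :
    (((a : ℝ) + 1) / a) ^ a ≤ (((a : ℝ) + 2) / ((a : ℝ) + 1)) ^ (a + 1) := by
  have ha0 : (0 : ℝ) < a := by exact_mod_cast ha
  have h1 : (0 : ℝ) < (a : ℝ) + 1 := by linarith
  have hb : (-2 : ℝ) ≤ -(1 / ((a : ℝ) + 1) ^ 2) := by
    rw [neg_le, neg_neg]
    rw [div_le_iff₀ (by positivity)]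
    nlinarith
  have key := one_add_mul_le_pow hb (a + 1)
  -- key : 1 + (a+1) * (-(1/(a+1)^2)) ≤ (1 + -(1/(a+1)^2))^(a+1)
  have hsimp1 : (1 : ℝ) + (((a + 1 : ℕ) : ℝ)) * (-(1 / ((a : ℝ) + 1) ^ 2))
      = (a : ℝ) / ((a : ℝ) + 1) := by
    push_cast
    field_simp
    ring
  have hsimp2 : (1 : ℝ) + -(1 / ((a : ℝ) + 1) ^ 2)
      = ((a : ℝ) * ((a : ℝ) + 2)) / ((a : ℝ) + 1) ^ 2 := by
    field_simp
    ring
  rw [hsimp1, hsimp2] at key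
  -- key : a/(a+1) ≤ (a(a+2)/(a+1)^2)^(a+1)
  have hfactor : (((a : ℝ) + 2) / ((a : ℝ) + 1)) ^ (a + 1)
      = (((a : ℝ) + 1) / a) ^ (a + 1) * (((a : ℝ) * ((a : ℝ) + 2)) / ((a : ℝ) + 1) ^ 2) ^ (a + 1) := by
    rw [← mul_pow]
    congr 1
    field_simp
  rw [hfactor]
  have hpos : (0 : ℝ) < (((a : ℝ) + 1) / a) ^ (a + 1) := by positivity
  calc (((a : ℝ) + 1) / a) ^ a
      = (((a : ℝ) + 1) / a) ^ (a + 1) * ((a : ℝ) / ((a : ℝ) + 1)) := by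
        rw [pow_succ]
        field_simp
    _ ≤ (((a : ℝ) + 1) / a) ^ (a + 1) * (((a : ℝ) * ((a : ℝ) + 2)) / ((a : ℝ) + 1) ^ 2) ^ (a + 1) :=
        mul_le_mul_of_nonneg_left key (le_of_lt hpos)

lemma ratio_mono (a b : ℕ) (ha : 1 ≤ a) (hab : a ≤ b) :
    (((a : ℝ) + 1) / a) ^ a ≤ (((b : ℝ) + 1) / b) ^ b := by
  induction b, hab using Nat.le_induction with
  | base => exact le_refl _
  | succ n hn ih =>
      refine le_trans ih ?_
      have := ratio_step n (le_trans ha hn)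
      push_cast
      convert this using 3
      · rfl
      · push_cast; ring

lemma quasi_min (i l : ℕ) {a b x : ℝ} (ha : 0 < a) (hax : a ≤ x) (hxb : x ≤ b) (hb : b < 1) :
    min (a ^ i * (1 - a) ^ l) (b ^ i * (1 - b) ^ l) ≤ x ^ i * (1 - x) ^ l := by
  have hx0 : 0 < x := lt_of_lt_of_le ha hax
  have hx1 : x < 1 := lt_of_le_of_lt hxb hb
  have hb0 : 0 < b := lt_of_lt_of_le hx0 hxb
  have ha1 : a < 1 := lt_of_le_of_lt hax hx1
  set g : ℝ → ℝ := fun t => (i : ℝ) * Real.log t + (l : ℝ) * Real.log (1 - t) with hg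
  have hexp : ∀ t : ℝ, 0 < t → t < 1 → Real.exp (g t) = t ^ i * (1 - t) ^ l := by
    intro t ht0 ht1
    rw [hg]
    simp only
    rw [Real.exp_add, Real.exp_nat_mul, Real.exp_nat_mul, Real.exp_log ht0,
      Real.exp_log (by linarith : (0:ℝ) < 1 - t)]
  have hconc : ConcaveOn ℝ (Set.Icc a b) g := by
    have hlog : ConcaveOn ℝ (Set.Icc a b) Real.log := by
      apply (strictConcaveOn_log_Ioi.concaveOn).subset _ (convex_Icc a b)
      intro t ht
      exact lt_of_lt_of_le ha ht.1
    have hlog2 : ConcaveOn ℝ (Set.Icc a b) (fun t => Real.log (1 - t)) := by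
      refine ⟨convex_Icc a b, ?_⟩
      intro u hu v hv α β hα hβ hαβ
      have hu1 : (0:ℝ) < 1 - u := by
        simp only [Set.mem_Icc] at hu; linarith
      have hv1 : (0:ℝ) < 1 - v := by
        simp only [Set.mem_Icc] at hv; linarith
      have := (strictConcaveOn_log_Ioi.concaveOn).2 (Set.mem_Ioi.mpr hu1)
        (Set.mem_Ioi.mpr hv1) hα hβ hαβ
      simp only [smul_eq_mul] at this ⊢
      have heq : 1 - (α * u + β * v) = α * (1 - u) + β * (1 - v) := by
        linear_combination -hαβ
      rw [heq]
      exact this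
    exact ((hlog.smul (by positivity : (0:ℝ) ≤ (i : ℝ))).add
      (hlog2.smul (by positivity : (0:ℝ) ≤ (l : ℝ)))).congr (by
        intro t ht
        simp [hg, smul_eq_mul])
  have hmin := hconc.min_le_of_mem_Icc (Set.left_mem_Icc.mpr (le_trans hax hxb))
    (Set.right_mem_Icc.mpr (le_trans hax hxb)) (Set.mem_Icc.mpr ⟨hax, hxb⟩)
  rcases le_total (g a) (g b) with hab | hab
  · have h1 : g a ≤ g x := le_trans (by simp [min_eq_left hab]) hmin
    have h2 := Real.exp_le_exp.mpr h1
    rw [hexp a ha ha1, hexp x hx0 hx1] at h2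
    exact le_trans (min_le_left _ _) h2
  · have h1 : g b ≤ g x := le_trans (by simp [min_eq_right hab]) hmin
    have h2 := Real.exp_le_exp.mpr h1
    rw [hexp b hb0 hb, hexp x hx0 hx1] at h2
    exact le_trans (min_le_right _ _) h2

set_option maxHeartbeats 1000000 in
lemma step_mono (c e : ℕ) (he : 1 ≤ e) :
    tl (c + e + 2) (c + 1) (((c : ℝ) + 1) / ((c : ℝ) + (e : ℝ) + 2))
      ≤ tl (c + e + 1) (c + 1) (((c : ℝ) + 1) / ((c : ℝ) + (e : ℝ) + 1)) := by
  obtain ⟨X, hX⟩ : ∃ X : ℝ, X = (c : ℝ) + 1 := ⟨_, rfl⟩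
  obtain ⟨N, hN⟩ : ∃ N : ℝ, N = (c : ℝ) + (e : ℝ) + 1 := ⟨_, rfl⟩
  obtain ⟨E, hE⟩ : ∃ E : ℝ, E = (e : ℝ) := ⟨_, rfl⟩
  obtain ⟨p', hp'⟩ : ∃ p' : ℝ, p' = X / (N + 1) := ⟨_, rfl⟩
  obtain ⟨p, hp⟩ : ∃ p : ℝ, p = X / N := ⟨_, rfl⟩
  have hE1 : (1 : ℝ) ≤ E := by rw [hE]; exact_mod_cast he
  have hN0 : (0 : ℝ) < N := by rw [hN]; positivity
  have hX0 : (0 : ℝ) < X := by rw [hX]; positivity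
  have hN1 : (0 : ℝ) < N + 1 := by linarith
  have hNX : N = X + E := by rw [hN, hX, hE]; ring
  have hp'p : p' < p := by
    rw [hp', hp]
    exact div_lt_div_of_pos_left hX0 hN0 (by linarith)
  have hp'0 : 0 < p' := by rw [hp']; positivity
  have hp1 : p < 1 := by
    rw [hp, div_lt_one hN0]
    linarith
  have hgoal2 : ((c : ℝ) + 1) / ((c : ℝ) + (e : ℝ) + 2) = p' := by
    rw [hp', hX, hN]; ring
  have hgoal1 : ((c : ℝ) + 1) / ((c : ℝ) + (e : ℝ) + 1) = p := by
    rw [hp, hX, hN]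
  rw [hgoal1, hgoal2, tl_pascal c e p']
  -- now: tl (c+e+1) (c+1) p' + C(c+e+1,c) * p'^(c+1) * (1-p')^(e+1) ≤ tl (c+e+1) (c+1) p
  obtain ⟨ξ, hξ1, hξ2, hdiff⟩ := tl_diff (c + e + 1) (c + 1) (by omega) hp'p
  have hexp1 : (c + 1) - 1 = c := by omega
  have hexp2 : (c + e + 1) - (c + 1) = e := by omega
  rw [hexp1, hexp2] at hdiff
  have hch : (((c : ℕ) + 1 : ℕ) : ℝ) * ((c + e + 1).choose (c + 1) : ℝ)
      = (E + 1) * ((c + e + 1).choose c : ℝ) := by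
    have h := Nat.choose_succ_right_eq (c + e + 1) c
    have h2 : c + e + 1 - c = e + 1 := by omega
    rw [h2] at h
    have h3 := congrArg (fun x : ℕ => (x : ℝ)) h
    push_cast at h3 ⊢
    rw [hE]
    linarith
  rw [hch] at hdiff
  -- key inequality
  have hC0 : (0 : ℝ) < ((c + e + 1).choose c : ℝ) := by
    exact_mod_cast Nat.choose_pos (by omega : c ≤ c + e + 1)
  have h1mp' : 1 - p' = (E + 1) / (N + 1) := by
    rw [hp']
    field_simp
    rw [hNX]; ring
  have h1mp : 1 - p = E / N := by
    rw [hp]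
    field_simp
    rw [hNX]; ring
  have hpp' : p - p' = X / (N * (N + 1)) := by
    rw [hp, hp']
    field_simp
    ring
  have key : p' ^ (c + 1) * (1 - p') ^ (e + 1) ≤ (E + 1) * (ξ ^ c * (1 - ξ) ^ e) * (p - p') := by
    have hquasi := quasi_min c e hp'0 (le_of_lt hξ1) (le_of_lt hξ2) hp1
    have hfacL : p' ^ (c + 1) * (1 - p') ^ (e + 1)
        = (p' * (1 - p')) * (p' ^ c * (1 - p') ^ e) := by
      rw [pow_succ, pow_succ]; ring
    rcases le_total (p' ^ c * (1 - p') ^ e) (p ^ c * (1 - p) ^ e) with hmin | hmin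
    · -- Case A : min is at p'
      have hq : p' ^ c * (1 - p') ^ e ≤ ξ ^ c * (1 - ξ) ^ e := by
        rw [min_eq_left hmin] at hquasi; exact hquasi
      have hA : p' * (1 - p') ≤ (E + 1) * (p - p') := by
        rw [h1mp', hpp', hp']
        have hfac : (0:ℝ) < X * (E + 1) * (N + 1) := by positivity
        calc X / (N + 1) * ((E + 1) / (N + 1)) = X * (E + 1) / ((N + 1) * (N + 1)) :=
              div_mul_div_comm X (N + 1) (E + 1) (N + 1)
          _ ≤ (E + 1) * X / (N * (N + 1)) := by
              rw [div_le_div_iff₀ (by positivity) (by positivity)]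
              nlinarith [hfac]
          _ = (E + 1) * (X / (N * (N + 1))) := mul_div_assoc (E + 1) X (N * (N + 1))
      calc p' ^ (c + 1) * (1 - p') ^ (e + 1)
          = (p' * (1 - p')) * (p' ^ c * (1 - p') ^ e) := hfacL
        _ ≤ ((E + 1) * (p - p')) * (p' ^ c * (1 - p') ^ e) := by
            apply mul_le_mul_of_nonneg_right hA
            have h1p' : 0 ≤ 1 - p' := by
              rw [h1mp']; positivity
            positivity
        _ ≤ ((E + 1) * (p - p')) * (ξ ^ c * (1 - ξ) ^ e) := by
            apply mul_le_mul_of_nonneg_left hq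
            nlinarith [hp'p, hE1]
        _ = (E + 1) * (ξ ^ c * (1 - ξ) ^ e) * (p - p') := by ring
    · -- Case B : min is at p
      have hq : p ^ c * (1 - p) ^ e ≤ ξ ^ c * (1 - ξ) ^ e := by
        rw [min_eq_right hmin] at hquasi; exact hquasi
      have hE0 : (0 : ℝ) < E := by linarith
      have hcross : (E + 1) ^ e * N ^ (c + e + 1) ≤ (N + 1) ^ (c + e + 1) * E ^ e := by
        have hr := ratio_mono e (c + e + 1) he (by omega)
        have hcast : ((c + e + 1 : ℕ) : ℝ) = N := by rw [hN]; push_cast; ring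
        rw [hcast, ← hE] at hr
        rw [div_pow, div_pow, div_le_div_iff₀ (by positivity) (by positivity)] at hr
        linarith [hr]
      have hB : p' ^ (c + 1) * (1 - p') ^ (e + 1)
          ≤ (E + 1) * (p ^ c * (1 - p) ^ e) * (p - p') := by
        have hLfrac : p' ^ (c + 1) * (1 - p') ^ (e + 1)
            = X ^ (c + 1) * (E + 1) ^ (e + 1) / (N + 1) ^ (c + e + 2) := by
          rw [h1mp', hp', div_pow, div_pow, div_mul_div_comm, ← pow_add]
          congr 2
          omega
        have hRfrac : (E + 1) * (p ^ c * (1 - p) ^ e) * (p - p')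
            = (E + 1) * X ^ (c + 1) * E ^ e / (N ^ (c + e + 1) * (N + 1)) := by
          rw [h1mp, hpp', hp, div_pow, div_pow, pow_succ]
          field_simp
          ring
        rw [hLfrac, hRfrac, div_le_div_iff₀ (by positivity) (by positivity)]
        have hstep2 : c + e + 2 = (c + e + 1) + 1 := by omega
        rw [hstep2, pow_succ (N + 1) (c + e + 1), pow_succ (E + 1) e]
        calc X ^ (c + 1) * ((E + 1) ^ e * (E + 1)) * (N ^ (c + e + 1) * (N + 1))
            = (X ^ (c + 1) * (E + 1) * (N + 1)) * ((E + 1) ^ e * N ^ (c + e + 1)) := by ring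
          _ ≤ (X ^ (c + 1) * (E + 1) * (N + 1)) * ((N + 1) ^ (c + e + 1) * E ^ e) := by
              apply mul_le_mul_of_nonneg_left hcross
              positivity
          _ = (E + 1) * X ^ (c + 1) * E ^ e * ((N + 1) ^ (c + e + 1) * (N + 1)) := by ring
      calc p' ^ (c + 1) * (1 - p') ^ (e + 1)
          ≤ (E + 1) * (p ^ c * (1 - p) ^ e) * (p - p') := hB
        _ ≤ (E + 1) * (ξ ^ c * (1 - ξ) ^ e) * (p - p') := by
            apply mul_le_mul_of_nonneg_right
            · apply mul_le_mul_of_nonneg_left hq (by linarith)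
            · linarith
  -- assemble
  have hfinal : ((c + e + 1).choose c : ℝ) * p' ^ (c + 1) * (1 - p') ^ (e + 1)
      ≤ tl (c + e + 1) (c + 1) p - tl (c + e + 1) (c + 1) p' := by
    rw [hdiff]
    calc ((c + e + 1).choose c : ℝ) * p' ^ (c + 1) * (1 - p') ^ (e + 1)
        = ((c + e + 1).choose c : ℝ) * (p' ^ (c + 1) * (1 - p') ^ (e + 1)) := by ring
      _ ≤ ((c + e + 1).choose c : ℝ) * ((E + 1) * (ξ ^ c * (1 - ξ) ^ e) * (p - p')) :=
          mul_le_mul_of_nonneg_left key (le_of_lt hC0)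
      _ = (E + 1) * ((c + e + 1).choose c : ℝ) * (ξ ^ c * (1 - ξ) ^ e) * (p - p') := by ring
  linarith

lemma descend (c : ℕ) : ∀ n, c + 2 ≤ n →
    tl n (c + 1) (((c : ℝ) + 1) / (n : ℝ))
      ≤ tl (c + 2) (c + 1) (((c : ℝ) + 1) / ((c : ℝ) + 2)) := by
  intro n hn
  induction n, hn using Nat.le_induction with
  | base =>
      have h : ((c + 2 : ℕ) : ℝ) = (c : ℝ) + 2 := by push_cast; ring
      rw [h]
  | succ n hn ih =>
      obtain ⟨e, he, rfl⟩ : ∃ e, 1 ≤ e ∧ n = c + e + 1 := ⟨n - c - 1, by omega, by omega⟩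
      have h1 := step_mono c e he
      have idx : c + e + 1 + 1 = c + e + 2 := by omega
      rw [idx]
      have a1 : ((c + e + 2 : ℕ) : ℝ) = (c : ℝ) + (e : ℝ) + 2 := by push_cast; ring
      rw [a1]
      have a2 : ((c + e + 1 : ℕ) : ℝ) = (c : ℝ) + (e : ℝ) + 1 := by push_cast; ring
      rw [a2] at ih
      exact le_trans h1 ih

lemma ineq4 (s : ℕ) (hs : 1 ≤ s) :
    4 * (2 * (s : ℝ) + 1) * (s : ℝ) ^ s ≤ 3 * ((s : ℝ) + 1) ^ (s + 1) := by
  rcases le_or_gt s 25 with hs25 | hs25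
  · interval_cases s <;> norm_num
  · have hs26 : (26 : ℝ) ≤ (s : ℝ) := by exact_mod_cast hs25
    have hs0 : (0 : ℝ) < (s : ℝ) := by linarith
    have hs10 : (0 : ℝ) < (s : ℝ) + 1 := by linarith
    have h1 : Real.exp (1 / ((s : ℝ) + 1)) ≤ ((s : ℝ) + 1) / s := by
      have h := Real.add_one_le_exp (-(1 / ((s : ℝ) + 1)))
      have hpos : (0 : ℝ) < -(1 / ((s : ℝ) + 1)) + 1 := by
        rw [neg_add_eq_sub]
        have : 1 / ((s : ℝ) + 1) < 1 := by
          rw [div_lt_one hs10]; linarith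
        linarith
      have h2 : Real.exp (1 / ((s : ℝ) + 1)) ≤ 1 / (-(1 / ((s : ℝ) + 1)) + 1) := by
        have h' : -(1 / ((s : ℝ) + 1)) + 1 ≤ (Real.exp (1 / ((s : ℝ) + 1)))⁻¹ := by
          rw [← Real.exp_neg]; exact h
        rw [le_div_iff₀ hpos]
        calc Real.exp (1 / ((s : ℝ) + 1)) * (-(1 / ((s : ℝ) + 1)) + 1)
            ≤ Real.exp (1 / ((s : ℝ) + 1)) * (Real.exp (1 / ((s : ℝ) + 1)))⁻¹ :=
              mul_le_mul_of_nonneg_left h' (Real.exp_pos _).le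
          _ = 1 := mul_inv_cancel₀ (Real.exp_ne_zero _)
      calc Real.exp (1 / ((s : ℝ) + 1)) ≤ 1 / (-(1 / ((s : ℝ) + 1)) + 1) := h2
        _ = ((s : ℝ) + 1) / s := by
            rw [div_eq_div_iff hpos.ne' hs0.ne']
            field_simp
            ring
      -- done
    have h2 : Real.exp 1 ≤ (((s : ℝ) + 1) / s) ^ (s + 1) := by
      have hp := pow_le_pow_left₀ (Real.exp_pos _).le h1 (s + 1)
      have heq : Real.exp (1 / ((s : ℝ) + 1)) ^ (s + 1) = Real.exp 1 := by
        rw [← Real.exp_nat_mul]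
        congr 1
        have : ((s + 1 : ℕ) : ℝ) = (s : ℝ) + 1 := by push_cast; ring
        rw [this]
        field_simp
      rw [heq] at hp
      exact hp
    have h3 : Real.exp 1 * (s : ℝ) ^ (s + 1) ≤ ((s : ℝ) + 1) ^ (s + 1) := by
      rw [div_pow] at h2
      rw [← le_div_iff₀ (by positivity)]
      exact h2
    have h4 : (8 * (s : ℝ) + 4) * (s : ℝ) ^ s ≤ 3 * Real.exp 1 * (s : ℝ) ^ (s + 1) := by
      have he1 : (2.7182818283 : ℝ) < Real.exp 1 := Real.exp_one_gt_d9
      have hc : 8 * (s : ℝ) + 4 ≤ 3 * Real.exp 1 * (s : ℝ) := by nlinarith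
      have hss : (0 : ℝ) ≤ (s : ℝ) ^ s := by positivity
      calc (8 * (s : ℝ) + 4) * (s : ℝ) ^ s ≤ (3 * Real.exp 1 * (s : ℝ)) * (s : ℝ) ^ s :=
            mul_le_mul_of_nonneg_right hc hss
        _ = 3 * Real.exp 1 * (s : ℝ) ^ (s + 1) := by rw [pow_succ]; ring
    have h5 : 3 * Real.exp 1 * (s : ℝ) ^ (s + 1) ≤ 3 * ((s : ℝ) + 1) ^ (s + 1) := by
      nlinarith [h3]
    calc 4 * (2 * (s : ℝ) + 1) * (s : ℝ) ^ s = (8 * (s : ℝ) + 4) * (s : ℝ) ^ s := by ring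
      _ ≤ 3 * Real.exp 1 * (s : ℝ) ^ (s + 1) := h4
      _ ≤ 3 * ((s : ℝ) + 1) ^ (s + 1) := h5

lemma base_val (c : ℕ) :
    tl (c + 2) (c + 1) (((c : ℝ) + 1) / ((c : ℝ) + 2)) ≤ 3 / 4 := by
  obtain ⟨X, hX⟩ : ∃ X : ℝ, X = (c : ℝ) + 1 := ⟨_, rfl⟩
  have hX0 : (0 : ℝ) < X := by rw [hX]; positivity
  have hX1 : (0 : ℝ) < X + 1 := by linarith
  have harg : ((c : ℝ) + 1) / ((c : ℝ) + 2) = X / (X + 1) := by rw [hX]; ring_nf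
  rw [harg]
  have hval : tl (c + 2) (c + 1) (X / (X + 1)) = (X / (X + 1)) ^ (c + 1) * (2 * X + 1) / (X + 1) := by
    rw [tl]
    rw [show c + 2 = (c + 1) + 1 from rfl]
    rw [Finset.sum_Icc_succ_top (by omega : c + 1 ≤ (c + 1) + 1)]
    rw [Finset.Icc_self, Finset.sum_singleton]
    have e1 : (c + 1) + 1 - (c + 1) = 1 := by omega
    have e2 : (c + 1) + 1 - ((c + 1) + 1) = 0 := by omega
    rw [e1, e2]
    have hch1 : ((c + 1) + 1).choose (c + 1) = c + 2 := Nat.choose_succ_self_right (c + 1)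
    have hch2 : ((c + 1) + 1).choose ((c + 1) + 1) = 1 := Nat.choose_self _
    rw [hch1, hch2]
    have h1m : 1 - X / (X + 1) = 1 / (X + 1) := by field_simp; ring
    rw [h1m]
    have hc2 : ((c + 2 : ℕ) : ℝ) = X + 1 := by rw [hX]; push_cast; ring
    rw [hc2, pow_succ (X / (X + 1)) (c + 1)]
    field_simp
    ring
  rw [hval]
  -- now : (X/(X+1))^(c+1) * (2X+1)/(X+1) ≤ 3/4
  have hi := ineq4 (c + 1) (by omega)
  have hXc : ((c + 1 : ℕ) : ℝ) = X := by rw [hX]; push_cast; ring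
  rw [hXc] at hi
  -- hi : 4 * (2X+1) * X^(c+1) ≤ 3 * (X+1)^(c+2)
  rw [div_pow, div_mul_eq_mul_div, div_div, div_le_div_iff₀ (by positivity) (by positivity)]
  calc X ^ (c + 1) * (2 * X + 1) * 4 = 4 * (2 * X + 1) * X ^ (c + 1) := by ring
    _ ≤ 3 * (X + 1) ^ ((c + 1) + 1) := hi
    _ = 3 * ((X + 1) ^ (c + 1) * (X + 1)) := by rw [pow_succ]

lemma crux (m : ℕ) (p : ℝ) (hm : 0 < m) (hp1 : 1 / (m : ℝ) < p) (hp2 : p ≤ 1) :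
    1 / 4 < tl m (⌈(m : ℝ) * p⌉₊) p := by
  have hm0 : (0 : ℝ) < m := by exact_mod_cast hm
  have hmp1 : 1 < (m : ℝ) * p := by
    rw [div_lt_iff₀ hm0] at hp1
    linarith [hp1]
  have hmp0 : (0 : ℝ) ≤ (m : ℝ) * p := by linarith
  set k := ⌈(m : ℝ) * p⌉₊ with hk
  have hk2 : 2 ≤ k := by
    have h1 : 1 < k := by
      rw [hk]
      exact Nat.lt_ceil.mpr (by exact_mod_cast hmp1)
    omega
  have hkm : k ≤ m := by
    rw [hk]
    apply Nat.ceil_le.mpr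
    nlinarith
  have hq_lt : ((k : ℝ) - 1) / m < p := by
    have h := Nat.ceil_lt_add_one hmp0
    rw [← hk] at h
    rw [div_lt_iff₀ hm0]
    nlinarith
  have hq0 : 0 ≤ ((k : ℝ) - 1) / m := by
    apply div_nonneg _ hm0.le
    have : (2 : ℝ) ≤ k := by exact_mod_cast hk2
    linarith
  have hmono := tl_strict_mono m k (by omega) hkm hq0 hq_lt hp2
  have hsym := tl_symm m k (by omega) hkm (((k : ℝ) - 1) / m)
  set s := m - k + 1 with hs
  have hs1 : 1 ≤ s := by omega
  have harg : 1 - ((k : ℝ) - 1) / m = (s : ℝ) / m := by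
    have hcast : (s : ℝ) = (m : ℝ) - (k : ℝ) + 1 := by
      rw [hs]
      push_cast [Nat.cast_sub hkm]
      ring
    rw [hcast]
    field_simp
    ring
  rw [harg] at hsym
  obtain ⟨c, hc⟩ : ∃ c, s = c + 1 := ⟨s - 1, by omega⟩
  have hm_ge : c + 2 ≤ m := by omega
  have hargc : (s : ℝ) / m = ((c : ℝ) + 1) / (m : ℝ) := by
    rw [hc]; push_cast; ring
  rw [hargc, hc] at hsym
  have hdesc := descend c m hm_ge
  have hbase := base_val c
  linarith

/-- Tightness of the constant `1/4`: for `m = 2` and `1/2 < p ≤ 1`,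
`P_{X ~ B(2,p)}[X ≥ 2p] = p²`; and the infimum over all pairs `(m, p)` with
`m` a positive integer and `1/m < p ≤ 1` of `P_{X ~ B(m,p)}[X ≥ m·p]` equals
`1/4` and is not attained. -/
theorem binomial_quarter_tight :
    (∀ p : ℝ, 1 / 2 < p → p ≤ 1 →
        ∑ j ∈ Finset.Icc ⌈(2 : ℝ) * p⌉₊ 2,
          ((Nat.choose 2 j : ℝ)) * p ^ j * (1 - p) ^ (2 - j) = p ^ 2) ∧
      IsGLB
        {x : ℝ | ∃ (m : ℕ) (p : ℝ), 0 < m ∧ 1 / (m : ℝ) < p ∧ p ≤ 1 ∧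
          x = ∑ j ∈ Finset.Icc ⌈(m : ℝ) * p⌉₊ m,
            (m.choose j : ℝ) * p ^ j * (1 - p) ^ (m - j)}
        (1 / 4) ∧
      (1 / 4 : ℝ) ∉
        {x : ℝ | ∃ (m : ℕ) (p : ℝ), 0 < m ∧ 1 / (m : ℝ) < p ∧ p ≤ 1 ∧
          x = ∑ j ∈ Finset.Icc ⌈(m : ℝ) * p⌉₊ m,
            (m.choose j : ℝ) * p ^ j * (1 - p) ^ (m - j)} := by
  have part1 : ∀ p : ℝ, 1 / 2 < p → p ≤ 1 →
      ∑ j ∈ Finset.Icc ⌈(2 : ℝ) * p⌉₊ 2,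
        ((Nat.choose 2 j : ℝ)) * p ^ j * (1 - p) ^ (2 - j) = p ^ 2 := by
    intro p hp1 hp2
    have hceil : ⌈(2 : ℝ) * p⌉₊ = 2 := by
      apply le_antisymm
      · exact Nat.ceil_le.mpr (by norm_num; linarith)
      · have : 1 < ⌈(2 : ℝ) * p⌉₊ := Nat.lt_ceil.mpr (by norm_num; linarith)
        omega
    rw [hceil, Finset.Icc_self, Finset.sum_singleton]
    norm_num
  have hset : ∀ x ∈ {x : ℝ | ∃ (m : ℕ) (p : ℝ), 0 < m ∧ 1 / (m : ℝ) < p ∧ p ≤ 1 ∧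
      x = ∑ j ∈ Finset.Icc ⌈(m : ℝ) * p⌉₊ m,
        (m.choose j : ℝ) * p ^ j * (1 - p) ^ (m - j)}, 1 / 4 < x := by
    rintro x ⟨m, p, hm, hp1, hp2, rfl⟩
    exact crux m p hm hp1 hp2
  have hmem : ∀ p : ℝ, 1 / 2 < p → p ≤ 1 →
      p ^ 2 ∈ {x : ℝ | ∃ (m : ℕ) (p : ℝ), 0 < m ∧ 1 / (m : ℝ) < p ∧ p ≤ 1 ∧
        x = ∑ j ∈ Finset.Icc ⌈(m : ℝ) * p⌉₊ m,
          (m.choose j : ℝ) * p ^ j * (1 - p) ^ (m - j)} := by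
    intro p hp1 hp2
    refine ⟨2, p, by norm_num, by norm_num; linarith, hp2, ?_⟩
    simp only [Nat.cast_ofNat]
    exact (part1 p hp1 hp2).symm
  refine ⟨part1, ⟨?_, ?_⟩, ?_⟩
  · intro x hx
    exact le_of_lt (hset x hx)
  · intro b hb
    by_contra hb4
    push_neg at hb4
    set δ : ℝ := min (b - 1/4) 1 / 4 with hδ
    have hδ0 : 0 < δ := by
      rw [hδ]
      have : 0 < min (b - 1/4) 1 := lt_min (by linarith) one_pos
      linarith
    have hδ1 : δ ≤ 1/4 := by
      rw [hδ]
      have : min (b - 1/4) 1 ≤ 1 := min_le_right _ _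
      linarith
    have hδ2 : δ ≤ (b - 1/4) / 4 := by
      rw [hδ]
      have : min (b - 1/4) 1 ≤ b - 1/4 := min_le_left _ _
      linarith
    set p : ℝ := 1/2 + δ with hp
    have hp1 : 1/2 < p := by rw [hp]; linarith
    have hp2 : p ≤ 1 := by rw [hp]; linarith
    have hmem2 := hmem p hp1 hp2
    have hle := hb hmem2
    have : p ^ 2 < b := by
      rw [hp]
      nlinarith
    linarith
  · intro hmem4
    have := hset _ hmem4
    linarith
end
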